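/- arXiv:1601.03817 — 4 statements merged into one kernel-verified Lean document; each statement's English description precedes it below -/
import Mathlib

section
/- Structure of a 3-I unit: let x be a 3-I vertex point whose ties are exactly the three pairs of {i,j,k}, and write code(x)_i = code(x)_j = code(x)_k = z + 1 with z an integer. Then there exists ε₀ > 0 such that for every 0 < ε ≤ ε₀ the set of chromatic codes of cell points in the open ball B(x,ε) consists of exactly six functions, namely the functions c agreeing with code(x) outside {i,j,k} and assigning the three values z, z+1, z+2 bijectively to the indices i, j, k; consequently code(x) equals the average (1/6 of the sum) of these six cell codes. -/
noncomputable section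

open Metric

abbrev Pt : Type := EuclideanSpace ℝ (Fin 2)

/-- The chromatic code of a point `x` with respect to generators `p`:
`code p x i` = #{j ≠ i : dist(x,p j) > dist(x,p i)} + (1/2)·#{j ≠ i : dist(x,p j) = dist(x,p i)}. -/
def code {n : ℕ} (p : Fin n → Pt) (x : Pt) (i : Fin n) : ℚ :=
  (Set.ncard {j : Fin n | j ≠ i ∧ dist x (p i) < dist x (p j)} : ℚ)
  + (1/2) * (Set.ncard {j : Fin n | j ≠ i ∧ dist x (p j) = dist x (p i)} : ℚ)

/-- `{i,j}` is a tie of `x`. -/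
def Tie {n : ℕ} (p : Fin n → Pt) (x : Pt) (i j : Fin n) : Prop :=
  i ≠ j ∧ dist x (p i) = dist x (p j)

/-- A cell point has no ties. -/
def CellPoint {n : ℕ} (p : Fin n → Pt) (x : Pt) : Prop :=
  ∀ i j, ¬ Tie p x i j

/-- An edge point has exactly one (unordered) tie. -/
def EdgePoint {n : ℕ} (p : Fin n → Pt) (x : Pt) : Prop :=
  ∃ i j, Tie p x i j ∧ ∀ u v, Tie p x u v → ({u, v} : Set (Fin n)) = {i, j}

/-- A 2-I vertex point has exactly two ties, forming two disjoint pairs. -/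
def Vertex2I {n : ℕ} (p : Fin n → Pt) (x : Pt) : Prop :=
  ∃ i j u v : Fin n, i ≠ j ∧ i ≠ u ∧ i ≠ v ∧ j ≠ u ∧ j ≠ v ∧ u ≠ v ∧
    Tie p x i j ∧ Tie p x u v ∧
    ∀ a b, Tie p x a b → ({a, b} : Set (Fin n)) = {i, j} ∨ ({a, b} : Set (Fin n)) = {u, v}

/-- A 3-I vertex point: its ties are exactly the three pairs contained in some
3-element subset `{i,j,k}`. -/
def Vertex3I {n : ℕ} (p : Fin n → Pt) (x : Pt) : Prop :=
  ∃ i j k : Fin n, i ≠ j ∧ i ≠ k ∧ j ≠ k ∧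
    ∀ a b, Tie p x a b ↔
      (a ≠ b ∧ a ∈ ({i, j, k} : Set (Fin n)) ∧ b ∈ ({i, j, k} : Set (Fin n)))

/-- The chromatic distance between two points. -/
def chromDist {n : ℕ} (p : Fin n → Pt) (x y : Pt) : ℚ :=
  ∑ i, |code p x i - code p y i|

/-- The spatial particle of `x`: the fiber of the chromatic code through `x`. -/
def particle {n : ℕ} (p : Fin n → Pt) (x : Pt) : Set Pt :=
  {y | code p y = code p x}

/-- The generators are in general position: every point of the plane is one of the four
particle types, and perpendicular bisectors of distinct pairs are distinct non-parallel
lines (any two of them meet in exactly one point). -/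
def GeneralPosition {n : ℕ} (p : Fin n → Pt) : Prop :=
  (∀ x : Pt, CellPoint p x ∨ EdgePoint p x ∨ Vertex2I p x ∨ Vertex3I p x) ∧
  (∀ i j u v : Fin n, i ≠ j → u ≠ v → ({i, j} : Set (Fin n)) ≠ {u, v} →
    ∃! x : Pt, dist x (p i) = dist x (p j) ∧ dist x (p u) = dist x (p v))

/-- The set `{0,1,…,n−1}` viewed inside `ℚ`. -/
def codeRange (n : ℕ) : Set ℚ := {q | ∃ m : ℕ, m < n ∧ q = m}

/-- The set of candidate cell codes around a 3-I vertex point `x` with tie triple `{i,j,k}`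
and common code value `z + 1`: functions agreeing with `code p x` outside `{i,j,k}` and
assigning the values `z, z+1, z+2` bijectively to `i, j, k`. -/
def cellCodes3I {n : ℕ} (p : Fin n → Pt) (x : Pt) (i j k : Fin n) (z : ℤ) :
    Set (Fin n → ℚ) :=
  {c | (∀ t, t ≠ i → t ≠ j → t ≠ k → c t = code p x t) ∧
       ({c i, c j, c k} : Set ℚ) = {(z : ℚ), (z : ℚ) + 1, (z : ℚ) + 2}}

open RealInnerProductSpace

lemma order_pres_aux {n : ℕ} [NeZero n] (p : Fin n → Pt) (x : Pt) :
    ∃ ε₀ > (0:ℝ), ∀ y : Pt, dist y x < ε₀ → ∀ a b : Fin n,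
      dist x (p a) < dist x (p b) → dist y (p a) < dist y (p b) := by
  have hne : (Finset.univ : Finset (Fin n × Fin n)).Nonempty := Finset.univ_nonempty
  set f : Fin n × Fin n → ℝ := fun ab =>
    if dist x (p ab.1) < dist x (p ab.2) then (dist x (p ab.2) - dist x (p ab.1)) / 2 else 1
    with hf
  refine ⟨Finset.univ.inf' hne f, ?_, ?_⟩
  · rw [gt_iff_lt, Finset.lt_inf'_iff]
    intro ab _
    by_cases h : dist x (p ab.1) < dist x (p ab.2) <;> simp [hf, h] <;> linarith
  · intro y hy a b hab
    have h1 : Finset.univ.inf' hne f ≤ f (a, b) := Finset.inf'_le _ (Finset.mem_univ _)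
    have h2 : f (a, b) = (dist x (p b) - dist x (p a)) / 2 := if_pos hab
    have h3 : dist y (p a) ≤ dist y x + dist x (p a) := dist_triangle _ _ _
    have h4 : dist x (p b) ≤ dist x y + dist y (p b) := dist_triangle _ _ _
    rw [dist_comm x y] at h4
    rw [h2] at h1
    linarith

lemma dist_sq_perturb (x v a : Pt) (δ : ℝ) :
    dist (x + δ • v) a ^ 2 = dist x a ^ 2 + 2*δ*⟪x - a, v⟫ + δ^2*‖v‖^2 := by
  rw [dist_eq_norm, dist_eq_norm]
  have h : x + δ • v - a = (x - a) + δ • v := by abel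
  rw [h, norm_add_sq_real, real_inner_smul_right, norm_smul]
  simp [mul_pow, sq_abs, Real.norm_eq_abs]
  ring

private lemma alg0 (a b e : ℝ) (ha : a ≠ 0) (h : a*b - e^2 = 0) :
    b - 2*(e/a*e) + (e/a)^2*a = 0 := by
  field_simp
  linear_combination h

private lemma alg1 (a b e s t : ℝ) (h : a*b - e^2 ≠ 0) :
    (s*b - t*e)/(a*b - e^2) * a + (t*a - s*e)/(a*b - e^2) * e = s := by
  rw [div_mul_eq_mul_div, div_mul_eq_mul_div, ← add_div, div_eq_iff h]; ring

private lemma alg2 (a b e s t : ℝ) (h : a*b - e^2 ≠ 0) :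
    (s*b - t*e)/(a*b - e^2) * e + (t*a - s*e)/(a*b - e^2) * b = t := by
  rw [div_mul_eq_mul_div, div_mul_eq_mul_div, ← add_div, div_eq_iff h]; ring

lemma collinear_of_det_zero (u w : Pt) (hu : u ≠ 0)
    (h : ‖u‖^2*‖w‖^2 - ⟪u,w⟫^2 = 0) : w = (⟪u,w⟫/‖u‖^2) • u := by
  have hn : ‖u‖ ≠ 0 := norm_ne_zero_iff.2 hu
  have hn2 : ‖u‖^2 ≠ 0 := pow_ne_zero _ hn
  have hwu : ⟪w,u⟫ = ⟪u,w⟫ := real_inner_comm u w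
  have key : ‖w - (⟪u,w⟫/‖u‖^2) • u‖^2 = 0 := by
    rw [norm_sub_sq_real, real_inner_smul_right, norm_smul, Real.norm_eq_abs,
      mul_pow, sq_abs, hwu]
    exact alg0 _ _ _ hn2 h
  exact sub_eq_zero.1 (norm_eq_zero.1 ((pow_eq_zero_iff (two_ne_zero)).1 key))

lemma exists_inner_eq (u w : Pt) (h : ‖u‖^2 * ‖w‖^2 - ⟪u,w⟫^2 ≠ 0) (s t : ℝ) :
    ∃ v : Pt, ⟪u, v⟫ = s ∧ ⟪w, v⟫ = t := by
  have hwu : ⟪w,u⟫ = ⟪u,w⟫ := real_inner_comm u w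
  refine ⟨((s*‖w‖^2 - t*⟪u,w⟫)/(‖u‖^2 * ‖w‖^2 - ⟪u,w⟫^2)) • u
    + ((t*‖u‖^2 - s*⟪u,w⟫)/(‖u‖^2 * ‖w‖^2 - ⟪u,w⟫^2)) • w, ?_, ?_⟩
  · rw [inner_add_right, real_inner_smul_right, real_inner_smul_right,
      real_inner_self_eq_norm_sq]
    exact alg1 _ _ _ _ _ h
  · rw [inner_add_right, real_inner_smul_right, real_inner_smul_right,
      real_inner_self_eq_norm_sq, hwu]
    exact alg2 _ _ _ _ _ h

/-- The candidate cell-code function around a 3-I unit. -/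
private def F6 {n : ℕ} (p : Fin n → Pt) (x : Pt) (i j k : Fin n) (a b c : ℚ) :
    Fin n → ℚ :=
  fun t => if t = i then a else if t = j then b else if t = k then c else code p x t

set_option maxHeartbeats 4000000 in
theorem vertex3I_unit_structure {n : ℕ} (hn : 2 ≤ n) (p : Fin n → Pt)
    (hp : Function.Injective p) (x : Pt) (i j k : Fin n)
    (hij : i ≠ j) (hik : i ≠ k) (hjk : j ≠ k)
    (hexact : ∀ a b, Tie p x a b ↔
      (a ≠ b ∧ a ∈ ({i, j, k} : Set (Fin n)) ∧ b ∈ ({i, j, k} : Set (Fin n))))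
    (z : ℤ)
    (hzi : code p x i = (z : ℚ) + 1) (hzj : code p x j = (z : ℚ) + 1)
    (hzk : code p x k = (z : ℚ) + 1) :
    (∃ ε₀ > (0 : ℝ), ∀ ε : ℝ, 0 < ε → ε ≤ ε₀ →
      {c : Fin n → ℚ | ∃ y ∈ Metric.ball x ε, CellPoint p y ∧ code p y = c} =
        cellCodes3I p x i j k z) ∧
    (cellCodes3I p x i j k z).ncard = 6 ∧
    (∀ t, (6 : ℚ) * code p x t = ∑ᶠ c ∈ cellCodes3I p x i j k z, c t) := by
  classical
  haveI : NeZero n := ⟨by omega⟩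
  -- basic tie facts
  have tij : dist x (p i) = dist x (p j) :=
    ((hexact i j).2 ⟨hij, by simp, by simp⟩).2
  have tik : dist x (p i) = dist x (p k) :=
    ((hexact i k).2 ⟨hik, by simp, by simp⟩).2
  have hnotie : ∀ a b : Fin n, a ≠ b → (a ∉ ({i,j,k} : Set (Fin n)) ∨ b ∉ ({i,j,k} : Set (Fin n))) →
      dist x (p a) ≠ dist x (p b) := by
    intro a b hab hor hd
    have := (hexact a b).1 ⟨hab, hd⟩
    tauto
  obtain ⟨ε₁, hε₁, hord⟩ := order_pres_aux p x
  -- the set A of generators strictly farther than the triple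
  set A : Set (Fin n) := {s | s ∉ ({i,j,k} : Set (Fin n)) ∧ dist x (p i) < dist x (p s)} with hA
  have hAz : (A.ncard : ℚ) = (z : ℚ) := by
    have e1 : {s : Fin n | s ≠ i ∧ dist x (p i) < dist x (p s)} = A := by
      ext s
      simp only [hA, Set.mem_setOf_eq]
      constructor
      · rintro ⟨hsi, hlt⟩
        refine ⟨?_, hlt⟩
        intro hsT
        rcases hsT with rfl | rfl | rfl
        · exact hsi rfl
        · rw [tij] at hlt; exact lt_irrefl _ hlt
        · rw [tik] at hlt; exact lt_irrefl _ hlt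
      · rintro ⟨hsT, hlt⟩
        exact ⟨fun h => hsT (by simp [h]), hlt⟩
    have e2 : {s : Fin n | s ≠ i ∧ dist x (p s) = dist x (p i)} = {j, k} := by
      ext s
      simp only [Set.mem_setOf_eq, Set.mem_insert_iff, Set.mem_singleton_iff]
      constructor
      · rintro ⟨hsi, hde⟩
        have := (hexact s i).1 ⟨hsi, hde⟩
        rcases this.2.1 with rfl | rfl | rfl
        · exact absurd rfl hsi
        · exact Or.inl rfl
        · exact Or.inr rfl
      · rintro (rfl | rfl)
        · exact ⟨Ne.symm hij, tij.symm⟩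
        · exact ⟨Ne.symm hik, tik.symm⟩
    have h := hzi
    rw [code, e1, e2, Set.ncard_pair hjk] at h
    push_cast at h
    linarith
  -- cell points have pairwise distinct distances
  have hdne : ∀ (y : Pt), CellPoint p y → ∀ a b : Fin n, a ≠ b →
      dist y (p a) ≠ dist y (p b) := by
    intro y hcell a b hab h
    exact hcell a b ⟨hab, h⟩
  -- code at an index outside the triple is unchanged
  have hcode_out : ∀ y : Pt,
      (∀ a b : Fin n, dist x (p a) < dist x (p b) → dist y (p a) < dist y (p b)) →
      CellPoint p y → ∀ t : Fin n, t ∉ ({i,j,k} : Set (Fin n)) → code p y t = code p x t := by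
    intro y hOP hcell t htT
    have h1 : {s : Fin n | s ≠ t ∧ dist y (p t) < dist y (p s)} =
        {s : Fin n | s ≠ t ∧ dist x (p t) < dist x (p s)} := by
      ext s
      simp only [Set.mem_setOf_eq]
      constructor
      · rintro ⟨hst, hlt⟩
        refine ⟨hst, ?_⟩
        rcases lt_trichotomy (dist x (p t)) (dist x (p s)) with h | h | h
        · exact h
        · exact absurd h (hnotie t s (Ne.symm hst) (Or.inl htT))
        · exact absurd hlt (not_lt.2 (le_of_lt (hOP _ _ h)))
      · rintro ⟨hst, hlt⟩
        exact ⟨hst, hOP _ _ hlt⟩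
    have h2 : {s : Fin n | s ≠ t ∧ dist y (p s) = dist y (p t)} = ∅ := by
      ext s
      simp only [Set.mem_setOf_eq, Set.mem_empty_iff_false, iff_false, not_and]
      intro hst heq
      exact hcell s t ⟨hst, heq⟩
    have h3 : {s : Fin n | s ≠ t ∧ dist x (p s) = dist x (p t)} = ∅ := by
      ext s
      simp only [Set.mem_setOf_eq, Set.mem_empty_iff_false, iff_false, not_and]
      intro hst heq
      exact hnotie s t hst (Or.inr htT) heq
    rw [code, code, h1, h2, h3]
  -- code at a triple index
  have hcode_ite : ∀ y : Pt,
      (∀ a b : Fin n, dist x (p a) < dist x (p b) → dist y (p a) < dist y (p b)) →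
      CellPoint p y → ∀ a b c : Fin n, a ≠ b → a ≠ c → b ≠ c →
      ({a,b,c} : Set (Fin n)) = ({i,j,k} : Set (Fin n)) →
      dist x (p a) = dist x (p i) →
      code p y a = (z : ℚ) +
        ((if dist y (p a) < dist y (p b) then (1:ℚ) else 0) +
         (if dist y (p a) < dist y (p c) then (1:ℚ) else 0)) := by
    intro y hOP hcell a b c hab hac hbc habcT hdia
    have haT : a ∈ ({i,j,k} : Set (Fin n)) := habcT ▸ (by simp)
    have hbT : b ∈ ({i,j,k} : Set (Fin n)) := habcT ▸ (by simp)
    have hcT : c ∈ ({i,j,k} : Set (Fin n)) := habcT ▸ (by simp)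
    have hS2 : {s : Fin n | s ≠ a ∧ dist y (p s) = dist y (p a)} = ∅ := by
      ext s
      simp only [Set.mem_setOf_eq, Set.mem_empty_iff_false, iff_false, not_and]
      intro hsa heq
      exact hcell s a ⟨hsa, heq⟩
    set B : Set (Fin n) :=
      {s : Fin n | s ∈ ({b,c} : Set (Fin n)) ∧ dist y (p a) < dist y (p s)} with hB
    have hS1 : {s : Fin n | s ≠ a ∧ dist y (p a) < dist y (p s)} = A ∪ B := by
      ext s
      by_cases hsT : s ∈ ({i,j,k} : Set (Fin n))
      · rw [← habcT] at hsT
        rcases hsT with rfl | rfl | rfl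
        · simp only [Set.mem_setOf_eq, Set.mem_union, hA, hB, Set.mem_insert_iff,
            Set.mem_singleton_iff]
          constructor
          · rintro ⟨h, _⟩; exact absurd rfl h
          · rintro (⟨h, _⟩ | ⟨h, _⟩)
            · exact absurd haT h
            · rcases h with rfl | rfl
              · exact absurd rfl hab
              · exact absurd rfl hac
        · simp only [Set.mem_setOf_eq, Set.mem_union, hA, hB, Set.mem_insert_iff,
            Set.mem_singleton_iff]
          constructor
          · rintro ⟨_, h⟩; exact Or.inr ⟨by simp, h⟩
          · rintro (⟨h, _⟩ | ⟨_, h⟩)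
            · exact absurd hbT h
            · exact ⟨Ne.symm hab, h⟩
        · simp only [Set.mem_setOf_eq, Set.mem_union, hA, hB, Set.mem_insert_iff,
            Set.mem_singleton_iff]
          constructor
          · rintro ⟨_, h⟩; exact Or.inr ⟨by simp, h⟩
          · rintro (⟨h, _⟩ | ⟨_, h⟩)
            · exact absurd hcT h
            · exact ⟨Ne.symm hac, h⟩
      · have hsa : s ≠ a := fun h => hsT (h ▸ haT)
        have hsb : s ≠ b := fun h => hsT (h ▸ hbT)
        have hsc : s ≠ c := fun h => hsT (h ▸ hcT)
        have hnoeq : dist x (p a) ≠ dist x (p s) :=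
          hnotie a s (Ne.symm hsa) (Or.inr hsT)
        simp only [Set.mem_setOf_eq, Set.mem_union, hA, hB, Set.mem_insert_iff,
          Set.mem_singleton_iff]
        constructor
        · rintro ⟨_, hlt⟩
          left
          refine ⟨hsT, ?_⟩
          rw [← hdia]
          rcases lt_trichotomy (dist x (p a)) (dist x (p s)) with h | h | h
          · exact h
          · exact absurd h hnoeq
          · exact absurd hlt (not_lt.2 (le_of_lt (hOP _ _ h)))
        · rintro (⟨_, hlt⟩ | ⟨hmem, hlt⟩)
          · rw [← hdia] at hlt
            exact ⟨hsa, hOP _ _ hlt⟩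
          · rcases hmem with rfl | rfl
            · exact absurd rfl hsb
            · exact absurd rfl hsc
    have hdisj : Disjoint A B := by
      rw [Set.disjoint_left]
      rintro s hsA hsB
      rcases hsB.1 with rfl | rfl
      · exact hsA.1 hbT
      · exact hsA.1 hcT
    have hmain : code p y a = (z : ℚ) + (B.ncard : ℚ) := by
      rw [code, hS1, hS2, Set.ncard_union_eq hdisj (Set.toFinite _) (Set.toFinite _)]
      simp only [Set.ncard_empty, Nat.cast_zero, mul_zero, add_zero]
      push_cast
      linarith [hAz]
    rw [hmain]
    by_cases q1 : dist y (p a) < dist y (p b) <;> by_cases q2 : dist y (p a) < dist y (p c)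
    · have hBeq : B = {b, c} := by
        ext s
        simp only [hB, Set.mem_setOf_eq, Set.mem_insert_iff, Set.mem_singleton_iff]
        constructor
        · rintro ⟨h, _⟩; exact h
        · rintro (rfl | rfl)
          · exact ⟨Or.inl rfl, q1⟩
          · exact ⟨Or.inr rfl, q2⟩
      rw [if_pos q1, if_pos q2, hBeq, Set.ncard_pair hbc]
      norm_num
    · have hBeq : B = {b} := by
        ext s
        simp only [hB, Set.mem_setOf_eq, Set.mem_insert_iff, Set.mem_singleton_iff]
        constructor
        · rintro ⟨rfl | rfl, h⟩
          · rfl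
          · exact absurd h q2
        · rintro rfl
          exact ⟨Or.inl rfl, q1⟩
      rw [if_pos q1, if_neg q2, hBeq, Set.ncard_singleton]
      norm_num
    · have hBeq : B = {c} := by
        ext s
        simp only [hB, Set.mem_setOf_eq, Set.mem_insert_iff, Set.mem_singleton_iff]
        constructor
        · rintro ⟨rfl | rfl, h⟩
          · exact absurd h q1
          · rfl
        · rintro rfl
          exact ⟨Or.inr rfl, q2⟩
      rw [if_neg q1, if_pos q2, hBeq, Set.ncard_singleton]
      norm_num
    · have hBeq : B = ∅ := by
        ext s
        simp only [hB, Set.mem_setOf_eq, Set.mem_insert_iff, Set.mem_singleton_iff,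
          Set.mem_empty_iff_false, iff_false, not_and]
        rintro (rfl | rfl)
        · exact q1
        · exact q2
      rw [if_neg q1, if_neg q2, hBeq, Set.ncard_empty]
      norm_num
  -- permuted triple set equalities
  have hTj : ({j,i,k} : Set (Fin n)) = ({i,j,k} : Set (Fin n)) := by
    ext s; simp only [Set.mem_insert_iff, Set.mem_singleton_iff]; tauto
  have hTk : ({k,i,j} : Set (Fin n)) = ({i,j,k} : Set (Fin n)) := by
    ext s; simp only [Set.mem_insert_iff, Set.mem_singleton_iff]; tauto
  -- F6 evaluation
  have hFi : ∀ a b c : ℚ, F6 p x i j k a b c i = a := by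
    intro a b c; simp [F6]
  have hFj : ∀ a b c : ℚ, F6 p x i j k a b c j = b := by
    intro a b c; simp [F6, Ne.symm hij]
  have hFk : ∀ a b c : ℚ, F6 p x i j k a b c k = c := by
    intro a b c; simp [F6, Ne.symm hik, Ne.symm hjk]
  have hFo : ∀ (a b c : ℚ) (t : Fin n), t ≠ i → t ≠ j → t ≠ k →
      F6 p x i j k a b c t = code p x t := by
    intro a b c t h1 h2 h3; simp [F6, h1, h2, h3]
  -- a cell point's code is an F6 function
  have hcodeF : ∀ y : Pt,
      (∀ a b : Fin n, dist x (p a) < dist x (p b) → dist y (p a) < dist y (p b)) →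
      CellPoint p y →
      code p y = F6 p x i j k (code p y i) (code p y j) (code p y k) := by
    intro y hOP hcell
    funext t
    by_cases e1 : t = i
    · subst e1; rw [hFi]
    by_cases e2 : t = j
    · subst e2; rw [hFj]
    by_cases e3 : t = k
    · subst e3; rw [hFk]
    rw [hFo _ _ _ t e1 e2 e3, hcode_out y hOP hcell t (by simp [e1, e2, e3])]
  -- cell points of small balls give cell codes
  have hcellof : ∀ y : Pt,
      (∀ a b : Fin n, dist x (p a) < dist x (p b) → dist y (p a) < dist y (p b)) →
      dist y (p i) ≠ dist y (p j) → dist y (p i) ≠ dist y (p k) →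
      dist y (p j) ≠ dist y (p k) → CellPoint p y := by
    intro y hOP n1 n2 n3 a b hTie
    obtain ⟨hab, heq⟩ := hTie
    rcases lt_trichotomy (dist x (p a)) (dist x (p b)) with h | h | h
    · exact absurd heq (ne_of_lt (hOP _ _ h))
    · obtain ⟨_, ha, hb⟩ := (hexact a b).1 ⟨hab, h⟩
      rcases ha with rfl | rfl | rfl <;> rcases hb with rfl | rfl | rfl <;>
        first
          | exact hab rfl
          | exact n1 heq
          | exact n1 heq.symm
          | exact n2 heq
          | exact n2 heq.symm
          | exact n3 heq
          | exact n3 heq.symm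
    · exact absurd heq.symm (ne_of_lt (hOP _ _ h))
  -- the geometric construction
  have hui : p j - p i ≠ 0 := sub_ne_zero.2 fun h => hij (hp h).symm
  have hwi : p k - p i ≠ 0 := sub_ne_zero.2 fun h => hik (hp h).symm
  set u : Pt := p j - p i with hu
  set w : Pt := p k - p i with hw
  have rel1 : 2*⟪x - p i, u⟫ = ‖u‖^2 := by
    have h := tij
    rw [dist_eq_norm, dist_eq_norm] at h
    have h2 : ‖x - p j‖^2 = ‖x - p i‖^2 := by rw [h]
    have h3 : x - p j = (x - p i) - u := by rw [hu]; abel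
    rw [h3, norm_sub_sq_real] at h2
    linarith
  have rel2 : 2*⟪x - p i, w⟫ = ‖w‖^2 := by
    have h := tik
    rw [dist_eq_norm, dist_eq_norm] at h
    have h2 : ‖x - p k‖^2 = ‖x - p i‖^2 := by rw [h]
    have h3 : x - p k = (x - p i) - w := by rw [hw]; abel
    rw [h3, norm_sub_sq_real] at h2
    linarith
  have hdet : ‖u‖^2 * ‖w‖^2 - ⟪u,w⟫^2 ≠ 0 := by
    intro h
    have hcol := collinear_of_det_zero u w hui h
    set cc : ℝ := ⟪u,w⟫/‖u‖^2 with hcc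
    have h1 : ⟪x - p i, w⟫ = cc * ⟪x - p i, u⟫ := by
      rw [hcol, real_inner_smul_right]
    have h2 : ‖w‖^2 = cc^2 * ‖u‖^2 := by
      rw [hcol, norm_smul, Real.norm_eq_abs, mul_pow, sq_abs]
    have hU : (0:ℝ) < ‖u‖^2 := pow_pos (norm_pos_iff.mpr hui) 2
    have he : cc * ‖u‖^2 = cc^2 * ‖u‖^2 := by
      linear_combination (-cc) * rel1 - 2*h1 + rel2 + h2
    have hcc' : cc = cc^2 := mul_right_cancel₀ (ne_of_gt hU) he
    rcases mul_eq_zero.1 (show cc*(cc-1) = 0 by linear_combination -hcc') with h' | h'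
    · rw [h', zero_smul] at hcol
      exact hwi hcol
    · have h1' : cc = 1 := by linarith [sub_eq_zero.1 h']
      rw [h1', one_smul] at hcol
      have hkj : p k = p j := sub_left_inj.1 (by rw [← hw, ← hu, hcol])
      exact hjk (hp hkj).symm
  have hconstruct : ∀ (s t : ℝ) (ε : ℝ), 0 < ε → ∃ y : Pt, dist y x < ε ∧
      ∃ δ : ℝ, 0 < δ ∧
      dist y (p i)^2 - dist y (p j)^2 = 2*δ*s ∧
      dist y (p i)^2 - dist y (p k)^2 = 2*δ*t := by
    intro s t ε hε
    obtain ⟨v, hvu, hvw⟩ := exists_inner_eq u w hdet s t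
    set δ : ℝ := ε / (2*(‖v‖+1)) with hδ
    have hδpos : 0 < δ := by positivity
    refine ⟨x + δ • v, ?_, δ, hδpos, ?_, ?_⟩
    · have h1 : dist (x + δ • v) x = δ * ‖v‖ := by
        rw [dist_eq_norm]
        have h0 : x + δ • v - x = δ • v := by abel
        rw [h0, norm_smul, Real.norm_eq_abs, abs_of_pos hδpos]
      rw [h1]
      have hv1 : (0:ℝ) < ‖v‖ + 1 := by positivity
      have h3 : δ * ‖v‖ < δ * (‖v‖ + 1) := by nlinarith
      have h2 : δ * (‖v‖ + 1) = ε / 2 := by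
        rw [hδ]; field_simp
      linarith
    · rw [dist_sq_perturb, dist_sq_perturb]
      have h1 : ⟪x - p i, v⟫ - ⟪x - p j, v⟫ = s := by
        rw [← inner_sub_left, (show (x - p i) - (x - p j) = u by rw [hu]; abel)]
        exact hvu
      have h2 : dist x (p i)^2 = dist x (p j)^2 := by rw [tij]
      linear_combination 2*δ*h1 + h2
    · rw [dist_sq_perturb, dist_sq_perturb]
      have h1 : ⟪x - p i, v⟫ - ⟪x - p k, v⟫ = t := by
        rw [← inner_sub_left, (show (x - p i) - (x - p k) = w by rw [hw]; abel)]
        exact hvw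
      have h2 : dist x (p i)^2 = dist x (p k)^2 := by rw [tik]
      linear_combination 2*δ*h1 + h2
  have sqlt : ∀ (y : Pt) (a b : Fin n), dist y (p a)^2 < dist y (p b)^2 →
      dist y (p a) < dist y (p b) := by
    intro y a b h
    exact (pow_lt_pow_iff_left₀ dist_nonneg dist_nonneg (by norm_num)).1 h
  -- the six candidate functions
  set f1 : Fin n → ℚ := F6 p x i j k (z:ℚ) ((z:ℚ)+1) ((z:ℚ)+2) with hf1
  set f2 : Fin n → ℚ := F6 p x i j k (z:ℚ) ((z:ℚ)+2) ((z:ℚ)+1) with hf2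
  set f3 : Fin n → ℚ := F6 p x i j k ((z:ℚ)+1) (z:ℚ) ((z:ℚ)+2) with hf3
  set f4 : Fin n → ℚ := F6 p x i j k ((z:ℚ)+1) ((z:ℚ)+2) (z:ℚ) with hf4
  set f5 : Fin n → ℚ := F6 p x i j k ((z:ℚ)+2) (z:ℚ) ((z:ℚ)+1) with hf5
  set f6 : Fin n → ℚ := F6 p x i j k ((z:ℚ)+2) ((z:ℚ)+1) (z:ℚ) with hf6
  have nz01 : ((z:ℚ)) ≠ (z:ℚ)+1 := by intro hh; linarith
  have nz02 : ((z:ℚ)) ≠ (z:ℚ)+2 := by intro hh; linarith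
  have nz12 : ((z:ℚ)+1) ≠ (z:ℚ)+2 := by intro hh; linarith
  have hFne : ∀ a b c a' b' c' : ℚ, (a ≠ a' ∨ b ≠ b') →
      F6 p x i j k a b c ≠ F6 p x i j k a' b' c' := by
    rintro a b c a' b' c' (h | h) heq
    · exact h (by rw [← hFi a b c, ← hFi a' b' c', heq])
    · exact h (by rw [← hFj a b c, ← hFj a' b' c', heq])
  -- realization of each candidate by a cell point arbitrarily close to x
  have hr1 : ∀ ε : ℝ, 0 < ε → ε ≤ ε₁ →
      ∃ y ∈ Metric.ball x ε, CellPoint p y ∧ code p y = f1 := by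
    intro ε hε hεε₁
    obtain ⟨y, hyx, δ, hδ, e1, e2⟩ := hconstruct 1 2 ε hε
    have hOPy := hord y (lt_of_lt_of_le hyx hεε₁)
    have dji : dist y (p j) < dist y (p i) := sqlt y j i (by nlinarith)
    have dki : dist y (p k) < dist y (p i) := sqlt y k i (by nlinarith)
    have dkj : dist y (p k) < dist y (p j) := sqlt y k j (by nlinarith)
    have hcy : CellPoint p y := hcellof y hOPy (ne_of_gt dji) (ne_of_gt dki) (ne_of_gt dkj)
    refine ⟨y, Metric.mem_ball.2 hyx, hcy, ?_⟩
    have ci : code p y i = (z:ℚ) := by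
      rw [hcode_ite y hOPy hcy i j k hij hik hjk rfl rfl,
        if_neg (lt_asymm dji), if_neg (lt_asymm dki)]; ring
    have cj : code p y j = (z:ℚ)+1 := by
      rw [hcode_ite y hOPy hcy j i k (Ne.symm hij) hjk hik hTj tij.symm,
        if_pos dji, if_neg (lt_asymm dkj)]; ring
    have ck : code p y k = (z:ℚ)+2 := by
      rw [hcode_ite y hOPy hcy k i j (Ne.symm hik) (Ne.symm hjk) hij hTk tik.symm,
        if_pos dki, if_pos dkj]; ring
    rw [hcodeF y hOPy hcy, ci, cj, ck, ← hf1]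
  have hr2 : ∀ ε : ℝ, 0 < ε → ε ≤ ε₁ →
      ∃ y ∈ Metric.ball x ε, CellPoint p y ∧ code p y = f2 := by
    intro ε hε hεε₁
    obtain ⟨y, hyx, δ, hδ, e1, e2⟩ := hconstruct 2 1 ε hε
    have hOPy := hord y (lt_of_lt_of_le hyx hεε₁)
    have dji : dist y (p j) < dist y (p i) := sqlt y j i (by nlinarith)
    have dki : dist y (p k) < dist y (p i) := sqlt y k i (by nlinarith)
    have djk : dist y (p j) < dist y (p k) := sqlt y j k (by nlinarith)
    have hcy : CellPoint p y := hcellof y hOPy (ne_of_gt dji) (ne_of_gt dki) (ne_of_lt djk)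
    refine ⟨y, Metric.mem_ball.2 hyx, hcy, ?_⟩
    have ci : code p y i = (z:ℚ) := by
      rw [hcode_ite y hOPy hcy i j k hij hik hjk rfl rfl,
        if_neg (lt_asymm dji), if_neg (lt_asymm dki)]; ring
    have cj : code p y j = (z:ℚ)+2 := by
      rw [hcode_ite y hOPy hcy j i k (Ne.symm hij) hjk hik hTj tij.symm,
        if_pos dji, if_pos djk]; ring
    have ck : code p y k = (z:ℚ)+1 := by
      rw [hcode_ite y hOPy hcy k i j (Ne.symm hik) (Ne.symm hjk) hij hTk tik.symm,
        if_pos dki, if_neg (lt_asymm djk)]; ring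
    rw [hcodeF y hOPy hcy, ci, cj, ck, ← hf2]
  have hr3 : ∀ ε : ℝ, 0 < ε → ε ≤ ε₁ →
      ∃ y ∈ Metric.ball x ε, CellPoint p y ∧ code p y = f3 := by
    intro ε hε hεε₁
    obtain ⟨y, hyx, δ, hδ, e1, e2⟩ := hconstruct (-1) 1 ε hε
    have hOPy := hord y (lt_of_lt_of_le hyx hεε₁)
    have dij : dist y (p i) < dist y (p j) := sqlt y i j (by nlinarith)
    have dki : dist y (p k) < dist y (p i) := sqlt y k i (by nlinarith)
    have dkj : dist y (p k) < dist y (p j) := sqlt y k j (by nlinarith)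
    have hcy : CellPoint p y := hcellof y hOPy (ne_of_lt dij) (ne_of_gt dki) (ne_of_gt dkj)
    refine ⟨y, Metric.mem_ball.2 hyx, hcy, ?_⟩
    have ci : code p y i = (z:ℚ)+1 := by
      rw [hcode_ite y hOPy hcy i j k hij hik hjk rfl rfl,
        if_pos dij, if_neg (lt_asymm dki)]; ring
    have cj : code p y j = (z:ℚ) := by
      rw [hcode_ite y hOPy hcy j i k (Ne.symm hij) hjk hik hTj tij.symm,
        if_neg (lt_asymm dij), if_neg (lt_asymm dkj)]; ring
    have ck : code p y k = (z:ℚ)+2 := by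
      rw [hcode_ite y hOPy hcy k i j (Ne.symm hik) (Ne.symm hjk) hij hTk tik.symm,
        if_pos dki, if_pos dkj]; ring
    rw [hcodeF y hOPy hcy, ci, cj, ck, ← hf3]
  have hr4 : ∀ ε : ℝ, 0 < ε → ε ≤ ε₁ →
      ∃ y ∈ Metric.ball x ε, CellPoint p y ∧ code p y = f4 := by
    intro ε hε hεε₁
    obtain ⟨y, hyx, δ, hδ, e1, e2⟩ := hconstruct 1 (-1) ε hε
    have hOPy := hord y (lt_of_lt_of_le hyx hεε₁)
    have dji : dist y (p j) < dist y (p i) := sqlt y j i (by nlinarith)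
    have dik : dist y (p i) < dist y (p k) := sqlt y i k (by nlinarith)
    have djk : dist y (p j) < dist y (p k) := dji.trans dik
    have hcy : CellPoint p y := hcellof y hOPy (ne_of_gt dji) (ne_of_lt dik) (ne_of_lt djk)
    refine ⟨y, Metric.mem_ball.2 hyx, hcy, ?_⟩
    have ci : code p y i = (z:ℚ)+1 := by
      rw [hcode_ite y hOPy hcy i j k hij hik hjk rfl rfl,
        if_neg (lt_asymm dji), if_pos dik]; ring
    have cj : code p y j = (z:ℚ)+2 := by
      rw [hcode_ite y hOPy hcy j i k (Ne.symm hij) hjk hik hTj tij.symm,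
        if_pos dji, if_pos djk]; ring
    have ck : code p y k = (z:ℚ) := by
      rw [hcode_ite y hOPy hcy k i j (Ne.symm hik) (Ne.symm hjk) hij hTk tik.symm,
        if_neg (lt_asymm dik), if_neg (lt_asymm djk)]; ring
    rw [hcodeF y hOPy hcy, ci, cj, ck, ← hf4]
  have hr5 : ∀ ε : ℝ, 0 < ε → ε ≤ ε₁ →
      ∃ y ∈ Metric.ball x ε, CellPoint p y ∧ code p y = f5 := by
    intro ε hε hεε₁
    obtain ⟨y, hyx, δ, hδ, e1, e2⟩ := hconstruct (-2) (-1) ε hε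
    have hOPy := hord y (lt_of_lt_of_le hyx hεε₁)
    have dij : dist y (p i) < dist y (p j) := sqlt y i j (by nlinarith)
    have dik : dist y (p i) < dist y (p k) := sqlt y i k (by nlinarith)
    have dkj : dist y (p k) < dist y (p j) := sqlt y k j (by nlinarith)
    have hcy : CellPoint p y := hcellof y hOPy (ne_of_lt dij) (ne_of_lt dik) (ne_of_gt dkj)
    refine ⟨y, Metric.mem_ball.2 hyx, hcy, ?_⟩
    have ci : code p y i = (z:ℚ)+2 := by
      rw [hcode_ite y hOPy hcy i j k hij hik hjk rfl rfl,
        if_pos dij, if_pos dik]; ring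
    have cj : code p y j = (z:ℚ) := by
      rw [hcode_ite y hOPy hcy j i k (Ne.symm hij) hjk hik hTj tij.symm,
        if_neg (lt_asymm dij), if_neg (lt_asymm dkj)]; ring
    have ck : code p y k = (z:ℚ)+1 := by
      rw [hcode_ite y hOPy hcy k i j (Ne.symm hik) (Ne.symm hjk) hij hTk tik.symm,
        if_neg (lt_asymm dik), if_pos dkj]; ring
    rw [hcodeF y hOPy hcy, ci, cj, ck, ← hf5]
  have hr6 : ∀ ε : ℝ, 0 < ε → ε ≤ ε₁ →
      ∃ y ∈ Metric.ball x ε, CellPoint p y ∧ code p y = f6 := by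
    intro ε hε hεε₁
    obtain ⟨y, hyx, δ, hδ, e1, e2⟩ := hconstruct (-1) (-2) ε hε
    have hOPy := hord y (lt_of_lt_of_le hyx hεε₁)
    have dij : dist y (p i) < dist y (p j) := sqlt y i j (by nlinarith)
    have dik : dist y (p i) < dist y (p k) := sqlt y i k (by nlinarith)
    have djk : dist y (p j) < dist y (p k) := sqlt y j k (by nlinarith)
    have hcy : CellPoint p y := hcellof y hOPy (ne_of_lt dij) (ne_of_lt dik) (ne_of_lt djk)
    refine ⟨y, Metric.mem_ball.2 hyx, hcy, ?_⟩
    have ci : code p y i = (z:ℚ)+2 := by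
      rw [hcode_ite y hOPy hcy i j k hij hik hjk rfl rfl,
        if_pos dij, if_pos dik]; ring
    have cj : code p y j = (z:ℚ)+1 := by
      rw [hcode_ite y hOPy hcy j i k (Ne.symm hij) hjk hik hTj tij.symm,
        if_neg (lt_asymm dij), if_pos djk]; ring
    have ck : code p y k = (z:ℚ) := by
      rw [hcode_ite y hOPy hcy k i j (Ne.symm hik) (Ne.symm hjk) hij hTk tik.symm,
        if_neg (lt_asymm dik), if_neg (lt_asymm djk)]; ring
    rw [hcodeF y hOPy hcy, ci, cj, ck, ← hf6]
  -- a cell code is determined by its values on the triple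
  have hcF : ∀ c : Fin n → ℚ, (∀ t, t ≠ i → t ≠ j → t ≠ k → c t = code p x t) →
      c = F6 p x i j k (c i) (c j) (c k) := by
    intro c hout
    funext t
    by_cases e1 : t = i
    · subst e1; rw [hFi]
    by_cases e2 : t = j
    · subst e2; rw [hFj]
    by_cases e3 : t = k
    · subst e3; rw [hFk]
    rw [hFo _ _ _ t e1 e2 e3]; exact hout t e1 e2 e3
  -- enumeration of cellCodes3I
  have hsub : cellCodes3I p x i j k z ⊆ ({f1,f2,f3,f4,f5,f6} : Set (Fin n → ℚ)) := by
    rintro c ⟨hout, hset⟩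
    have hcFc := hcF c hout
    have hci : c i = (z:ℚ) ∨ c i = (z:ℚ)+1 ∨ c i = (z:ℚ)+2 := by
      have h : c i ∈ ({(z:ℚ), (z:ℚ)+1, (z:ℚ)+2} : Set ℚ) := by rw [← hset]; simp
      simpa using h
    have hcj : c j = (z:ℚ) ∨ c j = (z:ℚ)+1 ∨ c j = (z:ℚ)+2 := by
      have h : c j ∈ ({(z:ℚ), (z:ℚ)+1, (z:ℚ)+2} : Set ℚ) := by rw [← hset]; simp
      simpa using h
    have hck : c k = (z:ℚ) ∨ c k = (z:ℚ)+1 ∨ c k = (z:ℚ)+2 := by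
      have h : c k ∈ ({(z:ℚ), (z:ℚ)+1, (z:ℚ)+2} : Set ℚ) := by rw [← hset]; simp
      simpa using h
    have hz0 : (z:ℚ) = c i ∨ (z:ℚ) = c j ∨ (z:ℚ) = c k := by
      have h : (z:ℚ) ∈ ({c i, c j, c k} : Set ℚ) := by rw [hset]; simp
      simpa using h
    have hz1 : (z:ℚ)+1 = c i ∨ (z:ℚ)+1 = c j ∨ (z:ℚ)+1 = c k := by
      have h : (z:ℚ)+1 ∈ ({c i, c j, c k} : Set ℚ) := by rw [hset]; simp
      simpa using h
    have hz2 : (z:ℚ)+2 = c i ∨ (z:ℚ)+2 = c j ∨ (z:ℚ)+2 = c k := by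
      have h : (z:ℚ)+2 ∈ ({c i, c j, c k} : Set ℚ) := by rw [hset]; simp
      simpa using h
    simp only [Set.mem_insert_iff, Set.mem_singleton_iff, hf1, hf2, hf3, hf4, hf5, hf6]
    rcases hci with h1 | h1 | h1 <;> rcases hcj with h2 | h2 | h2 <;>
      rcases hck with h3 | h3 | h3 <;>
      rw [h1, h2, h3] at hz0 hz1 hz2 hcFc <;>
      first
        | (exfalso; rcases hz0 with h | h | h <;> linarith)
        | (exfalso; rcases hz1 with h | h | h <;> linarith)
        | (exfalso; rcases hz2 with h | h | h <;> linarith)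
        | exact Or.inl hcFc
        | exact Or.inr (Or.inl hcFc)
        | exact Or.inr (Or.inr (Or.inl hcFc))
        | exact Or.inr (Or.inr (Or.inr (Or.inl hcFc)))
        | exact Or.inr (Or.inr (Or.inr (Or.inr (Or.inl hcFc))))
        | exact Or.inr (Or.inr (Or.inr (Or.inr (Or.inr hcFc))))
  have hsup : ({f1,f2,f3,f4,f5,f6} : Set (Fin n → ℚ)) ⊆ cellCodes3I p x i j k z := by
    intro c hc
    simp only [Set.mem_insert_iff, Set.mem_singleton_iff] at hc
    rcases hc with rfl | rfl | rfl | rfl | rfl | rfl <;>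
      refine ⟨fun t h1 h2 h3 => hFo _ _ _ t h1 h2 h3, ?_⟩ <;>
      simp only [hf1, hf2, hf3, hf4, hf5, hf6, hFi, hFj, hFk] <;>
      · ext q
        simp only [Set.mem_insert_iff, Set.mem_singleton_iff]
        constructor <;> rintro (h | h | h) <;>
          first
            | (left; linarith)
            | (right; left; linarith)
            | (right; right; linarith)
  have hsix : cellCodes3I p x i j k z = ({f1,f2,f3,f4,f5,f6} : Set (Fin n → ℚ)) :=
    Set.Subset.antisymm hsub hsup
  refine ⟨⟨ε₁, hε₁, ?_⟩, ?_, ?_⟩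
  · -- the ball description
    intro ε hε hεε₁
    apply Set.Subset.antisymm
    · rintro c ⟨y, hyb, hcy, rfl⟩
      have hOPy := hord y (lt_of_lt_of_le (Metric.mem_ball.1 hyb) hεε₁)
      refine ⟨fun t h1 h2 h3 => hcode_out y hOPy hcy t (by simp [h1, h2, h3]), ?_⟩
      have ci := hcode_ite y hOPy hcy i j k hij hik hjk rfl rfl
      have cj := hcode_ite y hOPy hcy j i k (Ne.symm hij) hjk hik hTj tij.symm
      have ck := hcode_ite y hOPy hcy k i j (Ne.symm hik) (Ne.symm hjk) hij hTk tik.symm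
      rw [ci, cj, ck]
      rcases (hdne y hcy i j hij).lt_or_gt with h1 | h1 <;>
      rcases (hdne y hcy i k hik).lt_or_gt with h2 | h2 <;>
      rcases (hdne y hcy j k hjk).lt_or_gt with h3 | h3 <;>
        simp only [h1, h2, h3, lt_asymm h1, lt_asymm h2, lt_asymm h3, if_true, if_false,
          ite_true, ite_false] <;>
        first
          | (exfalso; linarith)
          | (ext q;
             simp only [Set.mem_insert_iff, Set.mem_singleton_iff];
             constructor <;> rintro (h | h | h) <;>
               first
                 | (left; linarith)
                 | (right; left; linarith)
                 | (right; right; linarith))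
    · rw [hsix]
      intro c hc
      simp only [Set.mem_insert_iff, Set.mem_singleton_iff] at hc
      rcases hc with rfl | rfl | rfl | rfl | rfl | rfl
      · exact hr1 ε hε hεε₁
      · exact hr2 ε hε hεε₁
      · exact hr3 ε hε hεε₁
      · exact hr4 ε hε hεε₁
      · exact hr5 ε hε hεε₁
      · exact hr6 ε hε hεε₁
  · -- cardinality
    have m1 : f1 ∉ ({f2,f3,f4,f5,f6} : Set (Fin n → ℚ)) := by
      simp only [Set.mem_insert_iff, Set.mem_singleton_iff, hf1, hf2, hf3, hf4, hf5, hf6]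
      push_neg
      exact ⟨hFne _ _ _ _ _ _ (Or.inr nz12), hFne _ _ _ _ _ _ (Or.inl nz01),
        hFne _ _ _ _ _ _ (Or.inl nz01), hFne _ _ _ _ _ _ (Or.inl nz02),
        hFne _ _ _ _ _ _ (Or.inl nz02)⟩
    have m2 : f2 ∉ ({f3,f4,f5,f6} : Set (Fin n → ℚ)) := by
      simp only [Set.mem_insert_iff, Set.mem_singleton_iff, hf2, hf3, hf4, hf5, hf6]
      push_neg
      exact ⟨hFne _ _ _ _ _ _ (Or.inl nz01), hFne _ _ _ _ _ _ (Or.inl nz01),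
        hFne _ _ _ _ _ _ (Or.inl nz02), hFne _ _ _ _ _ _ (Or.inl nz02)⟩
    have m3 : f3 ∉ ({f4,f5,f6} : Set (Fin n → ℚ)) := by
      simp only [Set.mem_insert_iff, Set.mem_singleton_iff, hf3, hf4, hf5, hf6]
      push_neg
      exact ⟨hFne _ _ _ _ _ _ (Or.inr nz02), hFne _ _ _ _ _ _ (Or.inl nz12),
        hFne _ _ _ _ _ _ (Or.inl nz12)⟩
    have m4 : f4 ∉ ({f5,f6} : Set (Fin n → ℚ)) := by
      simp only [Set.mem_insert_iff, Set.mem_singleton_iff, hf4, hf5, hf6]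
      push_neg
      exact ⟨hFne _ _ _ _ _ _ (Or.inl nz12), hFne _ _ _ _ _ _ (Or.inl nz12)⟩
    have ne56 : f5 ≠ f6 := by
      rw [hf5, hf6]; exact hFne _ _ _ _ _ _ (Or.inr nz01)
    rw [hsix, Set.ncard_insert_of_notMem m1 (Set.toFinite _),
      Set.ncard_insert_of_notMem m2 (Set.toFinite _),
      Set.ncard_insert_of_notMem m3 (Set.toFinite _),
      Set.ncard_insert_of_notMem m4 (Set.toFinite _),
      Set.ncard_pair ne56]
  · -- the averaging identity
    intro t
    have fm1 : f1 ∉ ({f2,f3,f4,f5,f6} : Finset (Fin n → ℚ)) := by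
      simp only [Finset.mem_insert, Finset.mem_singleton, hf1, hf2, hf3, hf4, hf5, hf6]
      push_neg
      exact ⟨hFne _ _ _ _ _ _ (Or.inr nz12), hFne _ _ _ _ _ _ (Or.inl nz01),
        hFne _ _ _ _ _ _ (Or.inl nz01), hFne _ _ _ _ _ _ (Or.inl nz02),
        hFne _ _ _ _ _ _ (Or.inl nz02)⟩
    have fm2 : f2 ∉ ({f3,f4,f5,f6} : Finset (Fin n → ℚ)) := by
      simp only [Finset.mem_insert, Finset.mem_singleton, hf2, hf3, hf4, hf5, hf6]
      push_neg
      exact ⟨hFne _ _ _ _ _ _ (Or.inl nz01), hFne _ _ _ _ _ _ (Or.inl nz01),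
        hFne _ _ _ _ _ _ (Or.inl nz02), hFne _ _ _ _ _ _ (Or.inl nz02)⟩
    have fm3 : f3 ∉ ({f4,f5,f6} : Finset (Fin n → ℚ)) := by
      simp only [Finset.mem_insert, Finset.mem_singleton, hf3, hf4, hf5, hf6]
      push_neg
      exact ⟨hFne _ _ _ _ _ _ (Or.inr nz02), hFne _ _ _ _ _ _ (Or.inl nz12),
        hFne _ _ _ _ _ _ (Or.inl nz12)⟩
    have fm4 : f4 ∉ ({f5,f6} : Finset (Fin n → ℚ)) := by
      simp only [Finset.mem_insert, Finset.mem_singleton, hf4, hf5, hf6]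
      push_neg
      exact ⟨hFne _ _ _ _ _ _ (Or.inl nz12), hFne _ _ _ _ _ _ (Or.inl nz12)⟩
    have fm5 : f5 ∉ ({f6} : Finset (Fin n → ℚ)) := by
      simp only [Finset.mem_singleton, hf5, hf6]
      exact hFne _ _ _ _ _ _ (Or.inr nz01)
    have hcoe : cellCodes3I p x i j k z = (↑({f1,f2,f3,f4,f5,f6} : Finset (Fin n → ℚ)) : Set (Fin n → ℚ)) := by
      rw [hsix]; simp
    rw [hcoe, finsum_mem_coe_finset, Finset.sum_insert fm1, Finset.sum_insert fm2,
      Finset.sum_insert fm3, Finset.sum_insert fm4, Finset.sum_insert fm5,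
      Finset.sum_singleton]
    by_cases e1 : t = i
    · subst e1
      rw [hf1, hf2, hf3, hf4, hf5, hf6, hFi, hFi, hFi, hFi, hFi, hFi, hzi]; ring
    by_cases e2 : t = j
    · subst e2
      rw [hf1, hf2, hf3, hf4, hf5, hf6, hFj, hFj, hFj, hFj, hFj, hFj, hzj]; ring
    by_cases e3 : t = k
    · subst e3
      rw [hf1, hf2, hf3, hf4, hf5, hf6, hFk, hFk, hFk, hFk, hFk, hFk, hzk]; ring
    rw [hf1, hf2, hf3, hf4, hf5, hf6, hFo _ _ _ t e1 e2 e3, hFo _ _ _ t e1 e2 e3,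
      hFo _ _ _ t e1 e2 e3, hFo _ _ _ t e1 e2 e3, hFo _ _ _ t e1 e2 e3,
      hFo _ _ _ t e1 e2 e3]
    ring
end
end

section
/- Vertex–edge incidence: let v be a vertex point (2-I or 3-I) and let x be an edge point with edge E = Ω(x). Then v lies in the topological closure of E if and only if δ(v,x) ≤ 2; consequently v does not lie in the closure of E if and only if δ(v,x) > 2. -/
noncomputable section

open Metric
open scoped RealInnerProductSpace

set_option maxHeartbeats 1000000

namespace VE

variable {n : ℕ}

variable {p : Fin n → Pt}

/-- pair comparison weight -/
def g (p : Fin n → Pt) (y : Pt) (a b : Fin n) : ℚ :=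
  if dist y (p a) < dist y (p b) then 1 else if dist y (p b) = dist y (p a) then 1/2 else 0


lemma code_eq_sum (p : Fin n → Pt) (y : Pt) (a : Fin n) :
    code p y a = ∑ b ∈ Finset.univ.erase a, g p y a b := by
  classical
  have h1 : {j : Fin n | j ≠ a ∧ dist y (p a) < dist y (p j)}.ncard
      = ((Finset.univ.erase a).filter (fun j => dist y (p a) < dist y (p j))).card := by
    rw [Set.ncard_eq_toFinset_card']
    congr 1
    ext j
    simp [Finset.mem_filter, and_comm]
  have h2 : {j : Fin n | j ≠ a ∧ dist y (p j) = dist y (p a)}.ncard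
      = ((Finset.univ.erase a).filter (fun j => dist y (p j) = dist y (p a))).card := by
    rw [Set.ncard_eq_toFinset_card']
    congr 1
    ext j
    simp [Finset.mem_filter, and_comm]
  have hg : ∀ b, g p y a b = (if dist y (p a) < dist y (p b) then (1:ℚ) else 0)
      + (if dist y (p b) = dist y (p a) then (1/2:ℚ) else 0) := by
    intro b
    unfold g
    by_cases hlt : dist y (p a) < dist y (p b)
    · have : ¬ dist y (p b) = dist y (p a) := by intro h; rw [h] at hlt; exact lt_irrefl _ hlt
      simp [hlt, this]
    · by_cases he : dist y (p b) = dist y (p a) <;> simp [hlt, he]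
  rw [code, h1, h2]
  rw [Finset.sum_congr rfl (fun b _ => hg b), Finset.sum_add_distrib]
  rw [← Finset.sum_filter, ← Finset.sum_filter, Finset.sum_const, Finset.sum_const]
  simp [mul_comm]


lemma g_lt (h : dist y (p a) < dist y (p b)) : g p y a b = 1 := if_pos h

lemma g_eq (h : dist y (p b) = dist y (p a)) : g p y a b = 1/2 := by
  unfold g
  rw [if_neg (by rw [h]; exact lt_irrefl _), if_pos h]

lemma g_gt (h : dist y (p b) < dist y (p a)) : g p y a b = 0 := by
  unfold g
  rw [if_neg (not_lt_of_gt h), if_neg (ne_of_lt h)]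

lemma g_le_one (p : Fin n → Pt) (y : Pt) (a b : Fin n) : g p y a b ≤ 1 := by
  unfold g; split_ifs <;> norm_num

lemma g_nonneg (p : Fin n → Pt) (y : Pt) (a b : Fin n) : 0 ≤ g p y a b := by
  unfold g; split_ifs <;> norm_num

lemma g_sub_nonneg (hab : dist y (p a) < dist y (p b)) (c : Fin n) :
    0 ≤ g p y a c - g p y b c := by
  rcases lt_trichotomy (dist y (p a)) (dist y (p c)) with h | h | h
  · rw [g_lt h]
    have := g_le_one p y b c
    linarith
  · rw [g_eq h.symm, g_gt (h ▸ hab)]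
    norm_num
  · rw [g_gt h, g_gt (lt_trans h hab)]; norm_num

lemma g_sub_half (hab : dist y (p a) < dist y (p b)) {t : Fin n}
    (ht : dist y (p t) = dist y (p a) ∨ dist y (p t) = dist y (p b)) :
    g p y a t - g p y b t = 1/2 := by
  rcases ht with h | h
  · rw [g_eq h, g_gt (show dist y (p t) < dist y (p b) from h ▸ hab)]
    norm_num
  · rw [g_lt (show dist y (p a) < dist y (p t) from h ▸ hab), g_eq h]
    norm_num

lemma gapF (F : Finset (Fin n)) (hab : dist y (p a) < dist y (p b))
    (haF : a ∉ F) (hbF : b ∉ F)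
    (hF : ∀ t ∈ F, dist y (p t) = dist y (p a) ∨ dist y (p t) = dist y (p b)) :
    code p y b + 1 + (F.card : ℚ)/2 ≤ code p y a := by
  classical
  have hne : a ≠ b := by rintro rfl; exact lt_irrefl _ hab
  set S : Finset (Fin n) := (Finset.univ.erase a).erase b with hS
  have hbS : b ∉ S := Finset.notMem_erase _ _
  have haS : a ∉ S := fun h => Finset.notMem_erase a Finset.univ (Finset.mem_of_mem_erase h)
  have hea : Finset.univ.erase a = insert b S := by
    rw [hS, Finset.insert_erase (Finset.mem_erase.mpr ⟨hne.symm, Finset.mem_univ b⟩)]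
  have heb : Finset.univ.erase b = insert a ((Finset.univ.erase b).erase a) := by
    rw [Finset.insert_erase (Finset.mem_erase.mpr ⟨hne, Finset.mem_univ a⟩)]
  have hSS : (Finset.univ.erase b).erase a = S := by
    rw [hS, Finset.erase_right_comm]
  have hca : code p y a = g p y a b + ∑ c ∈ S, g p y a c := by
    rw [code_eq_sum, hea, Finset.sum_insert hbS]
  have hcb : code p y b = g p y b a + ∑ c ∈ S, g p y b c := by
    rw [code_eq_sum, heb, hSS, Finset.sum_insert haS]
  have hgab : g p y a b = 1 := by unfold g; simp [hab]
  have hgba : g p y b a = 0 := by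
    unfold g
    have h1 : ¬ dist y (p b) < dist y (p a) := not_lt_of_gt hab
    have h2 : ¬ dist y (p a) = dist y (p b) := ne_of_lt hab
    simp [h1, h2]
  have hFS : F ⊆ S := by
    intro t ht
    exact Finset.mem_erase.mpr ⟨fun h => hbF (h ▸ ht), Finset.mem_erase.mpr ⟨fun h => haF (h ▸ ht), Finset.mem_univ t⟩⟩
  have hsum : (F.card : ℚ)/2 ≤ ∑ c ∈ S, (g p y a c - g p y b c) := by
    have h1 : ∑ c ∈ F, (g p y a c - g p y b c) = (F.card : ℚ)/2 := by
      rw [Finset.sum_congr rfl (fun t ht => g_sub_half hab (hF t ht))]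
      simp [Finset.sum_const]; ring
    rw [← h1]
    exact Finset.sum_le_sum_of_subset_of_nonneg hFS (fun c _ _ => g_sub_nonneg hab c)
  have := Finset.sum_sub_distrib (f := g p y a) (g := g p y b) (s := S)
  rw [this] at hsum
  rw [hca, hcb, hgab, hgba]
  linarith

lemma code_eq_of_dist_eq (hab : dist y (p a) = dist y (p b)) :
    code p y a = code p y b := by
  classical
  by_cases hne : a = b
  · rw [hne]
  · set S : Finset (Fin n) := (Finset.univ.erase a).erase b with hS
    have hbS : b ∉ S := Finset.notMem_erase _ _
    have haS : a ∉ S := fun h => Finset.notMem_erase a Finset.univ (Finset.mem_of_mem_erase h)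
    have hea : Finset.univ.erase a = insert b S := by
      rw [hS, Finset.insert_erase (Finset.mem_erase.mpr ⟨Ne.symm hne, Finset.mem_univ b⟩)]
    have heb : Finset.univ.erase b = insert a ((Finset.univ.erase b).erase a) := by
      rw [Finset.insert_erase (Finset.mem_erase.mpr ⟨hne, Finset.mem_univ a⟩)]
    have hSS : (Finset.univ.erase b).erase a = S := by rw [hS, Finset.erase_right_comm]
    rw [code_eq_sum, code_eq_sum, hea, heb, hSS, Finset.sum_insert hbS, Finset.sum_insert haS]
    have h1 : g p y a b = g p y b a := by
      rw [g_eq hab.symm, g_eq hab]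
    have h2 : ∀ c ∈ S, g p y a c = g p y b c := by
      intro c _
      unfold g
      rw [hab]
    rw [h1, Finset.sum_congr rfl h2]


lemma gap1 {y : Pt} {a b : Fin n} (hab : dist y (p a) < dist y (p b)) :
    code p y b + 1 ≤ code p y a := by
  have := gapF (p := p) ∅ hab (Finset.notMem_empty a) (Finset.notMem_empty b) (by simp)
  simpa using this

/-- Same code implies same distance comparisons. -/
lemma dist_lt_of_code_eq {y z : Pt} (h : ∀ c, code p y c = code p z c) {a b : Fin n}
    (hab : dist y (p a) < dist y (p b)) : dist z (p a) < dist z (p b) := by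
  have h1 := gap1 hab
  rcases lt_trichotomy (dist z (p a)) (dist z (p b)) with hc | hc | hc
  · exact hc
  · have := code_eq_of_dist_eq hc
    have ha := h a; have hb := h b
    linarith
  · have h2 := gap1 hc
    have ha := h a; have hb := h b
    linarith

lemma dist_eq_of_code_eq {y z : Pt} (h : ∀ c, code p y c = code p z c) {a b : Fin n}
    (hab : dist y (p a) = dist y (p b)) : dist z (p a) = dist z (p b) := by
  have h1 := code_eq_of_dist_eq hab
  rcases lt_trichotomy (dist z (p a)) (dist z (p b)) with hc | hc | hc
  · have h2 := gap1 hc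
    have ha := h a; have hb := h b
    linarith
  · exact hc
  · have h2 := gap1 hc
    have ha := h a; have hb := h b
    linarith

/-- Closure direction: if `v` is in the closure of the particle of an edge point `x`
with tie `{i,j}`, then `v` ties `i,j` and respects all strict comparisons of `x`. -/
lemma cond_of_mem_closure {x v : Pt} {i j : Fin n}
    (hij : dist x (p i) = dist x (p j))
    (hv : v ∈ closure (particle p x)) :
    dist v (p i) = dist v (p j) ∧
      ∀ a b, dist x (p a) < dist x (p b) → dist v (p a) ≤ dist v (p b) := by
  constructor
  · have hsub : particle p x ⊆ {y : Pt | dist y (p i) = dist y (p j)} := by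
      intro y hy
      exact dist_eq_of_code_eq (fun c => (congrFun hy c).symm) hij
    have hcl : IsClosed {y : Pt | dist y (p i) = dist y (p j)} :=
      isClosed_eq (continuous_id.dist continuous_const) (continuous_id.dist continuous_const)
    exact closure_minimal hsub hcl hv
  · intro a b hab
    have hsub : particle p x ⊆ {y : Pt | dist y (p a) ≤ dist y (p b)} := by
      intro y hy
      exact le_of_lt (dist_lt_of_code_eq (fun c => (congrFun hy c).symm) hab)
    have hcl : IsClosed {y : Pt | dist y (p a) ≤ dist y (p b)} :=
      isClosed_le (continuous_id.dist continuous_const) (continuous_id.dist continuous_const)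
    exact closure_minimal hsub hcl hv

lemma aff (x v q q' : Pt) (t : ℝ) :
    dist (x + t • (v - x)) q' ^ 2 - dist (x + t • (v - x)) q ^ 2
      = (1-t) * (dist x q' ^ 2 - dist x q ^ 2) + t * (dist v q' ^ 2 - dist v q ^ 2) := by
  have key : ∀ (z w : Pt), dist z w ^ 2 = ‖z‖ ^ 2 - 2 * ⟪z, w⟫ + ‖w‖ ^ 2 := by
    intro z w
    rw [dist_eq_norm]
    exact norm_sub_sq_real z w
  have h1 : ∀ w : Pt, ⟪x + t • (v - x), w⟫ = ⟪x, w⟫ + t * (⟪v, w⟫ - ⟪x, w⟫) := by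
    intro w
    rw [inner_add_left, real_inner_smul_left, inner_sub_left]
  rw [key, key, key, key, key, key, h1, h1]
  ring

lemma seg_lt {x v : Pt} {t : ℝ} (ht0 : 0 ≤ t) (ht1 : t < 1) {q q' : Pt}
    (hx : dist x q < dist x q') (hv : dist v q ≤ dist v q') :
    dist (x + t • (v - x)) q < dist (x + t • (v - x)) q' := by
  have h := aff x v q q' t
  have d1 := dist_nonneg (x := x) (y := q)
  have d2 := dist_nonneg (x := x) (y := q')
  have d3 := dist_nonneg (x := v) (y := q)
  have d4 := dist_nonneg (x := v) (y := q')
  have d5 := dist_nonneg (x := x + t • (v - x)) (y := q)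
  have d6 := dist_nonneg (x := x + t • (v - x)) (y := q')
  have hx2 : dist x q ^ 2 < dist x q' ^ 2 := by nlinarith
  have hv2 : dist v q ^ 2 ≤ dist v q' ^ 2 := by nlinarith
  have e1 : (0:ℝ) < (1 - t) * (dist x q' ^ 2 - dist x q ^ 2) :=
    mul_pos (by linarith) (by linarith)
  have e2 : (0:ℝ) ≤ t * (dist v q' ^ 2 - dist v q ^ 2) :=
    mul_nonneg ht0 (by linarith)
  have hy2 : dist (x + t • (v - x)) q ^ 2 < dist (x + t • (v - x)) q' ^ 2 := by linarith
  by_contra hle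
  push_neg at hle
  nlinarith

lemma seg_eq {x v : Pt} {t : ℝ} {q q' : Pt}
    (hx : dist x q = dist x q') (hv : dist v q = dist v q') :
    dist (x + t • (v - x)) q = dist (x + t • (v - x)) q' := by
  have h := aff x v q q' t
  rw [hx, hv] at h
  have h2 : dist (x + t • (v - x)) q' ^ 2 = dist (x + t • (v - x)) q ^ 2 := by
    rw [sub_self, sub_self] at h
    linarith [h]
  have d5 := dist_nonneg (x := x + t • (v - x)) (y := q)
  have d6 := dist_nonneg (x := x + t • (v - x)) (y := q')
  exact ((sq_eq_sq₀ d5 d6).mp h2.symm)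

/-- Segment direction: under condition C, points on the open segment from x to v
are in the particle of x. -/
lemma seg_mem_particle {x v : Pt} {i j : Fin n}
    (hxe : Tie p x i j ∧ ∀ u w, Tie p x u w → ({u, w} : Set (Fin n)) = {i, j})
    (hC1 : dist v (p i) = dist v (p j))
    (hC2 : ∀ a b, dist x (p a) < dist x (p b) → dist v (p a) ≤ dist v (p b))
    {t : ℝ} (ht0 : 0 ≤ t) (ht1 : t < 1) :
    x + t • (v - x) ∈ particle p x := by
  set y := x + t • (v - x) with hy
  have tie_eq : ∀ a b : Fin n, a ≠ b → dist x (p a) = dist x (p b) → dist v (p a) = dist v (p b) := by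
    intro a b hne he
    have := hxe.2 a b ⟨hne, he⟩
    rcases Set.pair_eq_pair_iff.mp this with ⟨h1, h2⟩ | ⟨h1, h2⟩
    · rw [h1, h2]; exact hC1
    · rw [h1, h2]; exact hC1.symm
  have cmp_lt : ∀ a b : Fin n, dist y (p a) < dist y (p b) ↔ dist x (p a) < dist x (p b) := by
    intro a b
    constructor
    · intro hyab
      rcases lt_trichotomy (dist x (p a)) (dist x (p b)) with hc | hc | hc
      · exact hc
      · by_cases hne : a = b
        · subst hne; exact absurd hyab (lt_irrefl _)
        · have := seg_eq (x := x) (v := v) (t := t) hc (tie_eq a b hne hc)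
          rw [← hy] at this
          exact absurd (this ▸ hyab) (lt_irrefl _)
      · have := seg_lt ht0 ht1 hc (hC2 b a hc)
        rw [← hy] at this
        exact absurd (lt_trans hyab this) (lt_irrefl _)
    · intro hc
      have := seg_lt ht0 ht1 hc (hC2 a b hc)
      rw [← hy] at this
      exact this
  have cmp_eq : ∀ a b : Fin n, dist y (p a) = dist y (p b) ↔ dist x (p a) = dist x (p b) := by
    intro a b
    constructor
    · intro hyab
      rcases lt_trichotomy (dist x (p a)) (dist x (p b)) with hc | hc | hc
      · exact absurd ((cmp_lt a b).mpr hc) (by rw [hyab]; exact lt_irrefl _)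
      · exact hc
      · exact absurd ((cmp_lt b a).mpr hc) (by rw [hyab]; exact lt_irrefl _)
    · intro hc
      by_cases hne : a = b
      · subst hne; rfl
      · have := seg_eq (x := x) (v := v) (t := t) hc (tie_eq a b hne hc)
        rw [← hy] at this
        exact this
  show code p y = code p x
  funext a
  have hset1 : {c : Fin n | c ≠ a ∧ dist y (p a) < dist y (p c)}
      = {c : Fin n | c ≠ a ∧ dist x (p a) < dist x (p c)} := by
    ext c
    simp only [Set.mem_setOf_eq]
    exact and_congr_right (fun _ => cmp_lt a c)
  have hset2 : {c : Fin n | c ≠ a ∧ dist y (p c) = dist y (p a)}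
      = {c : Fin n | c ≠ a ∧ dist x (p c) = dist x (p a)} := by
    ext c
    simp only [Set.mem_setOf_eq]
    exact and_congr_right (fun _ => cmp_eq c a)
  unfold code
  rw [hset1, hset2]

lemma mem_closure_of_cond {x v : Pt} {i j : Fin n}
    (hxe : Tie p x i j ∧ ∀ u w, Tie p x u w → ({u, w} : Set (Fin n)) = {i, j})
    (hC1 : dist v (p i) = dist v (p j))
    (hC2 : ∀ a b, dist x (p a) < dist x (p b) → dist v (p a) ≤ dist v (p b)) :
    v ∈ closure (particle p x) := by
  have hmem : ∀ k : ℕ, x + ((k:ℝ)/(k+1)) • (v - x) ∈ particle p x := by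
    intro k
    apply seg_mem_particle hxe hC1 hC2
    · positivity
    · rw [div_lt_one (by positivity)]
      linarith
  have htend : Filter.Tendsto (fun k : ℕ => x + ((k:ℝ)/(k+1)) • (v - x)) Filter.atTop (nhds v) := by
    have h1 : Filter.Tendsto (fun k : ℕ => ((k:ℝ)/(k+1))) Filter.atTop (nhds 1) := by
      have := tendsto_natCast_div_add_atTop (𝕜 := ℝ) 1
      simpa using this
    have h2 : Filter.Tendsto (fun k : ℕ => x + ((k:ℝ)/(k+1)) • (v - x)) Filter.atTop
        (nhds (x + (1:ℝ) • (v - x))) :=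
      Filter.Tendsto.const_add _ (h1.smul_const _)
    simpa using h2
  exact mem_closure_of_tendsto htend (Filter.Eventually.of_forall hmem)


lemma abs_code_sub_ge_one {y : Pt} {a b : Fin n}
    (hd : dist y (p a) ≠ dist y (p b)) : 1 ≤ |code p y a - code p y b| := by
  rcases lt_or_gt_of_ne hd with h | h
  · have := gap1 h
    rw [abs_of_nonneg (by linarith)]; linarith
  · have := gap1 h
    rw [abs_of_nonpos (by linarith)]; linarith

/-- generic: sum over an explicit finset is below the full sum -/
lemma sum_coords_le (F : Finset (Fin n)) (f : Fin n → ℚ) :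
    ∑ a ∈ F, |f a| ≤ ∑ a, |f a| :=
  Finset.sum_le_sum_of_subset_of_nonneg (F.subset_univ) (fun a _ _ => abs_nonneg _)

lemma two_le_sum (f : Fin n → ℚ) {a b : Fin n} (hab : a ≠ b) :
    |f a| + |f b| ≤ ∑ c, |f c| := by
  have h : ∑ c ∈ ({a, b} : Finset (Fin n)), |f c| = |f a| + |f b| := by
    rw [Finset.sum_insert (by simp [hab]), Finset.sum_singleton]
  rw [← h]; exact sum_coords_le _ f

lemma four_le_sum (f : Fin n → ℚ) {a b c d : Fin n}
    (h1 : a ≠ b) (h2 : a ≠ c) (h3 : a ≠ d) (h4 : b ≠ c) (h5 : b ≠ d) (h6 : c ≠ d) :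
    |f a| + |f b| + |f c| + |f d| ≤ ∑ e, |f e| := by
  have h : ∑ e ∈ ({a, b, c, d} : Finset (Fin n)), |f e| = |f a| + |f b| + |f c| + |f d| := by
    rw [Finset.sum_insert (by simp [h1, h2, h3]), Finset.sum_insert (by simp [h4, h5]),
      Finset.sum_insert (by simp [h6]), Finset.sum_singleton]
    ring
  rw [← h]; exact sum_coords_le _ f

lemma five_le_sum (f : Fin n → ℚ) {a b c d e : Fin n}
    (h1 : a ≠ b) (h2 : a ≠ c) (h3 : a ≠ d) (h4 : a ≠ e) (h5 : b ≠ c) (h6 : b ≠ d)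
    (h7 : b ≠ e) (h8 : c ≠ d) (h9 : c ≠ e) (h10 : d ≠ e) :
    |f a| + |f b| + |f c| + |f d| + |f e| ≤ ∑ u, |f u| := by
  have h : ∑ u ∈ ({a, b, c, d, e} : Finset (Fin n)), |f u|
      = |f a| + |f b| + |f c| + |f d| + |f e| := by
    rw [Finset.sum_insert (by simp [h1, h2, h3, h4]), Finset.sum_insert (by simp [h5, h6, h7]),
      Finset.sum_insert (by simp [h8, h9]), Finset.sum_insert (by simp [h10]),
      Finset.sum_singleton]
    ring
  rw [← h]; exact sum_coords_le _ f

lemma six_le_sum (f : Fin n → ℚ) {a b c d e u : Fin n}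
    (h1 : a ≠ b) (h2 : a ≠ c) (h3 : a ≠ d) (h4 : a ≠ e) (h4' : a ≠ u)
    (h5 : b ≠ c) (h6 : b ≠ d) (h7 : b ≠ e) (h7' : b ≠ u)
    (h8 : c ≠ d) (h9 : c ≠ e) (h9' : c ≠ u) (h10 : d ≠ e) (h10' : d ≠ u) (h11 : e ≠ u) :
    |f a| + |f b| + |f c| + |f d| + |f e| + |f u| ≤ ∑ w, |f w| := by
  have h : ∑ w ∈ ({a, b, c, d, e, u} : Finset (Fin n)), |f w|
      = |f a| + |f b| + |f c| + |f d| + |f e| + |f u| := by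
    rw [Finset.sum_insert (by simp [h1, h2, h3, h4, h4']),
      Finset.sum_insert (by simp [h5, h6, h7, h7']),
      Finset.sum_insert (by simp [h8, h9, h9']), Finset.sum_insert (by simp [h10, h10']),
      Finset.sum_insert (by simp [h11]), Finset.sum_singleton]
    ring
  rw [← h]; exact sum_coords_le _ f

/-- pair bound -/
lemma pair_bd (s r : Fin n → ℚ) (a b : Fin n) :
    |(s a - s b) - (r a - r b)| ≤ |s a - r a| + |s b - r b| := by
  have h : (s a - r a) - (s b - r b) = (s a - s b) - (r a - r b) := by ring
  calc |(s a - s b) - (r a - r b)| = |(s a - r a) - (s b - r b)| := by rw [h]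
    _ ≤ |s a - r a| + |s b - r b| := abs_sub _ _

/-- numeric gaps -/
lemma int_half_gap (m m' : ℕ) : (1/2 : ℚ) ≤ |((m : ℚ) + 1) - ((m' : ℚ) + 1/2)| := by
  rcases le_or_gt m' m with h | h
  · have : (m' : ℚ) ≤ m := by exact_mod_cast h
    rw [abs_of_nonneg (by linarith)]; linarith
  · have : (m : ℚ) + 1 ≤ m' := by exact_mod_cast h
    rw [abs_of_nonpos (by linarith)]; linarith

lemma half_int_gap (m m' : ℕ) : (1/2 : ℚ) ≤ |((m : ℚ) + 1/2) - (m' : ℚ)| := by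
  rcases le_or_gt m' m with h | h
  · have : (m' : ℚ) ≤ m := by exact_mod_cast h
    rw [abs_of_nonneg (by linarith)]; linarith
  · have : (m : ℚ) + 1 ≤ m' := by exact_mod_cast h
    rw [abs_of_nonpos (by linarith)]; linarith

lemma spread3 (c q1 q2 q3 : ℚ) (h12 : 1 ≤ |q1 - q2|) (h13 : 1 ≤ |q1 - q3|)
    (h23 : 1 ≤ |q2 - q3|) : 2 ≤ |c - q1| + |c - q2| + |c - q3| := by
  have a1 := le_abs_self (c - q1); have a1' := neg_abs_le (c - q1)
  have a2 := le_abs_self (c - q2); have a2' := neg_abs_le (c - q2)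
  have a3 := le_abs_self (c - q3); have a3' := neg_abs_le (c - q3)
  rcases abs_cases (q1 - q2) with ⟨e1, _⟩ | ⟨e1, _⟩ <;>
    rcases abs_cases (q1 - q3) with ⟨e2, _⟩ | ⟨e2, _⟩ <;>
    rcases abs_cases (q2 - q3) with ⟨e3, _⟩ | ⟨e3, _⟩ <;>
    rw [e1] at h12 <;> rw [e2] at h13 <;> rw [e3] at h23 <;> linarith

/-- code value forms from tie-set descriptions -/
lemma code_tie0 {y : Pt} {a : Fin n}
    (h : ∀ c, c ≠ a → dist y (p c) ≠ dist y (p a)) : ∃ m : ℕ, code p y a = m := by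
  have hT : {j : Fin n | j ≠ a ∧ dist y (p j) = dist y (p a)} = ∅ := by
    ext c; simp only [Set.mem_setOf_eq, Set.mem_empty_iff_false, iff_false, not_and]
    exact h c
  refine ⟨{j : Fin n | j ≠ a ∧ dist y (p a) < dist y (p j)}.ncard, ?_⟩
  rw [code, hT]
  simp

lemma code_tie1 {y : Pt} {a t : Fin n} (htne : t ≠ a) (ht : dist y (p t) = dist y (p a))
    (h : ∀ c, c ≠ a → dist y (p c) = dist y (p a) → c = t) :
    ∃ m : ℕ, code p y a = m + 1/2 := by
  have hT : {j : Fin n | j ≠ a ∧ dist y (p j) = dist y (p a)} = {t} := by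
    ext c
    simp only [Set.mem_setOf_eq, Set.mem_singleton_iff]
    constructor
    · rintro ⟨h1, h2⟩; exact h c h1 h2
    · rintro rfl; exact ⟨htne, ht⟩
  refine ⟨{j : Fin n | j ≠ a ∧ dist y (p a) < dist y (p j)}.ncard, ?_⟩
  rw [code, hT]
  simp

lemma code_tie2 {y : Pt} {a t u : Fin n} (htu : t ≠ u) (htne : t ≠ a) (hune : u ≠ a)
    (ht : dist y (p t) = dist y (p a)) (hu : dist y (p u) = dist y (p a))
    (h : ∀ c, c ≠ a → dist y (p c) = dist y (p a) → c = t ∨ c = u) :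
    ∃ m : ℕ, code p y a = m + 1 := by
  have hT : {j : Fin n | j ≠ a ∧ dist y (p j) = dist y (p a)} = {t, u} := by
    ext c
    simp only [Set.mem_setOf_eq, Set.mem_insert_iff, Set.mem_singleton_iff]
    constructor
    · rintro ⟨h1, h2⟩; exact h c h1 h2
    · rintro (rfl | rfl)
      · exact ⟨htne, ht⟩
      · exact ⟨hune, hu⟩
  refine ⟨{j : Fin n | j ≠ a ∧ dist y (p a) < dist y (p j)}.ncard, ?_⟩
  rw [code, hT, Set.ncard_pair htu]
  norm_num


lemma twoB (s r : Fin n → ℚ) {a b : Fin n} (hab : a ≠ b) :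
    |s a - r a| + |s b - r b| ≤ ∑ c, |s c - r c| := by
  have h : ∑ c ∈ ({a, b} : Finset (Fin n)), |s c - r c| = |s a - r a| + |s b - r b| := by
    rw [Finset.sum_insert (by simp [hab]), Finset.sum_singleton]
  rw [← h]; exact sum_coords_le _ _

lemma fourB (s r : Fin n → ℚ) {a b c d : Fin n}
    (h1 : a ≠ b) (h2 : a ≠ c) (h3 : a ≠ d) (h4 : b ≠ c) (h5 : b ≠ d) (h6 : c ≠ d) :
    |s a - r a| + |s b - r b| + |s c - r c| + |s d - r d| ≤ ∑ e, |s e - r e| := by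
  have h : ∑ e ∈ ({a, b, c, d} : Finset (Fin n)), |s e - r e|
      = |s a - r a| + |s b - r b| + |s c - r c| + |s d - r d| := by
    rw [Finset.sum_insert (by simp [h1, h2, h3]), Finset.sum_insert (by simp [h4, h5]),
      Finset.sum_insert (by simp [h6]), Finset.sum_singleton]
    ring
  rw [← h]; exact sum_coords_le _ _

lemma fiveB (s r : Fin n → ℚ) {a b c d e : Fin n}
    (h1 : a ≠ b) (h2 : a ≠ c) (h3 : a ≠ d) (h4 : a ≠ e) (h5 : b ≠ c) (h6 : b ≠ d)
    (h7 : b ≠ e) (h8 : c ≠ d) (h9 : c ≠ e) (h10 : d ≠ e) :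
    |s a - r a| + |s b - r b| + |s c - r c| + |s d - r d| + |s e - r e| ≤ ∑ u, |s u - r u| := by
  have h : ∑ u ∈ ({a, b, c, d, e} : Finset (Fin n)), |s u - r u|
      = |s a - r a| + |s b - r b| + |s c - r c| + |s d - r d| + |s e - r e| := by
    rw [Finset.sum_insert (by simp [h1, h2, h3, h4]), Finset.sum_insert (by simp [h5, h6, h7]),
      Finset.sum_insert (by simp [h8, h9]), Finset.sum_insert (by simp [h10]),
      Finset.sum_singleton]
    ring
  rw [← h]; exact sum_coords_le _ _

lemma sixB (s r : Fin n → ℚ) {a b c d e u : Fin n}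
    (h1 : a ≠ b) (h2 : a ≠ c) (h3 : a ≠ d) (h4 : a ≠ e) (h4' : a ≠ u)
    (h5 : b ≠ c) (h6 : b ≠ d) (h7 : b ≠ e) (h7' : b ≠ u)
    (h8 : c ≠ d) (h9 : c ≠ e) (h9' : c ≠ u) (h10 : d ≠ e) (h10' : d ≠ u) (h11 : e ≠ u) :
    |s a - r a| + |s b - r b| + |s c - r c| + |s d - r d| + |s e - r e| + |s u - r u|
      ≤ ∑ w, |s w - r w| := by
  have h : ∑ w ∈ ({a, b, c, d, e, u} : Finset (Fin n)), |s w - r w|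
      = |s a - r a| + |s b - r b| + |s c - r c| + |s d - r d| + |s e - r e| + |s u - r u| := by
    rw [Finset.sum_insert (by simp [h1, h2, h3, h4, h4']),
      Finset.sum_insert (by simp [h5, h6, h7, h7']),
      Finset.sum_insert (by simp [h8, h9, h9']), Finset.sum_insert (by simp [h10, h10']),
      Finset.sum_insert (by simp [h11]), Finset.sum_singleton]
    ring
  rw [← h]; exact sum_coords_le _ _

lemma pair_eq_cases {a b c d : Fin n} (h : ({a, b} : Set (Fin n)) = {c, d}) :
    (a = c ∧ b = d) ∨ (a = d ∧ b = c) := Set.pair_eq_pair_iff.mp h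

lemma third_elem {t1 t2 t3 i j : Fin n} (h12 : t1 ≠ t2) (h13 : t1 ≠ t3) (h23 : t2 ≠ t3)
    (hi : i = t1 ∨ i = t2 ∨ i = t3) (hj : j = t1 ∨ j = t2 ∨ j = t3) (hij : i ≠ j) :
    ∃ k, k ≠ i ∧ k ≠ j ∧ (k = t1 ∨ k = t2 ∨ k = t3) ∧
      (∀ c, (c = t1 ∨ c = t2 ∨ c = t3) → c = i ∨ c = j ∨ c = k) := by
  rcases hi with hi | hi | hi <;> rcases hj with hj | hj | hj
  · exact absurd (hi.trans hj.symm) hij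
  · refine ⟨t3, by rw [hi]; exact h13.symm, by rw [hj]; exact h23.symm, by tauto, ?_⟩
    rintro c (rfl | rfl | rfl)
    exacts [Or.inl hi.symm, Or.inr (Or.inl hj.symm), Or.inr (Or.inr rfl)]
  · refine ⟨t2, by rw [hi]; exact h12.symm, by rw [hj]; exact h23, by tauto, ?_⟩
    rintro c (rfl | rfl | rfl)
    exacts [Or.inl hi.symm, Or.inr (Or.inr rfl), Or.inr (Or.inl hj.symm)]
  · refine ⟨t3, by rw [hi]; exact h23.symm, by rw [hj]; exact h13.symm, by tauto, ?_⟩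
    rintro c (rfl | rfl | rfl)
    exacts [Or.inr (Or.inl hj.symm), Or.inl hi.symm, Or.inr (Or.inr rfl)]
  · exact absurd (hi.trans hj.symm) hij
  · refine ⟨t1, by rw [hi]; exact h12, by rw [hj]; exact h13, by tauto, ?_⟩
    rintro c (rfl | rfl | rfl)
    exacts [Or.inr (Or.inr rfl), Or.inl hi.symm, Or.inr (Or.inl hj.symm)]
  · refine ⟨t2, by rw [hi]; exact h23, by rw [hj]; exact h12.symm, by tauto, ?_⟩
    rintro c (rfl | rfl | rfl)
    exacts [Or.inr (Or.inl hj.symm), Or.inr (Or.inr rfl), Or.inl hi.symm]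
  · refine ⟨t1, by rw [hi]; exact h13, by rw [hj]; exact h12, by tauto, ?_⟩
    rintro c (rfl | rfl | rfl)
    exacts [Or.inr (Or.inr rfl), Or.inr (Or.inl hj.symm), Or.inl hi.symm]
  · exact absurd (hi.trans hj.symm) hij

lemma caseB {x v : Pt} {i j : Fin n} (hij : i ≠ j)
    (hxij : dist x (p i) = dist x (p j))
    (hxuniq : ∀ u w, Tie p x u w → ({u, w} : Set (Fin n)) = {i, j})
    (hv : Vertex2I p v ∨ Vertex3I p v)
    (hvij : dist v (p i) = dist v (p j)) {a b : Fin n}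
    (hxab : dist x (p a) < dist x (p b)) (hvba : dist v (p b) < dist v (p a)) :
    5/2 ≤ ∑ c, |code p v c - code p x c| := by
  classical
  have hab : a ≠ b := by rintro rfl; exact lt_irrefl _ hxab
  have hpairab : ¬ (({a, b} : Set (Fin n)) = ({i, j} : Set (Fin n))) := by
    intro h
    rcases pair_eq_cases h with ⟨h1, h2⟩ | ⟨h1, h2⟩
    · rw [h1, h2] at hxab; exact absurd hxij (ne_of_lt hxab)
    · rw [h1, h2] at hxab; exact absurd hxij.symm (ne_of_lt hxab)
  have hrgap : code p x b + 1 ≤ code p x a := gap1 hxab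
  have hsgap : code p v a + 1 ≤ code p v b := gap1 hvba
  have key : ∀ q : ℚ, q ≤ (code p x a - code p x b) + (code p v b - code p v a) →
      q ≤ |code p v a - code p x a| + |code p v b - code p x b| := by
    intro q hq
    have h1 : q ≤ |(code p v a - code p v b) - (code p x a - code p x b)| := by
      rw [abs_of_nonpos (by linarith)]; linarith
    exact le_trans h1 (pair_bd (code p v) (code p x) a b)
  by_cases hBi : a = i ∨ a = j ∨ b = i ∨ b = j
  · have hrgap' : code p x b + 1 + 1/2 ≤ code p x a := by
      rcases hBi with h | h | h | h
      · have hbj : b ≠ j := by rintro rfl; exact hpairab (by rw [h])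
        have hxab' : dist x (p i) < dist x (p b) := by rw [← h]; exact hxab
        have := gapF (y := x) {j} hxab' (by simp [hij]) (by simp [hbj])
          (by intro t ht; simp only [Finset.mem_singleton] at ht; subst ht; exact Or.inl hxij.symm)
        rw [h]
        simpa using this
      · have hbi : b ≠ i := by rintro rfl; exact hpairab (by rw [h]; exact Set.pair_comm _ _)
        have hxab' : dist x (p j) < dist x (p b) := by rw [← h]; exact hxab
        have := gapF (y := x) {i} hxab' (by simp [hij.symm]) (by simp [hbi])
          (by intro t ht; simp only [Finset.mem_singleton] at ht; subst ht; exact Or.inl hxij)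
        rw [h]
        simpa using this
      · have haj : a ≠ j := by rintro rfl; exact hpairab (by rw [h]; exact Set.pair_comm _ _)
        have hxab' : dist x (p a) < dist x (p i) := by rw [← h]; exact hxab
        have := gapF (y := x) {j} hxab' (by simp [haj]) (by simp [hij])
          (by intro t ht; simp only [Finset.mem_singleton] at ht; subst ht; exact Or.inr hxij.symm)
        rw [h]
        simpa using this
      · have hai : a ≠ i := by rintro rfl; exact hpairab (by rw [h])
        have hxab' : dist x (p a) < dist x (p j) := by rw [← h]; exact hxab
        have := gapF (y := x) {i} hxab' (by simp [hai]) (by simp [hij.symm])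
          (by intro t ht; simp only [Finset.mem_singleton] at ht; subst ht; exact Or.inr hxij)
        rw [h]
        simpa using this
    have h1 := key (5/2) (by linarith)
    linarith [twoB (code p v) (code p x) hab, abs_nonneg (code p v a - code p x a),
      abs_nonneg (code p v b - code p x b), h1]
  · push_neg at hBi
    obtain ⟨hai, haj, hbi, hbj⟩ := hBi
    by_cases hT : ∃ t, t ≠ a ∧ t ≠ b ∧ (dist v (p t) = dist v (p b) ∨ dist v (p t) = dist v (p a))
    · obtain ⟨t, hta, htb, ht⟩ := hT
      have hsgap' : code p v a + 1 + 1/2 ≤ code p v b := by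
        have := gapF (y := v) {t} hvba
          (by simp only [Finset.mem_singleton]; exact Ne.symm htb)
          (by simp only [Finset.mem_singleton]; exact Ne.symm hta)
          (by intro u hu; simp only [Finset.mem_singleton] at hu; subst hu; exact ht)
        simpa using this
      have h1 := key (5/2) (by linarith)
      linarith [twoB (code p v) (code p x) hab, h1]
    · push_neg at hT
      have huntied : ∀ t, t ≠ a → t ≠ b →
          dist v (p t) ≠ dist v (p b) ∧ dist v (p t) ≠ dist v (p a) := by
        intro t h1 h2
        exact ⟨fun h => (hT t h1 h2).1 h, fun h => (hT t h1 h2).2 h⟩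
      have h1 := key 2 (by linarith)
      rcases hv with ⟨c1, d1, c2, d2, e1, e2, e3, e4, e5, e6, tie1, tie2, huniq⟩ |
        ⟨t1, t2, t3, h12, h13, h23, hch⟩
      · -- 2-I vertex
        have hmem : ∀ c d : Fin n, Tie p v c d → c ≠ a ∧ c ≠ b := by
          intro c d hcd
          constructor
          · intro hca
            have hd1 : d ≠ a := fun h => hcd.1 (hca.trans h.symm)
            have hd2 : d ≠ b := by
              intro h
              rw [hca, h] at hcd
              exact absurd hcd.2.symm (ne_of_lt hvba)
            apply absurd _ (huntied d hd1 hd2).2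
            rw [← hca]
            exact hcd.2.symm
          · intro hcb
            have hd1 : d ≠ b := fun h => hcd.1 (hcb.trans h.symm)
            have hd2 : d ≠ a := by
              intro h
              rw [hcb, h] at hcd
              exact absurd hcd.2 (ne_of_lt hvba)
            apply absurd _ (huntied d hd2 hd1).1
            rw [← hcb]
            exact hcd.2.symm
        have hc1 := hmem c1 d1 tie1
        have hd1 := hmem d1 c1 ⟨tie1.1.symm, tie1.2.symm⟩
        have hc2 := hmem c2 d2 tie2
        have hd2 := hmem d2 c2 ⟨tie2.1.symm, tie2.2.symm⟩
        have hijpair := huniq i j ⟨hij, hvij⟩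
        have main : ∃ u w : Fin n, u ≠ w ∧ u ≠ a ∧ u ≠ b ∧ w ≠ a ∧ w ≠ b ∧
            dist v (p u) = dist v (p w) ∧ ({u, w} : Set (Fin n)) ≠ {i, j} := by
          rcases hijpair with h | h
          · refine ⟨c2, d2, e6, hc2.1, hc2.2, hd2.1, hd2.2, tie2.2, ?_⟩
            rw [h]
            intro hcon
            rcases pair_eq_cases hcon with ⟨g1, g2⟩ | ⟨g1, g2⟩
            · exact e2 g1.symm
            · exact e4 g1.symm
          · refine ⟨c1, d1, e1, hc1.1, hc1.2, hd1.1, hd1.2, tie1.2, ?_⟩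
            rw [h]
            intro hcon
            rcases pair_eq_cases hcon with ⟨g1, g2⟩ | ⟨g1, g2⟩
            · exact e2 g1
            · exact e3 g1
        obtain ⟨u, w, huw, hua, hub, hwa, hwb, hvuw, hnp⟩ := main
        have hxuw : dist x (p u) ≠ dist x (p w) := fun h => hnp (hxuniq u w ⟨huw, h⟩)
        have h2 : 1 ≤ |code p v u - code p x u| + |code p v w - code p x w| := by
          have h3 : code p v u - code p v w = 0 := by
            rw [code_eq_of_dist_eq hvuw]; ring
          have h4 : 1 ≤ |code p x u - code p x w| := abs_code_sub_ge_one hxuw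
          calc (1:ℚ) ≤ |(code p v u - code p v w) - (code p x u - code p x w)| := by
                rw [h3, zero_sub, abs_neg]; exact h4
            _ ≤ _ := pair_bd (code p v) (code p x) u w
        have := fourB (code p v) (code p x) hab (Ne.symm hua) (Ne.symm hwa)
          (Ne.symm hub) (Ne.symm hwb) huw
        linarith
      · -- 3-I vertex
        have hTmem : ∀ c : Fin n, (c = t1 ∨ c = t2 ∨ c = t3) → c ≠ a ∧ c ≠ b := by
          intro c hc
          have hpart : ∃ d, d ≠ c ∧ (d = t1 ∨ d = t2 ∨ d = t3) := by
            rcases hc with rfl | rfl | rfl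
            · exact ⟨t2, h12.symm, by tauto⟩
            · exact ⟨t1, h12, by tauto⟩
            · exact ⟨t1, h13, by tauto⟩
          obtain ⟨d, hdc, hdT⟩ := hpart
          have tie_cd : dist v (p c) = dist v (p d) := by
            have := (hch c d).mpr ⟨hdc.symm, by simpa using hc, by simpa using hdT⟩
            exact this.2
          constructor
          · intro hca
            by_cases hdb : d = b
            · rw [hca, hdb] at tie_cd
              exact absurd tie_cd.symm (ne_of_lt hvba)
            · have hda : d ≠ a := fun h => hdc (h.trans hca.symm)
              apply absurd _ (huntied d hda hdb).2
              rw [← hca]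
              exact tie_cd.symm
          · intro hcb
            by_cases hda : d = a
            · rw [hcb, hda] at tie_cd
              exact absurd tie_cd (ne_of_lt hvba)
            · have hdb : d ≠ b := fun h => hdc (h.trans hcb.symm)
              apply absurd _ (huntied d hda hdb).1
              rw [← hcb]
              exact tie_cd.symm
        have hijT : (i = t1 ∨ i = t2 ∨ i = t3) ∧ (j = t1 ∨ j = t2 ∨ j = t3) := by
          have := (hch i j).mp ⟨hij, hvij⟩
          exact ⟨by simpa using this.2.1, by simpa using this.2.2⟩
        obtain ⟨k, hki, hkj, hkT, hall⟩ := third_elem h12 h13 h23 hijT.1 hijT.2 hij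
        have hia := hTmem i hijT.1
        have hja := hTmem j hijT.2
        have hvik : dist v (p k) = dist v (p i) := by
          have := (hch i k).mpr ⟨fun h => hki h.symm, by simpa using hijT.1, by simpa using hkT⟩
          exact this.2.symm
        have hvjk : dist v (p k) = dist v (p j) := by rw [hvik, hvij]
        have hvtie : ∀ c d : Fin n, c ≠ d → dist v (p c) = dist v (p d) →
            (c = t1 ∨ c = t2 ∨ c = t3) := by
          intro c d hcd hd
          have := (hch c d).mp ⟨hcd, hd⟩
          simpa using this.2.1
        have hsi : ∃ m : ℕ, code p v i = m + 1 := by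
          apply code_tie2 (t := j) (u := k) (Ne.symm hkj) hij.symm hki hvij.symm hvik
          intro c hc hd
          have hcT := hvtie c i hc hd
          rcases hall c hcT with h | h | h
          · exact absurd h hc
          · exact Or.inl h
          · exact Or.inr h
        have hsj : ∃ m : ℕ, code p v j = m + 1 := by
          apply code_tie2 (t := i) (u := k) (Ne.symm hki) hij hkj hvij hvjk
          intro c hc hd
          have hcT := hvtie c j hc hd
          rcases hall c hcT with h | h | h
          · exact Or.inl h
          · exact absurd h hc
          · exact Or.inr h
        have hri : ∃ m : ℕ, code p x i = m + 1/2 := by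
          apply code_tie1 hij.symm hxij.symm
          intro c hc hd
          have := hxuniq i c ⟨fun h => hc h.symm, hd.symm⟩
          rcases pair_eq_cases this with ⟨g1, g2⟩ | ⟨g1, g2⟩
          · exact g2
          · exact absurd g1 hij
        have hrj : ∃ m : ℕ, code p x j = m + 1/2 := by
          apply code_tie1 hij hxij
          intro c hc hd
          have := hxuniq j c ⟨fun h => hc h.symm, hd.symm⟩
          rcases pair_eq_cases this with ⟨g1, g2⟩ | ⟨g1, g2⟩
          · exact absurd g1 hij.symm
          · exact g2
        obtain ⟨m1, hm1⟩ := hsi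
        obtain ⟨m2, hm2⟩ := hri
        obtain ⟨m3, hm3⟩ := hsj
        obtain ⟨m4, hm4⟩ := hrj
        have hfi : (1/2 : ℚ) ≤ |code p v i - code p x i| := by
          rw [hm1, hm2]; exact int_half_gap m1 m2
        have hfj : (1/2 : ℚ) ≤ |code p v j - code p x j| := by
          rw [hm3, hm4]; exact int_half_gap m3 m4
        have := fourB (code p v) (code p x) hab (Ne.symm hia.1) (Ne.symm hja.1)
          (Ne.symm hia.2) (Ne.symm hja.2) hij
        linarith


/-- In a 2-I vertex, the tie-partner of each special element is unique. -/
lemma sympair {v : Pt} {u w u' w' : Fin n} (huw : u ≠ w) (huu' : u ≠ u') (huw' : u ≠ w')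
    (huniq' : ∀ a b, Tie p v a b → ({a, b} : Set (Fin n)) = {u, w} ∨ ({a, b} : Set (Fin n)) = {u', w'}) :
    ∀ e, e ≠ u → dist v (p e) = dist v (p u) → e = w := by
  intro e he hd
  have := huniq' u e ⟨fun h => he h.symm, hd.symm⟩
  rcases this with h | h
  · rcases pair_eq_cases h with ⟨g1, g2⟩ | ⟨g1, g2⟩
    · exact g2
    · exact absurd g1 huw
  · rcases pair_eq_cases h with ⟨g1, g2⟩ | ⟨g1, g2⟩
    · exact absurd g1 huu'
    · exact absurd g1 huw'

lemma caseA {x v : Pt} {i j : Fin n} (hij : i ≠ j)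
    (hxij : dist x (p i) = dist x (p j))
    (hxuniq : ∀ u w, Tie p x u w → ({u, w} : Set (Fin n)) = {i, j})
    (hv : Vertex2I p v ∨ Vertex3I p v)
    (hvij : dist v (p i) < dist v (p j)) :
    5/2 ≤ ∑ c, |code p v c - code p x c| := by
  classical
  have hrij : code p x i = code p x j := code_eq_of_dist_eq hxij
  have pij : ∀ q : ℚ, q ≤ |code p v i - code p v j| →
      q ≤ |code p v i - code p x i| + |code p v j - code p x j| := by
    intro q hq
    have he : (code p v i - code p v j) - (code p x i - code p x j)
        = code p v i - code p v j := by rw [hrij]; ring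
    have hpb := pair_bd (code p v) (code p x) i j
    rw [he] at hpb
    linarith
  have tp : ∀ u w : Fin n, u ≠ w → dist v (p u) = dist v (p w) →
      (({u, w} : Set (Fin n)) ≠ {i, j}) →
      1 ≤ |code p v u - code p x u| + |code p v w - code p x w| := by
    intro u w huw hd hnp
    have hxuw : dist x (p u) ≠ dist x (p w) := fun h => hnp (hxuniq u w ⟨huw, h⟩)
    have h3 : (code p v u - code p v w) - (code p x u - code p x w)
        = -(code p x u - code p x w) := by rw [code_eq_of_dist_eq hd]; ring
    have h4 : 1 ≤ |code p x u - code p x w| := abs_code_sub_ge_one hxuw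
    have h5 := pair_bd (code p v) (code p x) u w
    rw [h3, abs_neg] at h5
    linarith
  have xuntied : ∀ c, c ≠ i → c ≠ j → ∀ e, e ≠ c → dist x (p e) ≠ dist x (p c) := by
    intro c hci hcj e he hd
    have := hxuniq c e ⟨fun h => he h.symm, hd.symm⟩
    rcases pair_eq_cases this with ⟨g1, g2⟩ | ⟨g1, g2⟩
    · exact hci g1
    · exact hcj g1
  have hgap1v : code p v j + 1 ≤ code p v i := gap1 hvij
  rcases hv with ⟨c1, d1, c2, d2, e1, e2, e3, e4, e5, e6, tie1, tie2, huniq⟩ |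
    ⟨t1, t2, t3, h12, h13, h23, hch⟩
  · -- 2-I vertex
    -- partner uniqueness for each of the four special elements
    have hun1 : ∀ a b, Tie p v a b → ({a, b} : Set (Fin n)) = ({d1, c1} : Set (Fin n))
        ∨ ({a, b} : Set (Fin n)) = {c2, d2} := by
      intro a b h
      rcases huniq a b h with h' | h'
      · exact Or.inl (h'.trans (Set.pair_comm c1 d1))
      · exact Or.inr h'
    have hun2 : ∀ a b, Tie p v a b → ({a, b} : Set (Fin n)) = ({c2, d2} : Set (Fin n))
        ∨ ({a, b} : Set (Fin n)) = {c1, d1} := fun a b h => (huniq a b h).symm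
    have hun3 : ∀ a b, Tie p v a b → ({a, b} : Set (Fin n)) = ({d2, c2} : Set (Fin n))
        ∨ ({a, b} : Set (Fin n)) = {c1, d1} := by
      intro a b h
      rcases huniq a b h with h' | h'
      · exact Or.inr h'
      · exact Or.inl (h'.trans (Set.pair_comm c2 d2))
    have part1 : ∀ e, e ≠ c1 → dist v (p e) = dist v (p c1) → e = d1 :=
      sympair e1 e2 e3 huniq
    have part2 : ∀ e, e ≠ d1 → dist v (p e) = dist v (p d1) → e = c1 :=
      sympair e1.symm e4 e5 hun1
    have part3 : ∀ e, e ≠ c2 → dist v (p e) = dist v (p c2) → e = d2 :=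
      sympair e6 e2.symm e4.symm hun2
    have part4 : ∀ e, e ≠ d2 → dist v (p e) = dist v (p d2) → e = c2 :=
      sympair e6.symm e3.symm e5.symm hun3
    have vuntied : ∀ c, c ≠ c1 → c ≠ d1 → c ≠ c2 → c ≠ d2 →
        ∀ e, e ≠ c → dist v (p e) ≠ dist v (p c) := by
      intro c g1 g2 g3 g4 e he hd
      have := huniq c e ⟨fun h => he h.symm, hd.symm⟩
      rcases this with h | h
      · rcases pair_eq_cases h with ⟨k1, _⟩ | ⟨k1, _⟩
        · exact g1 k1
        · exact g2 k1
      · rcases pair_eq_cases h with ⟨k1, _⟩ | ⟨k1, _⟩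
        · exact g3 k1
        · exact g4 k1
    -- tie structure for a member of the 4-set
    have tstruct : ∀ c : Fin n, (c = c1 ∨ c = d1 ∨ c = c2 ∨ c = d2) →
        ∃ π, π ≠ c ∧ (π = c1 ∨ π = d1 ∨ π = c2 ∨ π = d2) ∧
          dist v (p π) = dist v (p c) ∧ (∀ e, e ≠ c → dist v (p e) = dist v (p c) → e = π) := by
      intro c hc
      rcases hc with h | h | h | h
      · refine ⟨d1, by rw [h]; exact e1.symm, by tauto, by rw [h]; exact tie1.2.symm, ?_⟩
        intro e he hd
        rw [h] at he hd
        exact part1 e he hd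
      · refine ⟨c1, by rw [h]; exact e1, by tauto, by rw [h]; exact tie1.2, ?_⟩
        intro e he hd
        rw [h] at he hd
        exact part2 e he hd
      · refine ⟨d2, by rw [h]; exact e6.symm, by tauto, by rw [h]; exact tie2.2.symm, ?_⟩
        intro e he hd
        rw [h] at he hd
        exact part3 e he hd
      · refine ⟨c2, by rw [h]; exact e6, by tauto, by rw [h]; exact tie2.2, ?_⟩
        intro e he hd
        rw [h] at he hd
        exact part4 e he hd
    by_cases hiM : i = c1 ∨ i = d1 ∨ i = c2 ∨ i = d2 <;>
      by_cases hjM : j = c1 ∨ j = d1 ∨ j = c2 ∨ j = d2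
    · -- A2 : both i and j tied at v
      obtain ⟨pi, hpi1, hpiM, hpi2, hpi3⟩ := tstruct i hiM
      obtain ⟨pj, hpj1, hpjM, hpj2, hpj3⟩ := tstruct j hjM
      have hpij : pi ≠ j := by
        intro h
        rw [h] at hpi2
        exact absurd hpi2 (ne_of_lt hvij).symm
      have hpji : pj ≠ i := by
        intro h
        rw [h] at hpj2
        exact absurd hpj2 (ne_of_lt hvij)
      have hpipj : pi ≠ pj := by
        intro h
        rw [h, hpj2] at hpi2
        exact absurd hpi2 (ne_of_lt hvij).symm
      have hsg : code p v j + 2 ≤ code p v i := by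
        have hcard : ({pi, pj} : Finset (Fin n)).card = 2 := by
          rw [Finset.card_insert_of_notMem (by simp [hpipj]), Finset.card_singleton]
        have := gapF (y := v) {pi, pj} hvij
          (by simp only [Finset.mem_insert, Finset.mem_singleton]; push_neg;
              exact ⟨Ne.symm hpi1, Ne.symm hpji⟩)
          (by simp only [Finset.mem_insert, Finset.mem_singleton]; push_neg;
              exact ⟨Ne.symm hpij, Ne.symm hpj1⟩)
          (by
            intro t ht
            simp only [Finset.mem_insert, Finset.mem_singleton] at ht
            rcases ht with rfl | rfl
            · exact Or.inl hpi2
            · exact Or.inr hpj2)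
        rw [hcard] at this
        push_cast at this
        linarith
      have hfij : 2 ≤ |code p v i - code p x i| + |code p v j - code p x j| := by
        apply pij
        rw [abs_of_nonneg (by linarith)]
        linarith
      have halfbd : ∀ c π : Fin n, π ≠ c → c ≠ i → c ≠ j → π = i ∨ π = j →
          dist v (p π) = dist v (p c) →
          (∀ e, e ≠ c → dist v (p e) = dist v (p c) → e = π) →
          (1/2 : ℚ) ≤ |code p v c - code p x c| := by
        intro c π hne hci hcj hπij hd huu
        obtain ⟨m, hm⟩ := code_tie1 (p := p) (y := v) (a := c) (t := π) hne hd huu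
        obtain ⟨m', hm'⟩ := code_tie0 (p := p) (y := x) (a := c) (xuntied c hci hcj)
        rw [hm, hm']
        exact half_int_gap m m'
      have hfpi : (1/2 : ℚ) ≤ |code p v pi - code p x pi| := by
        obtain ⟨π', k1, k2, k3, k4⟩ := tstruct pi hpiM
        have hiπ : i = π' := k4 i (Ne.symm hpi1) hpi2.symm
        exact halfbd pi π' k1 hpi1 hpij (Or.inl hiπ.symm) k3 k4
      have hfpj : (1/2 : ℚ) ≤ |code p v pj - code p x pj| := by
        obtain ⟨π', k1, k2, k3, k4⟩ := tstruct pj hpjM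
        have hjπ : j = π' := k4 j (Ne.symm hpj1) hpj2.symm
        exact halfbd pj π' k1 hpji hpj1 (Or.inr hjπ.symm) k3 k4
      have := fourB (code p v) (code p x) hij (Ne.symm hpi1) (Ne.symm hpji)
        (Ne.symm hpij) (Ne.symm hpj1) hpipj
      linarith
    · -- i tied at v, j untied
      push_neg at hjM
      obtain ⟨pi, hpi1, hpiM, hpi2, hpi3⟩ := tstruct i hiM
      have hpij : pi ≠ j := by
        intro h
        rw [h] at hpiM
        rcases hpiM with k | k | k | k
        exacts [hjM.1 k, hjM.2.1 k, hjM.2.2.1 k, hjM.2.2.2 k]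
      have hsg : code p v j + 1 + 1/2 ≤ code p v i := by
        have := gapF (y := v) {pi} hvij
          (by simp only [Finset.mem_singleton]; exact Ne.symm hpi1)
          (by simp only [Finset.mem_singleton]; exact Ne.symm hpij)
          (by
            intro t ht
            simp only [Finset.mem_singleton] at ht
            subst ht
            exact Or.inl hpi2)
        simpa using this
      have hfij : 3/2 ≤ |code p v i - code p x i| + |code p v j - code p x j| := by
        apply pij
        rw [abs_of_nonneg (by linarith)]
        linarith
      have other : ∃ u w : Fin n, u ≠ w ∧ dist v (p u) = dist v (p w) ∧
          u ≠ i ∧ u ≠ j ∧ w ≠ i ∧ w ≠ j := by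
        rcases hiM with h | h | h | h
        · exact ⟨c2, d2, e6, tie2.2, by rw [h]; exact e2.symm, Ne.symm hjM.2.2.1,
            by rw [h]; exact e3.symm, Ne.symm hjM.2.2.2⟩
        · exact ⟨c2, d2, e6, tie2.2, by rw [h]; exact e4.symm, Ne.symm hjM.2.2.1,
            by rw [h]; exact e5.symm, Ne.symm hjM.2.2.2⟩
        · exact ⟨c1, d1, e1, tie1.2, by rw [h]; exact e2, Ne.symm hjM.1,
            by rw [h]; exact e4, Ne.symm hjM.2.1⟩
        · exact ⟨c1, d1, e1, tie1.2, by rw [h]; exact e3, Ne.symm hjM.1,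
            by rw [h]; exact e5, Ne.symm hjM.2.1⟩
      obtain ⟨u, w, huw, hduw, hui, huj, hwi, hwj⟩ := other
      have hnp : ({u, w} : Set (Fin n)) ≠ {i, j} := by
        intro h
        rcases pair_eq_cases h with ⟨g1, _⟩ | ⟨g1, _⟩
        · exact hui g1
        · exact huj g1
      have h1 := tp u w huw hduw hnp
      have := fourB (code p v) (code p x) hij (Ne.symm hui) (Ne.symm hwi)
        (Ne.symm huj) (Ne.symm hwj) huw
      linarith
    · -- j tied at v, i untied
      push_neg at hiM
      obtain ⟨pj, hpj1, hpjM, hpj2, hpj3⟩ := tstruct j hjM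
      have hpji : pj ≠ i := by
        intro h
        rw [h] at hpjM
        rcases hpjM with k | k | k | k
        exacts [hiM.1 k, hiM.2.1 k, hiM.2.2.1 k, hiM.2.2.2 k]
      have hsg : code p v j + 1 + 1/2 ≤ code p v i := by
        have := gapF (y := v) {pj} hvij
          (by simp only [Finset.mem_singleton]; exact Ne.symm hpji)
          (by simp only [Finset.mem_singleton]; exact Ne.symm hpj1)
          (by
            intro t ht
            simp only [Finset.mem_singleton] at ht
            subst ht
            exact Or.inr hpj2)
        simpa using this
      have hfij : 3/2 ≤ |code p v i - code p x i| + |code p v j - code p x j| := by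
        apply pij
        rw [abs_of_nonneg (by linarith)]
        linarith
      have other : ∃ u w : Fin n, u ≠ w ∧ dist v (p u) = dist v (p w) ∧
          u ≠ i ∧ u ≠ j ∧ w ≠ i ∧ w ≠ j := by
        rcases hjM with h | h | h | h
        · exact ⟨c2, d2, e6, tie2.2, Ne.symm hiM.2.2.1, by rw [h]; exact e2.symm,
            Ne.symm hiM.2.2.2, by rw [h]; exact e3.symm⟩
        · exact ⟨c2, d2, e6, tie2.2, Ne.symm hiM.2.2.1, by rw [h]; exact e4.symm,
            Ne.symm hiM.2.2.2, by rw [h]; exact e5.symm⟩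
        · exact ⟨c1, d1, e1, tie1.2, Ne.symm hiM.1, by rw [h]; exact e2,
            Ne.symm hiM.2.1, by rw [h]; exact e4⟩
        · exact ⟨c1, d1, e1, tie1.2, Ne.symm hiM.1, by rw [h]; exact e3,
            Ne.symm hiM.2.1, by rw [h]; exact e5⟩
      obtain ⟨u, w, huw, hduw, hui, huj, hwi, hwj⟩ := other
      have hnp : ({u, w} : Set (Fin n)) ≠ {i, j} := by
        intro h
        rcases pair_eq_cases h with ⟨g1, _⟩ | ⟨g1, _⟩
        · exact hui g1
        · exact huj g1
      have h1 := tp u w huw hduw hnp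
      have := fourB (code p v) (code p x) hij (Ne.symm hui) (Ne.symm hwi)
        (Ne.symm huj) (Ne.symm hwj) huw
      linarith
    · -- both i,j untied at v
      push_neg at hiM
      push_neg at hjM
      have hfij : 1 ≤ |code p v i - code p x i| + |code p v j - code p x j| := by
        apply pij
        rw [abs_of_nonneg (by linarith)]
        linarith
      have hnp1 : ({c1, d1} : Set (Fin n)) ≠ {i, j} := by
        intro h
        rcases pair_eq_cases h with ⟨g1, _⟩ | ⟨g1, _⟩
        · exact hiM.1 g1.symm
        · exact hjM.1 g1.symm
      have hnp2 : ({c2, d2} : Set (Fin n)) ≠ {i, j} := by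
        intro h
        rcases pair_eq_cases h with ⟨g1, _⟩ | ⟨g1, _⟩
        · exact hiM.2.2.1 g1.symm
        · exact hjM.2.2.1 g1.symm
      have h1 := tp c1 d1 e1 tie1.2 hnp1
      have h2 := tp c2 d2 e6 tie2.2 hnp2
      have := sixB (code p v) (code p x) hij hiM.1 hiM.2.1
        hiM.2.2.1 hiM.2.2.2 hjM.1 hjM.2.1
        hjM.2.2.1 hjM.2.2.2 e1 e2 e3 e4 e5 e6
      linarith
  · -- 3-I vertex
    have hvt : ∀ a b : Fin n, a ≠ b → (a = t1 ∨ a = t2 ∨ a = t3) →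
        (b = t1 ∨ b = t2 ∨ b = t3) → dist v (p a) = dist v (p b) := by
      intro a b hne ha hb
      exact ((hch a b).mpr ⟨hne, by simpa using ha, by simpa using hb⟩).2
    by_cases hiT : i = t1 ∨ i = t2 ∨ i = t3 <;> by_cases hjT : j = t1 ∨ j = t2 ∨ j = t3
    · exact absurd (hvt i j hij hiT hjT) (ne_of_lt hvij)
    · -- i ∈ T, j ∉ T
      push_neg at hjT
      have hex : ∃ α β : Fin n, α ≠ β ∧ (α = t1 ∨ α = t2 ∨ α = t3) ∧
          (β = t1 ∨ β = t2 ∨ β = t3) ∧ α ≠ i ∧ β ≠ i ∧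
          dist v (p α) = dist v (p i) ∧ dist v (p β) = dist v (p i) := by
        rcases hiT with h | h | h
        · refine ⟨t2, t3, h23, Or.inr (Or.inl rfl), Or.inr (Or.inr rfl),
            by rw [h]; exact h12.symm, by rw [h]; exact h13.symm, ?_, ?_⟩
          · exact hvt t2 i (by rw [h]; exact h12.symm) (Or.inr (Or.inl rfl)) (Or.inl h)
          · exact hvt t3 i (by rw [h]; exact h13.symm) (Or.inr (Or.inr rfl)) (Or.inl h)
        · refine ⟨t1, t3, h13, Or.inl rfl, Or.inr (Or.inr rfl),
            by rw [h]; exact h12, by rw [h]; exact h23.symm, ?_, ?_⟩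
          · exact hvt t1 i (by rw [h]; exact h12) (Or.inl rfl) (Or.inr (Or.inl h))
          · exact hvt t3 i (by rw [h]; exact h23.symm) (Or.inr (Or.inr rfl)) (Or.inr (Or.inl h))
        · refine ⟨t1, t2, h12, Or.inl rfl, Or.inr (Or.inl rfl),
            by rw [h]; exact h13, by rw [h]; exact h23, ?_, ?_⟩
          · exact hvt t1 i (by rw [h]; exact h13) (Or.inl rfl) (Or.inr (Or.inr h))
          · exact hvt t2 i (by rw [h]; exact h23) (Or.inr (Or.inl rfl)) (Or.inr (Or.inr h))
      obtain ⟨α, β, hαβ, hαT, hβT, hαi, hβi, hdα, hdβ⟩ := hex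
      have hαj : α ≠ j := by
        rcases hαT with h | h | h <;> rw [h]
        exacts [Ne.symm hjT.1, Ne.symm hjT.2.1, Ne.symm hjT.2.2]
      have hβj : β ≠ j := by
        rcases hβT with h | h | h <;> rw [h]
        exacts [Ne.symm hjT.1, Ne.symm hjT.2.1, Ne.symm hjT.2.2]
      have hsg : code p v j + 2 ≤ code p v i := by
        have hcard : ({α, β} : Finset (Fin n)).card = 2 := by
          rw [Finset.card_insert_of_notMem (by simp [hαβ]), Finset.card_singleton]
        have := gapF (y := v) {α, β} hvij
          (by simp only [Finset.mem_insert, Finset.mem_singleton]; push_neg;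
              exact ⟨Ne.symm hαi, Ne.symm hβi⟩)
          (by simp only [Finset.mem_insert, Finset.mem_singleton]; push_neg;
              exact ⟨Ne.symm hαj, Ne.symm hβj⟩)
          (by
            intro t ht
            simp only [Finset.mem_insert, Finset.mem_singleton] at ht
            rcases ht with rfl | rfl
            · exact Or.inl hdα
            · exact Or.inl hdβ)
        rw [hcard] at this
        push_cast at this
        linarith
      have hfij : 2 ≤ |code p v i - code p x i| + |code p v j - code p x j| := by
        apply pij
        rw [abs_of_nonneg (by linarith)]
        linarith
      have hnp : ({α, β} : Set (Fin n)) ≠ {i, j} := by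
        intro h
        rcases pair_eq_cases h with ⟨g1, _⟩ | ⟨g1, _⟩
        · exact hαi g1
        · exact hαj g1
      have h1 := tp α β hαβ (hdα.trans hdβ.symm) hnp
      have := fourB (code p v) (code p x) hij (Ne.symm hαi) (Ne.symm hβi)
        (Ne.symm hαj) (Ne.symm hβj) hαβ
      linarith
    · -- j ∈ T, i ∉ T
      push_neg at hiT
      have hex : ∃ α β : Fin n, α ≠ β ∧ (α = t1 ∨ α = t2 ∨ α = t3) ∧
          (β = t1 ∨ β = t2 ∨ β = t3) ∧ α ≠ j ∧ β ≠ j ∧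
          dist v (p α) = dist v (p j) ∧ dist v (p β) = dist v (p j) := by
        rcases hjT with h | h | h
        · refine ⟨t2, t3, h23, Or.inr (Or.inl rfl), Or.inr (Or.inr rfl),
            by rw [h]; exact h12.symm, by rw [h]; exact h13.symm, ?_, ?_⟩
          · exact hvt t2 j (by rw [h]; exact h12.symm) (Or.inr (Or.inl rfl)) (Or.inl h)
          · exact hvt t3 j (by rw [h]; exact h13.symm) (Or.inr (Or.inr rfl)) (Or.inl h)
        · refine ⟨t1, t3, h13, Or.inl rfl, Or.inr (Or.inr rfl),
            by rw [h]; exact h12, by rw [h]; exact h23.symm, ?_, ?_⟩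
          · exact hvt t1 j (by rw [h]; exact h12) (Or.inl rfl) (Or.inr (Or.inl h))
          · exact hvt t3 j (by rw [h]; exact h23.symm) (Or.inr (Or.inr rfl)) (Or.inr (Or.inl h))
        · refine ⟨t1, t2, h12, Or.inl rfl, Or.inr (Or.inl rfl),
            by rw [h]; exact h13, by rw [h]; exact h23, ?_, ?_⟩
          · exact hvt t1 j (by rw [h]; exact h13) (Or.inl rfl) (Or.inr (Or.inr h))
          · exact hvt t2 j (by rw [h]; exact h23) (Or.inr (Or.inl rfl)) (Or.inr (Or.inr h))
      obtain ⟨α, β, hαβ, hαT, hβT, hαj, hβj, hdα, hdβ⟩ := hex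
      have hαi : α ≠ i := by
        rcases hαT with h | h | h <;> rw [h]
        exacts [Ne.symm hiT.1, Ne.symm hiT.2.1, Ne.symm hiT.2.2]
      have hβi : β ≠ i := by
        rcases hβT with h | h | h <;> rw [h]
        exacts [Ne.symm hiT.1, Ne.symm hiT.2.1, Ne.symm hiT.2.2]
      have hsg : code p v j + 2 ≤ code p v i := by
        have hcard : ({α, β} : Finset (Fin n)).card = 2 := by
          rw [Finset.card_insert_of_notMem (by simp [hαβ]), Finset.card_singleton]
        have := gapF (y := v) {α, β} hvij
          (by simp only [Finset.mem_insert, Finset.mem_singleton]; push_neg;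
              exact ⟨Ne.symm hαi, Ne.symm hβi⟩)
          (by simp only [Finset.mem_insert, Finset.mem_singleton]; push_neg;
              exact ⟨Ne.symm hαj, Ne.symm hβj⟩)
          (by
            intro t ht
            simp only [Finset.mem_insert, Finset.mem_singleton] at ht
            rcases ht with rfl | rfl
            · exact Or.inr hdα
            · exact Or.inr hdβ)
        rw [hcard] at this
        push_cast at this
        linarith
      have hfij : 2 ≤ |code p v i - code p x i| + |code p v j - code p x j| := by
        apply pij
        rw [abs_of_nonneg (by linarith)]
        linarith
      have hnp : ({α, β} : Set (Fin n)) ≠ {i, j} := by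
        intro h
        rcases pair_eq_cases h with ⟨g1, _⟩ | ⟨g1, _⟩
        · exact hαi g1
        · exact hαj g1
      have h1 := tp α β hαβ (hdα.trans hdβ.symm) hnp
      have := fourB (code p v) (code p x) hij (Ne.symm hαi) (Ne.symm hβi)
        (Ne.symm hαj) (Ne.symm hβj) hαβ
      linarith
    · -- i, j ∉ T
      push_neg at hiT
      push_neg at hjT
      have hfij : 1 ≤ |code p v i - code p x i| + |code p v j - code p x j| := by
        apply pij
        rw [abs_of_nonneg (by linarith)]
        linarith
      have hs12 : code p v t1 = code p v t2 :=
        code_eq_of_dist_eq (hvt t1 t2 h12 (Or.inl rfl) (Or.inr (Or.inl rfl)))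
      have hs13 : code p v t1 = code p v t3 :=
        code_eq_of_dist_eq (hvt t1 t3 h13 (Or.inl rfl) (Or.inr (Or.inr rfl)))
      have hx12 : dist x (p t1) ≠ dist x (p t2) :=
        xuntied t2 (Ne.symm hiT.2.1) (Ne.symm hjT.2.1) t1 h12
      have hx13 : dist x (p t1) ≠ dist x (p t3) :=
        xuntied t3 (Ne.symm hiT.2.2) (Ne.symm hjT.2.2) t1 h13
      have hx23 : dist x (p t2) ≠ dist x (p t3) :=
        xuntied t3 (Ne.symm hiT.2.2) (Ne.symm hjT.2.2) t2 h23
      have hsp := spread3 (code p v t1) (code p x t1) (code p x t2) (code p x t3)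
        (abs_code_sub_ge_one hx12) (abs_code_sub_ge_one hx13) (abs_code_sub_ge_one hx23)
      have r2 : |code p v t1 - code p x t2| = |code p v t2 - code p x t2| := by rw [hs12]
      have r3 : |code p v t1 - code p x t3| = |code p v t3 - code p x t3| := by rw [hs13]
      rw [r2, r3] at hsp
      have := fiveB (code p v) (code p x) hij hiT.1 hiT.2.1
        hiT.2.2 hjT.1 hjT.2.1 hjT.2.2 h12 h13 h23
      linarith

lemma forward {x v : Pt} {i j : Fin n} (hij : i ≠ j)
    (hxij : dist x (p i) = dist x (p j))
    (hxuniq : ∀ u w, Tie p x u w → ({u, w} : Set (Fin n)) = {i, j})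
    (hv : Vertex2I p v ∨ Vertex3I p v)
    (hC1 : dist v (p i) = dist v (p j))
    (hC2 : ∀ a b, dist x (p a) < dist x (p b) → dist v (p a) ≤ dist v (p b)) :
    ∑ c, |code p v c - code p x c| ≤ 2 := by
  classical
  have xtie_pair : ∀ a b : Fin n, a ≠ b → dist x (p a) = dist x (p b) →
      dist v (p a) = dist v (p b) := by
    intro a b hab he
    rcases pair_eq_cases (hxuniq a b ⟨hab, he⟩) with ⟨g1, g2⟩ | ⟨g1, g2⟩
    · rw [g1, g2]; exact hC1
    · rw [g1, g2]; exact hC1.symm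
  have Dzero : ∀ a b : Fin n, a ≠ b →
      ¬ (dist v (p a) = dist v (p b) ∧ dist x (p a) ≠ dist x (p b)) →
      g p v a b = g p x a b := by
    intro a b hab hcon
    rcases lt_trichotomy (dist x (p a)) (dist x (p b)) with hc | hc | hc
    · rcases lt_or_eq_of_le (hC2 a b hc) with hv' | hv'
      · rw [g_lt hv', g_lt hc]
      · exact absurd ⟨hv', ne_of_lt hc⟩ hcon
    · have := xtie_pair a b hab hc
      rw [g_eq this.symm, g_eq hc.symm]
    · rcases lt_or_eq_of_le (hC2 b a hc) with hv' | hv'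
      · rw [g_gt hv', g_gt hc]
      · exact absurd ⟨hv'.symm, (ne_of_lt hc).symm⟩ hcon
  have Dhalf : ∀ a b : Fin n, a ≠ b → |g p v a b - g p x a b| ≤ 1/2 := by
    intro a b hab
    rcases lt_trichotomy (dist x (p a)) (dist x (p b)) with hc | hc | hc
    · rcases lt_or_eq_of_le (hC2 a b hc) with hv' | hv'
      · rw [g_lt hv', g_lt hc]; rw [abs_sub_le_iff]; constructor <;> norm_num
      · rw [g_eq hv'.symm, g_lt hc]; rw [abs_sub_le_iff]; constructor <;> norm_num
    · rw [g_eq (xtie_pair a b hab hc).symm, g_eq hc.symm]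
      rw [abs_sub_le_iff]; constructor <;> norm_num
    · rcases lt_or_eq_of_le (hC2 b a hc) with hv' | hv'
      · rw [g_gt hv', g_gt hc]; rw [abs_sub_le_iff]; constructor <;> norm_num
      · rw [g_eq hv', g_gt hc]; rw [abs_sub_le_iff]; constructor <;> norm_num
  have dcomp : ∀ a : Fin n, code p v a - code p x a
      = ∑ b ∈ Finset.univ.erase a, (g p v a b - g p x a b) := by
    intro a
    rw [code_eq_sum, code_eq_sum, Finset.sum_sub_distrib]
  have coordbd : ∀ (a : Fin n) (K : Finset (Fin n)), a ∉ K →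
      (∀ b, b ≠ a → b ∉ K → g p v a b = g p x a b) →
      |code p v a - code p x a| ≤ (K.card : ℚ)/2 := by
    intro a K haK hsupp
    rw [dcomp a]
    refine le_trans (Finset.abs_sum_le_sum_abs _ _) ?_
    have h1 : ∀ b ∈ Finset.univ.erase a, |g p v a b - g p x a b|
        ≤ (if b ∈ K then (1:ℚ)/2 else 0) := by
      intro b hb
      have hba : b ≠ a := (Finset.mem_erase.mp hb).1
      by_cases hbK : b ∈ K
      · rw [if_pos hbK]; exact Dhalf a b (Ne.symm hba)
      · rw [if_neg hbK, hsupp b hba hbK, sub_self, abs_zero]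
    refine le_trans (Finset.sum_le_sum h1) ?_
    rw [Finset.sum_ite_mem]
    have hKsub : Finset.univ.erase a ∩ K = K := by
      apply Finset.inter_eq_right.mpr
      intro b hb
      exact Finset.mem_erase.mpr ⟨fun h => haK (h ▸ hb), Finset.mem_univ b⟩
    rw [hKsub, Finset.sum_const, nsmul_eq_mul]
    ring_nf
    rfl
  rcases hv with ⟨c1, d1, c2, d2, e1, e2, e3, e4, e5, e6, tie1, tie2, huniq⟩ |
    ⟨t1, t2, t3, h12, h13, h23, hch⟩
  · -- 2-I
    have hijpair := huniq i j ⟨hij, hC1⟩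
    have main : ∃ u w : Fin n, u ≠ w ∧ Tie p v u w ∧ u ∉ ({i,j} : Set (Fin n)) ∧
        w ∉ ({i,j} : Set (Fin n)) ∧
        (∀ a b, Tie p v a b → ({a, b} : Set (Fin n)) = {i, j} ∨ ({a, b} : Set (Fin n)) = {u, w}) := by
      rcases hijpair with h | h
      · refine ⟨c2, d2, e6, tie2, ?_, ?_, ?_⟩
        · rw [h]
          intro hm
          simp only [Set.mem_insert_iff, Set.mem_singleton_iff] at hm
          rcases hm with hm | hm
          · exact e2 hm.symm
          · exact e4 hm.symm
        · rw [h]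
          intro hm
          simp only [Set.mem_insert_iff, Set.mem_singleton_iff] at hm
          rcases hm with hm | hm
          · exact e3 hm.symm
          · exact e5 hm.symm
        · intro a b hab
          rcases huniq a b hab with h' | h'
          · exact Or.inl (h'.trans h.symm)
          · exact Or.inr h'
      · refine ⟨c1, d1, e1, tie1, ?_, ?_, ?_⟩
        · rw [h]
          intro hm
          simp only [Set.mem_insert_iff, Set.mem_singleton_iff] at hm
          rcases hm with hm | hm
          · exact e2 hm
          · exact e3 hm
        · rw [h]
          intro hm
          simp only [Set.mem_insert_iff, Set.mem_singleton_iff] at hm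
          rcases hm with hm | hm
          · exact e4 hm
          · exact e5 hm
        · intro a b hab
          rcases huniq a b hab with h' | h'
          · exact Or.inr h'
          · exact Or.inl (h'.trans h.symm)
    obtain ⟨u, w, huw, tieuw, huij, hwij, hVuniq⟩ := main
    -- zero-coordinates
    have hzero : ∀ a : Fin n, a ≠ u → a ≠ w → |code p v a - code p x a| ≤ 0 := by
      intro a hau haw
      have := coordbd a ∅ (Finset.notMem_empty a) ?_
      · simpa using this
      · intro b hba _
        apply Dzero a b (Ne.symm hba)
        rintro ⟨hd1, hd2⟩
        rcases hVuniq a b ⟨Ne.symm hba, hd1⟩ with h' | h'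
        · rcases pair_eq_cases h' with ⟨g1, g2⟩ | ⟨g1, g2⟩
          · exact hd2 (by rw [g1, g2]; exact hxij)
          · exact hd2 (by rw [g1, g2]; exact hxij.symm)
        · rcases pair_eq_cases h' with ⟨g1, _⟩ | ⟨g1, _⟩
          · exact hau g1
          · exact haw g1
    have hu2 : |code p v u - code p x u| ≤ 1/2 := by
      have := coordbd u {w} (by simp [huw]) ?_
      · simpa using this
      · intro b hbu hbw
        simp only [Finset.mem_singleton] at hbw
        apply Dzero u b (Ne.symm hbu)
        rintro ⟨hd1, hd2⟩
        rcases hVuniq u b ⟨Ne.symm hbu, hd1⟩ with h' | h'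
        · rcases pair_eq_cases h' with ⟨g1, _⟩ | ⟨g1, _⟩
          · exact huij (Or.inl g1)
          · exact huij (Or.inr g1)
        · rcases pair_eq_cases h' with ⟨_, g2⟩ | ⟨g1, _⟩
          · exact hbw g2
          · exact huw g1
    have hw2 : |code p v w - code p x w| ≤ 1/2 := by
      have := coordbd w {u} (by simp [huw.symm]) ?_
      · simpa using this
      · intro b hbw hbu
        simp only [Finset.mem_singleton] at hbu
        apply Dzero w b (Ne.symm hbw)
        rintro ⟨hd1, hd2⟩
        rcases hVuniq w b ⟨Ne.symm hbw, hd1⟩ with h' | h'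
        · rcases pair_eq_cases h' with ⟨g1, _⟩ | ⟨g1, _⟩
          · exact hwij (Or.inl g1)
          · exact hwij (Or.inr g1)
        · rcases pair_eq_cases h' with ⟨g1, _⟩ | ⟨_, g2⟩
          · exact huw g1.symm
          · exact hbu g2
    have hsum : ∀ a : Fin n, |code p v a - code p x a|
        ≤ (if a = u then (1:ℚ)/2 else 0) + (if a = w then (1:ℚ)/2 else 0) := by
      intro a
      by_cases hau : a = u
      · subst hau
        rw [if_pos rfl, if_neg huw]
        simpa using hu2
      · by_cases haw : a = w
        · subst haw
          rw [if_neg hau, if_pos rfl]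
          simpa using hw2
        · rw [if_neg hau, if_neg haw]
          simpa using hzero a hau haw
    calc ∑ c, |code p v c - code p x c|
        ≤ ∑ a : Fin n, ((if a = u then (1:ℚ)/2 else 0) + (if a = w then (1:ℚ)/2 else 0)) :=
          Finset.sum_le_sum (fun a _ => hsum a)
      _ = 1 := by
          rw [Finset.sum_add_distrib, Finset.sum_ite_eq' Finset.univ u (fun _ => (1:ℚ)/2),
            Finset.sum_ite_eq' Finset.univ w (fun _ => (1:ℚ)/2)]
          norm_num
      _ ≤ 2 := by norm_num
  · -- 3-I
    have hmemvij := (hch i j).mp ⟨hij, hC1⟩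
    have hiT : i = t1 ∨ i = t2 ∨ i = t3 := by simpa using hmemvij.2.1
    have hjT : j = t1 ∨ j = t2 ∨ j = t3 := by simpa using hmemvij.2.2
    obtain ⟨k, hki, hkj, hkT, hall⟩ := third_elem h12 h13 h23 hiT hjT hij
    have memT : ∀ c : Fin n, (c = t1 ∨ c = t2 ∨ c = t3) ↔ c ∈ ({t1, t2, t3} : Set (Fin n)) := by
      intro c; simp
    have hzero : ∀ a : Fin n, a ≠ i → a ≠ j → a ≠ k → |code p v a - code p x a| ≤ 0 := by
      intro a hai haj hak
      have := coordbd a ∅ (Finset.notMem_empty a) ?_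
      · simpa using this
      · intro b hba _
        apply Dzero a b (Ne.symm hba)
        rintro ⟨hd1, _⟩
        have := (hch a b).mp ⟨Ne.symm hba, hd1⟩
        have haT : a = t1 ∨ a = t2 ∨ a = t3 := by simpa using this.2.1
        rcases hall a haT with h | h | h
        exacts [hai h, haj h, hak h]
    have hi2 : |code p v i - code p x i| ≤ 1/2 := by
      have := coordbd i {k} (by simp only [Finset.mem_singleton]; exact fun h => hki h.symm) ?_
      · simpa using this
      · intro b hbi hbk
        simp only [Finset.mem_singleton] at hbk
        apply Dzero i b (Ne.symm hbi)
        rintro ⟨hd1, hd2⟩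
        have := (hch i b).mp ⟨Ne.symm hbi, hd1⟩
        have hbT : b = t1 ∨ b = t2 ∨ b = t3 := by simpa using this.2.2
        rcases hall b hbT with h | h | h
        · exact hbi h
        · exact hd2 (by rw [h]; exact hxij)
        · exact hbk h
    have hj2 : |code p v j - code p x j| ≤ 1/2 := by
      have := coordbd j {k} (by simp only [Finset.mem_singleton]; exact fun h => hkj h.symm) ?_
      · simpa using this
      · intro b hbj hbk
        simp only [Finset.mem_singleton] at hbk
        apply Dzero j b (Ne.symm hbj)
        rintro ⟨hd1, hd2⟩
        have := (hch j b).mp ⟨Ne.symm hbj, hd1⟩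
        have hbT : b = t1 ∨ b = t2 ∨ b = t3 := by simpa using this.2.2
        rcases hall b hbT with h | h | h
        · exact hd2 (by rw [h]; exact hxij.symm)
        · exact hbj h
        · exact hbk h
    have hk2 : |code p v k - code p x k| ≤ 1 := by
      have hcard : ({i, j} : Finset (Fin n)).card = 2 := by
        rw [Finset.card_insert_of_notMem (by simp [hij]), Finset.card_singleton]
      have := coordbd k {i, j} (by simp [hki, hkj]) ?_
      · rw [hcard] at this
        push_cast at this
        linarith
      · intro b hbk hbij
        simp only [Finset.mem_insert, Finset.mem_singleton] at hbij
        push_neg at hbij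
        apply Dzero k b (Ne.symm hbk)
        rintro ⟨hd1, _⟩
        have := (hch k b).mp ⟨Ne.symm hbk, hd1⟩
        have hbT : b = t1 ∨ b = t2 ∨ b = t3 := by simpa using this.2.2
        rcases hall b hbT with h | h | h
        exacts [hbij.1 h, hbij.2 h, hbk h]
    have hsum : ∀ a : Fin n, |code p v a - code p x a|
        ≤ (if a = i then (1:ℚ)/2 else 0) + (if a = j then (1:ℚ)/2 else 0)
          + (if a = k then (1:ℚ) else 0) := by
      intro a
      by_cases hai : a = i
      · subst hai
        rw [if_pos rfl, if_neg hij, if_neg (Ne.symm hki)]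
        simpa using hi2
      · by_cases haj : a = j
        · subst haj
          rw [if_neg hij.symm, if_pos rfl, if_neg (Ne.symm hkj)]
          simpa using hj2
        · by_cases hak : a = k
          · subst hak
            rw [if_neg hki, if_neg hkj, if_pos rfl]
            simpa using hk2
          · rw [if_neg hai, if_neg haj, if_neg hak]
            simpa using hzero a hai haj hak
    calc ∑ c, |code p v c - code p x c|
        ≤ ∑ a : Fin n, ((if a = i then (1:ℚ)/2 else 0) + (if a = j then (1:ℚ)/2 else 0)
            + (if a = k then (1:ℚ) else 0)) :=
          Finset.sum_le_sum (fun a _ => hsum a)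
      _ = 2 := by
          rw [Finset.sum_add_distrib, Finset.sum_add_distrib,
            Finset.sum_ite_eq' Finset.univ i (fun _ => (1:ℚ)/2),
            Finset.sum_ite_eq' Finset.univ j (fun _ => (1:ℚ)/2),
            Finset.sum_ite_eq' Finset.univ k (fun _ => (1:ℚ))]
          norm_num
      _ ≤ 2 := le_refl _



lemma backward {x v : Pt} {i j : Fin n} (hij : i ≠ j)
    (hxij : dist x (p i) = dist x (p j))
    (hxuniq : ∀ u w, Tie p x u w → ({u, w} : Set (Fin n)) = {i, j})
    (hv : Vertex2I p v ∨ Vertex3I p v)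
    (hnc : ¬ (dist v (p i) = dist v (p j) ∧
      ∀ a b, dist x (p a) < dist x (p b) → dist v (p a) ≤ dist v (p b))) :
    5/2 ≤ ∑ c, |code p v c - code p x c| := by
  by_cases hd : dist v (p i) = dist v (p j)
  · have hrev : ∃ a b, dist x (p a) < dist x (p b) ∧ ¬ dist v (p a) ≤ dist v (p b) := by
      by_contra h2
      push_neg at h2
      exact hnc ⟨hd, fun a b hab => h2 a b hab⟩
    obtain ⟨a, b, hxab, hvab⟩ := hrev
    exact caseB hij hxij hxuniq hv hd hxab (not_le.mp hvab)
  · rcases lt_or_gt_of_ne hd with h | h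
    · exact caseA hij hxij hxuniq hv h
    · apply caseA (i := j) (j := i) hij.symm hxij.symm ?_ hv h
      intro u w huw
      exact (hxuniq u w huw).trans (Set.pair_comm i j)

end VE

/-- vertex–edge incidence: a vertex point `v` (2-I or 3-I) lies in the closure
of the edge `Ω(x)` of an edge point `x` iff `δ(v,x) ≤ 2`; consequently it does not lie in the
closure iff `δ(v,x) > 2`. -/
theorem vertex_edge_incidence {n : ℕ} (hn : 2 ≤ n) (p : Fin n → Pt)
    (hp : Function.Injective p) (v x : Pt)
    (hv : Vertex2I p v ∨ Vertex3I p v) (hx : EdgePoint p x) :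
    (v ∈ closure (particle p x) ↔ chromDist p v x ≤ 2) ∧
    (v ∉ closure (particle p x) ↔ 2 < chromDist p v x) := by
  classical
  obtain ⟨i, j, tieij, huniq⟩ := hx
  have hij : i ≠ j := tieij.1
  have hxij : dist x (p i) = dist x (p j) := tieij.2
  have hmain : v ∈ closure (particle p x) ↔ chromDist p v x ≤ 2 := by
    constructor
    · intro hcl
      obtain ⟨hC1, hC2⟩ := VE.cond_of_mem_closure hxij hcl
      have := VE.forward hij hxij huniq hv hC1 hC2
      simpa [chromDist] using this
    · intro hd
      have hC : dist v (p i) = dist v (p j) ∧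
          ∀ a b, dist x (p a) < dist x (p b) → dist v (p a) ≤ dist v (p b) := by
        by_contra hnc
        have h1 := VE.backward hij hxij huniq hv hnc
        have h2 : chromDist p v x = ∑ c, |code p v c - code p x c| := rfl
        rw [h2] at hd
        linarith
      exact VE.mem_closure_of_cond ⟨tieij, huniq⟩ hC.1 hC.2
  refine ⟨hmain, ?_⟩
  rw [hmain]
  exact not_le
end
end

section
/- Vertex–cell incidence: let v be a vertex point (2-I or 3-I) and let x be a cell point with cell C = Ω(x). Then v lies in the topological closure of C if and only if δ(v,x) = 2; consequently v does not lie in the closure of C if and only if δ(v,x) > 2 (and the value δ(v,x) < 2 never occurs). -/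
noncomputable section

open Metric

open Finset

namespace ChromAux
open scoped Classical

variable {n : ℕ} (p : Fin n → Pt)

/-- weight of pair (a,b) at z -/
def wt (z : Pt) (a b : Fin n) : ℚ :=
  if b = a then 0 else if dist z (p a) < dist z (p b) then 1
  else if dist z (p b) = dist z (p a) then 1/2 else 0

lemma wt_eq_one {z : Pt} {a b : Fin n} (h : dist z (p a) < dist z (p b)) :
    wt p z a b = 1 := by
  have hba : b ≠ a := by rintro rfl; exact lt_irrefl _ h
  simp [wt, hba, h]

lemma wt_eq_zero {z : Pt} {a b : Fin n} (h : dist z (p b) < dist z (p a)) :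
    wt p z a b = 0 := by
  have hba : b ≠ a := by rintro rfl; exact lt_irrefl _ h
  simp [wt, hba, not_lt_of_gt h, ne_of_lt h]

lemma wt_eq_half {z : Pt} {a b : Fin n} (hba : b ≠ a) (h : dist z (p a) = dist z (p b)) :
    wt p z a b = 1/2 := by
  simp [wt, hba, h.symm, lt_irrefl]

lemma code_eq_sum (z : Pt) (a : Fin n) : code p z a = ∑ b, wt p z a b := by
  have h1 : {j : Fin n | j ≠ a ∧ dist z (p a) < dist z (p j)}
      = ↑(Finset.univ.filter fun j => j ≠ a ∧ dist z (p a) < dist z (p j)) := by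
    ext j; simp
  have h2 : {j : Fin n | j ≠ a ∧ dist z (p j) = dist z (p a)}
      = ↑(Finset.univ.filter fun j => j ≠ a ∧ dist z (p j) = dist z (p a)) := by
    ext j; simp
  rw [code, h1, h2, Set.ncard_coe_finset, Set.ncard_coe_finset,
    Finset.card_filter, Finset.card_filter]
  push_cast
  rw [Finset.mul_sum, ← Finset.sum_add_distrib]
  refine Finset.sum_congr rfl fun b _ => ?_
  by_cases hba : b = a
  · subst hba; simp [wt]
  · rcases lt_trichotomy (dist z (p a)) (dist z (p b)) with h | h | h
    · rw [wt_eq_one p h]; simp [hba, h, h.ne']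
    · rw [wt_eq_half p hba h]; simp [hba, h.symm, lt_irrefl]
    · rw [wt_eq_zero p h]; simp [hba, not_lt_of_gt h, ne_of_lt h]

end ChromAux

namespace ChromAux
variable {n : ℕ} (p : Fin n → Pt)

lemma wt_nonneg (z : Pt) (a b : Fin n) : 0 ≤ wt p z a b := by
  unfold wt; split_ifs <;> norm_num

lemma dist_lt_code {z : Pt} {a b : Fin n} (h : dist z (p a) < dist z (p b)) :
    code p z b + 1 ≤ code p z a := by
  rw [code_eq_sum, code_eq_sum]
  have key : ∀ c : Fin n, wt p z b c + (if c = b then 1 else 0) ≤ wt p z a c := by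
    intro c
    by_cases hcb : c = b
    · subst hcb
      rw [wt_eq_one p h]
      simp [wt]
    · simp only [if_neg hcb, add_zero]
      by_cases hca : c = a
      · subst hca
        rw [wt_eq_zero p h]
        simp [wt]
      · rcases lt_trichotomy (dist z (p b)) (dist z (p c)) with h' | h' | h'
        · rw [wt_eq_one p h', wt_eq_one p (lt_trans h h')]
        · rw [wt_eq_half p hcb h', wt_eq_one p (h.trans_eq h')]; norm_num
        · rw [wt_eq_zero p h']
          exact wt_nonneg p z a c
  have hsum := Finset.sum_le_sum (fun c (_ : c ∈ Finset.univ) => key c)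
  rw [Finset.sum_add_distrib, Finset.sum_ite_eq' Finset.univ b (fun _ => (1:ℚ))] at hsum
  simpa using hsum

lemma tie_code {z : Pt} {a b : Fin n} (h : dist z (p a) = dist z (p b)) :
    code p z a = code p z b := by
  by_cases hab : a = b
  · subst hab; rfl
  rw [code_eq_sum, code_eq_sum]
  rw [← Finset.sum_compl_add_sum ({a, b} : Finset (Fin n)),
      ← Finset.sum_compl_add_sum ({a, b} : Finset (Fin n)) (wt p z b)]
  congr 1
  · refine Finset.sum_congr rfl fun c hc => ?_
    simp only [Finset.mem_compl, Finset.mem_insert, Finset.mem_singleton, not_or] at hc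
    obtain ⟨hca, hcb⟩ := hc
    rcases lt_trichotomy (dist z (p a)) (dist z (p c)) with h' | h' | h'
    · rw [wt_eq_one p h', wt_eq_one p (h.symm.trans_lt h')]
    · rw [wt_eq_half p hca h', wt_eq_half p hcb (h.symm.trans h')]
    · rw [wt_eq_zero p h', wt_eq_zero p (h'.trans_eq h)]
  · rw [Finset.sum_pair hab, Finset.sum_pair hab]
    have e1 : wt p z a b = 1/2 := wt_eq_half p (Ne.symm hab) h
    have e2 : wt p z b a = 1/2 := wt_eq_half p hab h.symm
    have e3 : wt p z a a = 0 := by simp [wt]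
    have e4 : wt p z b b = 0 := by simp [wt]
    rw [e1, e2, e3, e4]; ring


lemma cell_no_tie {x : Pt} (hx : CellPoint p x) {a b : Fin n} (hab : a ≠ b) :
    dist x (p a) ≠ dist x (p b) :=
  fun h => hx a b ⟨hab, h⟩

lemma cell_nat {x : Pt} (hx : CellPoint p x) (a : Fin n) : ∃ m : ℕ, code p x a = m := by
  refine ⟨Set.ncard {j : Fin n | j ≠ a ∧ dist x (p a) < dist x (p j)}, ?_⟩
  have : {j : Fin n | j ≠ a ∧ dist x (p j) = dist x (p a)} = ∅ := by
    ext j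
    simp only [Set.mem_setOf_eq, Set.mem_empty_iff_false, iff_false, not_and]
    intro hj
    exact cell_no_tie p hx hj
  rw [code, this]
  simp

lemma cell_sep {x : Pt} (hx : CellPoint p x) {a b : Fin n} (hab : a ≠ b) :
    1 ≤ |code p x a - code p x b| := by
  rcases lt_trichotomy (dist x (p a)) (dist x (p b)) with h | h | h
  · have := dist_lt_code p h
    calc (1:ℚ) ≤ code p x a - code p x b := by linarith
      _ ≤ |code p x a - code p x b| := le_abs_self _
  · exact absurd h (cell_no_tie p hx hab)
  · have := dist_lt_code p h
    calc (1:ℚ) ≤ code p x b - code p x a := by linarith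
      _ ≤ |code p x a - code p x b| := by rw [abs_sub_comm]; exact le_abs_self _

lemma cell_code_lt_iff {x : Pt} (hx : CellPoint p x) {a b : Fin n} (hab : a ≠ b) :
    code p x b < code p x a ↔ dist x (p a) < dist x (p b) := by
  constructor
  · intro hlt
    rcases lt_trichotomy (dist x (p a)) (dist x (p b)) with h | h | h
    · exact h
    · exact absurd h (cell_no_tie p hx hab)
    · have := dist_lt_code p h; linarith
  · intro h
    have := dist_lt_code p h; linarith

/-- arithmetic: two values at least 1 apart. -/
lemma abs2 (a b q : ℚ) (h : 1 ≤ |a - b|) : 1 ≤ |a - q| + |b - q| := by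
  have := abs_sub_le a q b
  rw [abs_sub_comm q b] at this
  linarith

lemma abs3 (a b c q : ℚ) (hab : 1 ≤ |a - b|) (hac : 1 ≤ |a - c|) (hbc : 1 ≤ |b - c|) :
    2 ≤ |a - q| + |b - q| + |c - q| := by
  have h1 := le_abs_self (a - q); have h2 := neg_abs_le (a - q)
  have h3 := le_abs_self (b - q); have h4 := neg_abs_le (b - q)
  have h5 := le_abs_self (c - q); have h6 := neg_abs_le (c - q)
  have n1 := abs_nonneg (a - q); have n2 := abs_nonneg (b - q); have n3 := abs_nonneg (c - q)
  rcases le_abs.mp hab with h | h <;> rcases le_abs.mp hac with h' | h' <;>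
    rcases le_abs.mp hbc with h'' | h'' <;> linarith

lemma halfint_sep (m m' : ℕ) : (1/2 : ℚ) ≤ |(m' : ℚ) - ((m : ℚ) + 1/2)| := by
  rcases le_or_gt m' m with h | h
  · have : (m' : ℚ) ≤ m := by exact_mod_cast h
    rw [abs_sub_comm]
    calc (1/2 : ℚ) ≤ (m : ℚ) + 1/2 - m' := by linarith
      _ ≤ |(m : ℚ) + 1/2 - m'| := le_abs_self _
  · have : (m : ℚ) + 1 ≤ m' := by exact_mod_cast h
    calc (1/2 : ℚ) ≤ (m' : ℚ) - ((m : ℚ) + 1/2) := by linarith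
      _ ≤ _ := le_abs_self _

/-- difference of codes localized to a finset containing all differing weights. -/
lemma code_shift (y z : Pt) (a : Fin n) (S : Finset (Fin n))
    (hS : ∀ c ∉ S, wt p y a c = wt p z a c) :
    code p y a - code p z a = ∑ c ∈ S, (wt p y a c - wt p z a c) := by
  rw [code_eq_sum, code_eq_sum, ← Finset.sum_sub_distrib]
  exact (Finset.sum_subset (Finset.subset_univ S) (fun c _ hc => by rw [hS c hc, sub_self])).symm


/-- The (affine) power-difference function of the pair `(a,b)`. -/
def F (a b : Fin n) (y : Pt) : ℝ := dist y (p a) ^ 2 - dist y (p b) ^ 2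

lemma F_lt_iff (y : Pt) (a b : Fin n) :
    dist y (p a) < dist y (p b) ↔ F p a b y < 0 := by
  unfold F
  rw [sub_neg]
  constructor
  · intro h; exact pow_lt_pow_left₀ h dist_nonneg (by norm_num)
  · intro h; exact lt_of_pow_lt_pow_left₀ 2 dist_nonneg h

lemma F_eq_iff (y : Pt) (a b : Fin n) :
    dist y (p a) = dist y (p b) ↔ F p a b y = 0 := by
  unfold F
  rw [sub_eq_zero]
  constructor
  · intro h; rw [h]
  · intro h
    have h1 : |dist y (p a)| = |dist y (p b)| := by
      rw [← Real.sqrt_sq_eq_abs, ← Real.sqrt_sq_eq_abs, h]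
    rwa [abs_of_nonneg dist_nonneg, abs_of_nonneg dist_nonneg] at h1

lemma F_affine (a b : Fin n) (v x : Pt) (t : ℝ) :
    F p a b (v + t • (x - v)) = (1 - t) * F p a b v + t * F p a b x := by
  have expand : ∀ y : Pt, F p a b y
      = -2 * (inner ℝ y (p a) : ℝ) + 2 * (inner ℝ y (p b) : ℝ) + ‖p a‖ ^ 2 - ‖p b‖ ^ 2 := by
    intro y
    unfold F
    rw [dist_eq_norm, dist_eq_norm, norm_sub_sq_real, norm_sub_sq_real]
    ring
  rw [expand, expand, expand]
  have l1 : (inner ℝ (v + t • (x - v)) (p a) : ℝ)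
      = inner ℝ v (p a) + t * ((inner ℝ x (p a) : ℝ) - inner ℝ v (p a)) := by
    rw [inner_add_left, real_inner_smul_left, inner_sub_left]
  have l2 : (inner ℝ (v + t • (x - v)) (p b) : ℝ)
      = inner ℝ v (p b) + t * ((inner ℝ x (p b) : ℝ) - inner ℝ v (p b)) := by
    rw [inner_add_left, real_inner_smul_left, inner_sub_left]
  rw [l1, l2]
  ring


/-- Adjacency: the strict order at `x` refines the weak order at `v`. -/
def Adj (v x : Pt) : Prop :=
  ∀ a b : Fin n, dist v (p a) < dist v (p b) → dist x (p a) < dist x (p b)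

lemma seg_code {v x : Pt} (hx : CellPoint p x) (hA : Adj p v x)
    {t : ℝ} (ht0 : 0 < t) (ht1 : t < 1) :
    code p (v + t • (x - v)) = code p x := by
  set y := v + t • (x - v) with hy
  have key : ∀ a b : Fin n, a ≠ b →
      (dist y (p a) < dist y (p b) ↔ dist x (p a) < dist x (p b)) := by
    intro a b hab
    have hFy : F p a b y = (1 - t) * F p a b v + t * F p a b x := F_affine p a b v x t
    have hFx : F p a b x ≠ 0 := fun h => cell_no_tie p hx hab ((F_eq_iff p x a b).mpr h)
    rw [F_lt_iff p y a b, F_lt_iff p x a b]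
    rcases lt_trichotomy (F p a b v) 0 with hv0 | hv0 | hv0
    · have hxlt : F p a b x < 0 :=
        (F_lt_iff p x a b).mp (hA a b ((F_lt_iff p v a b).mpr hv0))
      constructor
      · intro _; exact hxlt
      · intro _; rw [hFy]; nlinarith
    · rw [hFy, hv0, mul_zero, zero_add]
      constructor
      · intro h; nlinarith
      · intro h; nlinarith
    · have hblt : dist v (p b) < dist v (p a) := by
        rcases lt_trichotomy (dist v (p a)) (dist v (p b)) with h | h | h
        · exact absurd ((F_lt_iff p v a b).mp h) (by linarith)
        · exact absurd ((F_eq_iff p v a b).mp h) (by intro hh; rw [hh] at hv0; exact lt_irrefl _ hv0)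
        · exact h
      have hxgt : dist x (p b) < dist x (p a) := hA b a hblt
      have hFxpos : 0 < F p a b x := by
        have := (F_lt_iff p x b a).mp hxgt
        unfold F at this ⊢; linarith
      constructor
      · intro h; rw [hFy] at h; nlinarith
      · intro h; nlinarith
  funext a
  rw [code_eq_sum, code_eq_sum]
  refine Finset.sum_congr rfl fun c _ => ?_
  by_cases hca : c = a
  · subst hca; simp [wt]
  · rcases lt_trichotomy (dist x (p a)) (dist x (p c)) with h | h | h
    · rw [wt_eq_one p h, wt_eq_one p ((key a c (Ne.symm hca)).mpr h)]
    · exact absurd h (cell_no_tie p hx (Ne.symm hca))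
    · rw [wt_eq_zero p h, wt_eq_zero p ((key c a hca).mpr h)]

lemma closure_of_adj {v x : Pt} (hx : CellPoint p x) (hA : Adj p v x) :
    v ∈ closure (particle p x) := by
  have hmem : ∀ t ∈ Set.Ioo (0:ℝ) 1, (v + t • (x - v)) ∈ particle p x := by
    intro t ht
    exact seg_code p hx hA ht.1 ht.2
  have hne : (nhdsWithin (0:ℝ) (Set.Ioo 0 1)).NeBot := by
    rw [← mem_closure_iff_nhdsWithin_neBot, closure_Ioo (by norm_num : (0:ℝ) ≠ 1)]
    exact ⟨le_refl 0, by norm_num⟩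
  have hcont : Filter.Tendsto (fun t : ℝ => v + t • (x - v))
      (nhdsWithin (0:ℝ) (Set.Ioo 0 1)) (nhds v) := by
    have : Filter.Tendsto (fun t : ℝ => v + t • (x - v)) (nhds 0) (nhds (v + (0:ℝ) • (x - v))) := by
      exact (continuous_const.add ((continuous_id.smul continuous_const))).tendsto 0
    rw [zero_smul, add_zero] at this
    exact this.mono_left nhdsWithin_le_nhds
  exact mem_closure_of_tendsto hcont (Filter.eventually_iff_exists_mem.mpr
    ⟨Set.Ioo 0 1, self_mem_nhdsWithin, hmem⟩)

lemma adj_of_closure {v x : Pt} (hx : CellPoint p x)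
    (hcl : v ∈ closure (particle p x)) : Adj p v x := by
  intro a b hab
  set U : Set Pt := ⋂ (a' : Fin n), ⋂ (b' : Fin n),
    {y : Pt | dist v (p a') < dist v (p b') → dist y (p a') < dist y (p b')} with hU
  have hUopen : IsOpen U := by
    refine isOpen_iInter_of_finite fun a' => isOpen_iInter_of_finite fun b' => ?_
    by_cases h : dist v (p a') < dist v (p b')
    · have : {y : Pt | dist v (p a') < dist v (p b') → dist y (p a') < dist y (p b')}
          = {y : Pt | dist y (p a') < dist y (p b')} := by
        ext y; simp [h]
      rw [this]
      exact isOpen_lt (Continuous.dist continuous_id continuous_const)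
        (Continuous.dist continuous_id continuous_const)
    · have : {y : Pt | dist v (p a') < dist v (p b') → dist y (p a') < dist y (p b')}
          = Set.univ := by
        ext y; simp [h]
      rw [this]; exact isOpen_univ
  have hvU : v ∈ U := by
    simp only [hU, Set.mem_iInter, Set.mem_setOf_eq]
    exact fun a' b' h => h
  obtain ⟨y, hyU, hypart⟩ := _root_.mem_closure_iff.mp hcl U hUopen hvU
  have h1 : dist y (p a) < dist y (p b) := by
    simp only [hU, Set.mem_iInter, Set.mem_setOf_eq] at hyU
    exact hyU a b hab
  have hne : a ≠ b := fun h => by rw [h] at hab; exact lt_irrefl _ hab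
  have h2 : code p y b + 1 ≤ code p y a := dist_lt_code p h1
  have h3 : code p y = code p x := hypart
  rw [h3] at h2
  exact (cell_code_lt_iff p hx hne).mp (by linarith)


lemma wt_self (z : Pt) (a : Fin n) : wt p z a a = 0 := by simp [wt]

lemma wt_eq_of_adj {v x : Pt} (hA : Adj p v x) (a c : Fin n)
    (h : c = a ∨ dist v (p a) ≠ dist v (p c)) : wt p v a c = wt p x a c := by
  rcases h with rfl | hne
  · rw [wt_self, wt_self]
  · rcases lt_trichotomy (dist v (p a)) (dist v (p c)) with h' | h' | h'
    · rw [wt_eq_one p h', wt_eq_one p (hA a c h')]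
    · exact absurd h' hne
    · rw [wt_eq_zero p h', wt_eq_zero p (hA c a h')]

lemma tieset_singleton {v : Pt} {i j : Fin n} (hij : i ≠ j)
    (tij : dist v (p i) = dist v (p j))
    (h : ∀ b, b ≠ i → dist v (p b) = dist v (p i) → b = j) :
    {b : Fin n | b ≠ i ∧ dist v (p b) = dist v (p i)} = {j} := by
  ext b
  simp only [Set.mem_setOf_eq, Set.mem_singleton_iff]
  constructor
  · rintro ⟨h1, h2⟩; exact h b h1 h2
  · rintro rfl; exact ⟨hij.symm, tij.symm⟩

lemma code_half {v : Pt} {i j : Fin n}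
    (hset : {b : Fin n | b ≠ i ∧ dist v (p b) = dist v (p i)} = {j}) :
    ∃ m : ℕ, code p v i = m + 1/2 := by
  refine ⟨Set.ncard {b : Fin n | b ≠ i ∧ dist v (p i) < dist v (p b)}, ?_⟩
  rw [code, hset, Set.ncard_singleton]
  norm_num

lemma mem_pair_left {a c i j : Fin n} (h : ({a, c} : Set (Fin n)) = {i, j}) :
    a = i ∨ a = j := by
  have : a ∈ ({i, j} : Set (Fin n)) := by
    rw [← h]; exact Set.mem_insert _ _
  simpa using this

lemma mem_pair_right {a c i j : Fin n} (h : ({a, c} : Set (Fin n)) = {i, j}) :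
    c = i ∨ c = j := by
  have : c ∈ ({i, j} : Set (Fin n)) := by
    rw [← h]; exact Set.mem_insert_of_mem _ rfl
  simpa using this

section Case2I

variable {v x : Pt} {i j u w : Fin n}

lemma case2I (hx : CellPoint p x) (hv : Vertex2I p v) :
    2 ≤ chromDist p v x ∧ (chromDist p v x = 2 → Adj p v x) ∧
      (Adj p v x → chromDist p v x = 2) := by
  classical
  obtain ⟨i, j, u, w, hij, hiu, hiw, hju, hjw, huw, tij, tuw, hcl⟩ := hv
  have dij : dist v (p i) = dist v (p j) := tij.2
  have duw : dist v (p u) = dist v (p w) := tuw.2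
  -- tie structure
  have huntied : ∀ a c : Fin n, a ≠ i → a ≠ j → a ≠ u → a ≠ w → c ≠ a →
      dist v (p a) ≠ dist v (p c) := by
    intro a c h1 h2 h3 h4 h5 heq
    rcases hcl a c ⟨Ne.symm h5, heq⟩ with h | h
    · rcases mem_pair_left h with rfl | rfl
      · exact h1 rfl
      · exact h2 rfl
    · rcases mem_pair_left h with rfl | rfl
      · exact h3 rfl
      · exact h4 rfl
  have htie_i : ∀ b, b ≠ i → dist v (p b) = dist v (p i) → b = j := by
    intro b hb hbe
    rcases hcl i b ⟨Ne.symm hb, hbe.symm⟩ with h | h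
    · rcases mem_pair_right h with rfl | rfl
      · exact absurd rfl hb
      · rfl
    · rcases mem_pair_left h with rfl | rfl
      · exact absurd rfl hiu
      · exact absurd rfl hiw
  have htie_j : ∀ b, b ≠ j → dist v (p b) = dist v (p j) → b = i := by
    intro b hb hbe
    rcases hcl j b ⟨Ne.symm hb, hbe.symm⟩ with h | h
    · rcases mem_pair_right h with rfl | rfl
      · rfl
      · exact absurd rfl hb
    · rcases mem_pair_left h with rfl | rfl
      · exact absurd rfl hju
      · exact absurd rfl hjw
  have htie_u : ∀ b, b ≠ u → dist v (p b) = dist v (p u) → b = w := by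
    intro b hb hbe
    rcases hcl u b ⟨Ne.symm hb, hbe.symm⟩ with h | h
    · rcases mem_pair_left h with rfl | rfl
      · exact absurd rfl (Ne.symm hiu)
      · exact absurd rfl (Ne.symm hju)
    · rcases mem_pair_right h with rfl | rfl
      · exact absurd rfl hb
      · rfl
  have htie_w : ∀ b, b ≠ w → dist v (p b) = dist v (p w) → b = u := by
    intro b hb hbe
    rcases hcl w b ⟨Ne.symm hb, hbe.symm⟩ with h | h
    · rcases mem_pair_left h with rfl | rfl
      · exact absurd rfl (Ne.symm hiw)
      · exact absurd rfl (Ne.symm hjw)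
    · rcases mem_pair_right h with rfl | rfl
      · rfl
      · exact absurd rfl hb
  -- half-integer codes at the tied indices
  have hhalf_i := code_half p (tieset_singleton p hij dij htie_i)
  have hhalf_j := code_half p (tieset_singleton p (Ne.symm hij) dij.symm htie_j)
  have hhalf_u := code_half p (tieset_singleton p huw duw htie_u)
  have hhalf_w := code_half p (tieset_singleton p (Ne.symm huw) duw.symm htie_w)
  -- per-index lower bounds
  set f : Fin n → ℚ := fun a => |code p v a - code p x a| with hf
  have hfbd : ∀ a : Fin n, (∃ m : ℕ, code p v a = m + 1/2) → 1/2 ≤ f a := by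
    rintro a ⟨m, hm⟩
    obtain ⟨m', hm'⟩ := cell_nat p hx a
    rw [hf]
    simp only
    rw [hm, hm', abs_sub_comm]
    exact halfint_sep m m'
  have hbi : 1/2 ≤ f i := hfbd i hhalf_i
  have hbj : 1/2 ≤ f j := hfbd j hhalf_j
  have hbu : 1/2 ≤ f u := hfbd u hhalf_u
  have hbw : 1/2 ≤ f w := hfbd w hhalf_w
  -- pair lower bounds via separation
  have hqij : code p v i = code p v j := tie_code p dij
  have hquw : code p v u = code p v w := tie_code p duw
  have hpair1 : 1 ≤ f i + f j := by
    have h1 : 1 ≤ |code p x i - code p x j| := cell_sep p hx hij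
    have := abs2 (code p x i) (code p x j) (code p v i) h1
    rw [hf]; simp only
    rw [abs_sub_comm (code p v i), abs_sub_comm (code p v j), ← hqij] at *
    linarith [this]
  have hpair2 : 1 ≤ f u + f w := by
    have h1 : 1 ≤ |code p x u - code p x w| := cell_sep p hx huw
    have := abs2 (code p x u) (code p x w) (code p v u) h1
    rw [hf]; simp only
    rw [abs_sub_comm (code p v u), abs_sub_comm (code p v w), ← hquw] at *
    linarith [this]
  -- finset T
  set T : Finset (Fin n) := {i, j, u, w} with hT
  have hTmem : ∀ a, a ∈ T ↔ a = i ∨ a = j ∨ a = u ∨ a = w := by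
    intro a; simp [hT]
  have hTsum : ∀ g : Fin n → ℚ, ∑ a ∈ T, g a = g i + g j + g u + g w := by
    intro g
    rw [hT, Finset.sum_insert (by simp [hij, hiu, hiw]),
      Finset.sum_insert (by simp [hju, hjw]), Finset.sum_pair huw]
    ring
  have hchrom : chromDist p v x = ∑ a, f a := by rw [chromDist]
  have hsplit : (∑ a ∈ Finset.univ \ T, f a) + ∑ a ∈ T, f a = chromDist p v x := by
    rw [hchrom]; exact Finset.sum_sdiff (Finset.subset_univ T)
  have hrest_nonneg : 0 ≤ ∑ a ∈ Finset.univ \ T, f a :=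
    Finset.sum_nonneg fun a _ => abs_nonneg _
  have hTval : ∑ a ∈ T, f a = f i + f j + f u + f w := hTsum f
  have hge2 : 2 ≤ chromDist p v x := by
    rw [← hsplit, hTval]; linarith
  refine ⟨hge2, ?_, ?_⟩
  · -- δ = 2 → Adj
    intro h2
    have hTle : ∑ a ∈ T, f a ≤ 2 := by
      rw [h2] at hsplit; linarith
    have hrest0 : ∑ a ∈ Finset.univ \ T, f a = 0 := by
      rw [h2] at hsplit
      rw [hTval] at hTle hsplit
      linarith [hpair1, hpair2]
    have hoffT : ∀ a, a ∉ T → f a = 0 := by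
      intro a ha
      have := (Finset.sum_eq_zero_iff_of_nonneg
        (fun b _ => abs_nonneg (code p v b - code p x b))).mp hrest0 a
        (Finset.mem_sdiff.mpr ⟨Finset.mem_univ a, ha⟩)
      exact this
    have hbound : ∀ a, f a ≤ 1/2 := by
      intro a
      by_cases ha : a ∈ T
      · rw [hTval] at hTle
        rcases (hTmem a).mp ha with rfl | rfl | rfl | rfl <;> linarith
      · rw [hoffT a ha]; norm_num
    intro a b hab
    have hne : a ≠ b := fun h => by rw [h] at hab; exact lt_irrefl _ hab
    have hvc : code p v b + 1 ≤ code p v a := dist_lt_code p hab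
    have hba := hbound a
    have hbb := hbound b
    rw [hf] at hba hbb
    simp only at hba hbb
    have ha1 := (abs_le.mp hba).1
    have ha2 := (abs_le.mp hba).2
    have hb1 := (abs_le.mp hbb).1
    have hb2 := (abs_le.mp hbb).2
    have hxord : code p x b ≤ code p x a := by linarith
    have hsep := cell_sep p hx hne
    rcases le_abs.mp hsep with h | h
    · exact (cell_code_lt_iff p hx hne).mp (by linarith)
    · linarith
  · -- Adj → δ = 2
    intro hA
    have hoff : ∀ a, a ∉ T → f a = 0 := by
      intro a ha
      rw [hTmem] at ha
      push_neg at ha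
      obtain ⟨h1, h2, h3, h4⟩ := ha
      have : code p v a - code p x a = ∑ c ∈ (∅ : Finset (Fin n)), (wt p v a c - wt p x a c) := by
        refine code_shift p v x a ∅ fun c _ => ?_
        by_cases hca : c = a
        · exact wt_eq_of_adj p hA a c (Or.inl hca)
        · exact wt_eq_of_adj p hA a c (Or.inr (huntied a c h1 h2 h3 h4 hca))
      rw [hf]; simp only
      rw [this, Finset.sum_empty, abs_zero]
    -- value at a tied index
    have hval : ∀ a b : Fin n, b ≠ a → dist v (p a) = dist v (p b) →
        (∀ c, c ∉ ({b} : Finset (Fin n)) → wt p v a c = wt p x a c) → f a = 1/2 := by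
      intro a b hba hdab hS
      have hshift := code_shift p v x a {b} hS
      rw [Finset.sum_singleton] at hshift
      have hwv : wt p v a b = 1/2 := wt_eq_half p hba hdab
      have hab' : a ≠ b := Ne.symm hba
      rw [hf]; simp only
      rw [hshift, hwv]
      rcases lt_trichotomy (dist x (p a)) (dist x (p b)) with h | h | h
      · rw [wt_eq_one p h]; norm_num
      · exact absurd h (cell_no_tie p hx hab')
      · rw [wt_eq_zero p h]; norm_num
    have hSgen : ∀ a b : Fin n, (∀ c, c ≠ a → c ≠ b → dist v (p a) ≠ dist v (p c)) →
        ∀ c, c ∉ ({b} : Finset (Fin n)) → wt p v a c = wt p x a c := by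
      intro a b hun c hc
      rw [Finset.mem_singleton] at hc
      by_cases hca : c = a
      · exact wt_eq_of_adj p hA a c (Or.inl hca)
      · exact wt_eq_of_adj p hA a c (Or.inr (hun c hca hc))
    have hfi : f i = 1/2 := by
      refine hval i j (Ne.symm hij) dij (hSgen i j ?_)
      intro c hci hcj heq
      exact hcj (htie_i c hci heq.symm)
    have hfj : f j = 1/2 := by
      refine hval j i hij dij.symm (hSgen j i ?_)
      intro c hcj hci heq
      exact hci (htie_j c hcj heq.symm)
    have hfu : f u = 1/2 := by
      refine hval u w (Ne.symm huw) duw (hSgen u w ?_)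
      intro c hcu hcw heq
      exact hcw (htie_u c hcu heq.symm)
    have hfw : f w = 1/2 := by
      refine hval w u huw duw.symm (hSgen w u ?_)
      intro c hcw hcu heq
      exact hcu (htie_w c hcw heq.symm)
    have : chromDist p v x = ∑ a ∈ T, f a := by
      rw [hchrom]
      exact (Finset.sum_subset (Finset.subset_univ T) (fun a _ ha => hoff a ha)).symm
    rw [this, hTval, hfi, hfj, hfu, hfw]
    norm_num

end Case2I


section Case3I

lemma code_plus_one {v : Pt} {i j k : Fin n} (hjk : j ≠ k)
    (hset : {b : Fin n | b ≠ i ∧ dist v (p b) = dist v (p i)} = {j, k}) :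
    ∃ m : ℕ, code p v i = m + 1 := by
  refine ⟨Set.ncard {b : Fin n | b ≠ i ∧ dist v (p i) < dist v (p b)}, ?_⟩
  rw [code, hset, Set.ncard_pair hjk]
  norm_num

lemma case3I {v x : Pt} (hx : CellPoint p x) (hv : Vertex3I p v) :
    2 ≤ chromDist p v x ∧ (chromDist p v x = 2 → Adj p v x) ∧
      (Adj p v x → chromDist p v x = 2) := by
  classical
  obtain ⟨i, j, k, hij, hik, hjk, hcl⟩ := hv
  have memi : i ∈ ({i, j, k} : Set (Fin n)) := by simp
  have memj : j ∈ ({i, j, k} : Set (Fin n)) := by simp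
  have memk : k ∈ ({i, j, k} : Set (Fin n)) := by simp
  have dij : dist v (p i) = dist v (p j) := ((hcl i j).mpr ⟨hij, memi, memj⟩).2
  have dik : dist v (p i) = dist v (p k) := ((hcl i k).mpr ⟨hik, memi, memk⟩).2
  have djk : dist v (p j) = dist v (p k) := ((hcl j k).mpr ⟨hjk, memj, memk⟩).2
  have huntied : ∀ a c : Fin n, c ≠ a → dist v (p a) = dist v (p c) →
      (a = i ∨ a = j ∨ a = k) ∧ (c = i ∨ c = j ∨ c = k) := by
    intro a c hca heq
    have := (hcl a c).mp ⟨Ne.symm hca, heq⟩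
    obtain ⟨-, ha, hc⟩ := this
    constructor
    · simpa using ha
    · simpa using hc
  -- tie sets
  have hset_i : {b : Fin n | b ≠ i ∧ dist v (p b) = dist v (p i)} = {j, k} := by
    ext b
    simp only [Set.mem_setOf_eq, Set.mem_insert_iff, Set.mem_singleton_iff]
    constructor
    · rintro ⟨hbi, hbe⟩
      rcases (huntied i b (hbi) hbe.symm).2 with h | h | h
      · exact absurd h hbi
      · exact Or.inl h
      · exact Or.inr h
    · rintro (rfl | rfl)
      · exact ⟨Ne.symm hij, dij.symm⟩
      · exact ⟨Ne.symm hik, dik.symm⟩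
  have hset_j : {b : Fin n | b ≠ j ∧ dist v (p b) = dist v (p j)} = {i, k} := by
    ext b
    simp only [Set.mem_setOf_eq, Set.mem_insert_iff, Set.mem_singleton_iff]
    constructor
    · rintro ⟨hbj, hbe⟩
      rcases (huntied j b (hbj) hbe.symm).2 with h | h | h
      · exact Or.inl h
      · exact absurd h hbj
      · exact Or.inr h
    · rintro (rfl | rfl)
      · exact ⟨hij, dij⟩
      · exact ⟨Ne.symm hjk, djk.symm⟩
  have hset_k : {b : Fin n | b ≠ k ∧ dist v (p b) = dist v (p k)} = {i, j} := by
    ext b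
    simp only [Set.mem_setOf_eq, Set.mem_insert_iff, Set.mem_singleton_iff]
    constructor
    · rintro ⟨hbk, hbe⟩
      rcases (huntied k b (hbk) hbe.symm).2 with h | h | h
      · exact Or.inl h
      · exact Or.inr h
      · exact absurd h hbk
    · rintro (rfl | rfl)
      · exact ⟨hik, dik⟩
      · exact ⟨hjk, djk⟩
  have hint_i := code_plus_one p hjk hset_i
  have hint_j := code_plus_one p hik hset_j
  have hint_k := code_plus_one p hij hset_k
  have hqij : code p v i = code p v j := tie_code p dij
  have hqik : code p v i = code p v k := tie_code p dik
  set f : Fin n → ℚ := fun a => |code p v a - code p x a| with hf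
  -- pair bounds
  have hpair : ∀ a b : Fin n, a ≠ b → code p v a = code p v b → 1 ≤ f a + f b := by
    intro a b hab hq
    have h1 : 1 ≤ |code p x a - code p x b| := cell_sep p hx hab
    have := abs2 (code p x a) (code p x b) (code p v a) h1
    rw [hf]; simp only
    rw [abs_sub_comm (code p v a), abs_sub_comm (code p v b), ← hq] at *
    linarith [this]
  have hpij : 1 ≤ f i + f j := hpair i j hij hqij
  have hpik : 1 ≤ f i + f k := hpair i k hik hqik
  have hpjk : 1 ≤ f j + f k := hpair j k hjk (hqij.symm.trans hqik)
  -- triple bound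
  have habs : ∀ a : Fin n, f a = |code p x a - code p v a| := by
    intro a; rw [hf]; simp only; rw [abs_sub_comm]
  have htrip : 2 ≤ f i + f j + f k := by
    have h1 : 1 ≤ |code p x i - code p x j| := cell_sep p hx hij
    have h2 : 1 ≤ |code p x i - code p x k| := cell_sep p hx hik
    have h3 : 1 ≤ |code p x j - code p x k| := cell_sep p hx hjk
    have h4 := abs3 (code p x i) (code p x j) (code p x k) (code p v i) h1 h2 h3
    have ei := habs i
    have ej : f j = |code p x j - code p v i| := by rw [habs j, hqij]
    have ek : f k = |code p x k - code p v i| := by rw [habs k, hqik]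
    linarith
  -- finset T
  set T : Finset (Fin n) := {i, j, k} with hT
  have hTmem : ∀ a, a ∈ T ↔ a = i ∨ a = j ∨ a = k := by
    intro a; simp [hT]
  have hTsum : ∀ g : Fin n → ℚ, ∑ a ∈ T, g a = g i + g j + g k := by
    intro g
    rw [hT, Finset.sum_insert (by simp [hij, hik]), Finset.sum_pair hjk]
    ring
  have hchrom : chromDist p v x = ∑ a, f a := by rw [chromDist]
  have hsplit : (∑ a ∈ Finset.univ \ T, f a) + ∑ a ∈ T, f a = chromDist p v x := by
    rw [hchrom]; exact Finset.sum_sdiff (Finset.subset_univ T)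
  have hrest_nonneg : 0 ≤ ∑ a ∈ Finset.univ \ T, f a :=
    Finset.sum_nonneg fun a _ => abs_nonneg _
  have hTval : ∑ a ∈ T, f a = f i + f j + f k := hTsum f
  have hge2 : 2 ≤ chromDist p v x := by
    rw [← hsplit, hTval]; linarith
  refine ⟨hge2, ?_, ?_⟩
  · -- δ = 2 → Adj
    intro h2
    have hTle : ∑ a ∈ T, f a ≤ 2 := by
      rw [h2] at hsplit; linarith
    have hrest0 : ∑ a ∈ Finset.univ \ T, f a = 0 := by
      rw [h2] at hsplit
      rw [hTval] at hTle hsplit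
      linarith
    have hoffT : ∀ a, a ∉ T → f a = 0 := by
      intro a ha
      exact (Finset.sum_eq_zero_iff_of_nonneg
        (fun b _ => abs_nonneg (code p v b - code p x b))).mp hrest0 a
        (Finset.mem_sdiff.mpr ⟨Finset.mem_univ a, ha⟩)
    rw [hTval] at hTle
    have hbi : f i ≤ 1 := by linarith
    have hbj : f j ≤ 1 := by linarith
    have hbk : f k ≤ 1 := by linarith
    intro a b hab
    have hne : a ≠ b := fun h => by rw [h] at hab; exact lt_irrefl _ hab
    have hvc : code p v b + 1 ≤ code p v a := dist_lt_code p hab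
    have hfa_eq : f a = |code p v a - code p x a| := by rw [hf]
    have hfb_eq : f b = |code p v b - code p x b| := by rw [hf]
    have hxord : code p x b ≤ code p x a := by
      by_cases haT : a ∈ T
      · by_cases hbT : b ∈ T
        · -- both tied at v: contradiction with strict inequality
          exfalso
          have hmema : a ∈ ({i, j, k} : Set (Fin n)) := by
            rcases (hTmem a).mp haT with rfl | rfl | rfl <;> simp
          have hmemb : b ∈ ({i, j, k} : Set (Fin n)) := by
            rcases (hTmem b).mp hbT with rfl | rfl | rfl <;> simp
          have := ((hcl a b).mpr ⟨hne, hmema, hmemb⟩).2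
          rw [this] at hab; exact lt_irrefl _ hab
        · have h1 : f a ≤ 1 := by
            rcases (hTmem a).mp haT with rfl | rfl | rfl <;> assumption
          have h2 : f b = 0 := hoffT b hbT
          rw [hfa_eq] at h1; rw [hfb_eq] at h2
          have ha1 := (abs_le.mp h1).1
          have ha2 := (abs_le.mp h1).2
          have hb0 : code p v b - code p x b = 0 := abs_eq_zero.mp h2
          linarith
      · have h2 : f a = 0 := hoffT a haT
        rw [hfa_eq] at h2
        have ha0 : code p v a - code p x a = 0 := abs_eq_zero.mp h2
        by_cases hbT : b ∈ T
        · have h1 : f b ≤ 1 := by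
            rcases (hTmem b).mp hbT with rfl | rfl | rfl <;> assumption
          rw [hfb_eq] at h1
          have hb1 := (abs_le.mp h1).1
          have hb2 := (abs_le.mp h1).2
          linarith
        · have h3 : f b = 0 := hoffT b hbT
          rw [hfb_eq] at h3
          have hb0 : code p v b - code p x b = 0 := abs_eq_zero.mp h3
          linarith
    have hsep := cell_sep p hx hne
    rcases le_abs.mp hsep with h | h
    · exact (cell_code_lt_iff p hx hne).mp (by linarith)
    · linarith
  · -- Adj → δ = 2
    intro hA
    have hoff : ∀ a, a ∉ T → f a = 0 := by
      intro a ha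
      rw [hTmem] at ha
      push_neg at ha
      obtain ⟨h1, h2, h3⟩ := ha
      have : code p v a - code p x a = ∑ c ∈ (∅ : Finset (Fin n)), (wt p v a c - wt p x a c) := by
        refine code_shift p v x a ∅ fun c _ => ?_
        by_cases hca : c = a
        · exact wt_eq_of_adj p hA a c (Or.inl hca)
        · refine wt_eq_of_adj p hA a c (Or.inr fun heq => ?_)
          rcases (huntied a c hca heq).1 with rfl | rfl | rfl
          · exact h1 rfl
          · exact h2 rfl
          · exact h3 rfl
      rw [hf]; simp only
      rw [this, Finset.sum_empty, abs_zero]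
    -- shifts on the triple
    have hshift : ∀ a b c : Fin n, a ≠ b → a ≠ c → b ≠ c →
        (∀ e, e ≠ a → dist v (p a) = dist v (p e) → e = b ∨ e = c) →
        dist v (p a) = dist v (p b) → dist v (p a) = dist v (p c) →
        code p v a - code p x a = (1/2 - wt p x a b) + (1/2 - wt p x a c) := by
      intro a b c hab hac hbc htie hdb hdc
      have hS : ∀ e, e ∉ ({b, c} : Finset (Fin n)) → wt p v a e = wt p x a e := by
        intro e he
        simp only [Finset.mem_insert, Finset.mem_singleton, not_or] at he
        by_cases hea : e = a
        · exact wt_eq_of_adj p hA a e (Or.inl hea)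
        · refine wt_eq_of_adj p hA a e (Or.inr fun heq => ?_)
          rcases htie e hea heq with rfl | rfl
          · exact he.1 rfl
          · exact he.2 rfl
      have := code_shift p v x a {b, c} hS
      rw [Finset.sum_pair hbc] at this
      rw [this, wt_eq_half p (Ne.symm hab) hdb, wt_eq_half p (Ne.symm hac) hdc]
    have htie_i' : ∀ e, e ≠ i → dist v (p i) = dist v (p e) → e = j ∨ e = k := by
      intro e he heq
      have : e ∈ {b : Fin n | b ≠ i ∧ dist v (p b) = dist v (p i)} := ⟨he, heq.symm⟩
      rw [hset_i] at this
      simpa using this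
    have htie_j' : ∀ e, e ≠ j → dist v (p j) = dist v (p e) → e = i ∨ e = k := by
      intro e he heq
      have : e ∈ {b : Fin n | b ≠ j ∧ dist v (p b) = dist v (p j)} := ⟨he, heq.symm⟩
      rw [hset_j] at this
      simpa using this
    have htie_k' : ∀ e, e ≠ k → dist v (p k) = dist v (p e) → e = i ∨ e = j := by
      intro e he heq
      have : e ∈ {b : Fin n | b ≠ k ∧ dist v (p b) = dist v (p k)} := ⟨he, heq.symm⟩
      rw [hset_k] at this
      simpa using this
    have hdi := hshift i j k hij hik hjk htie_i' dij dik
    have hdj := hshift j i k (Ne.symm hij) hjk hik htie_j' dij.symm djk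
    have hdk := hshift k i j (Ne.symm hik) (Ne.symm hjk) hij htie_k' dik.symm djk.symm
    have hsum2 : chromDist p v x = f i + f j + f k := by
      rw [hchrom, ← hTval]
      exact (Finset.sum_subset (Finset.subset_univ T) (fun a _ ha => hoff a ha)).symm
    rw [hsum2]
    have efi : f i = |code p v i - code p x i| := by rw [hf]
    have efj : f j = |code p v j - code p x j| := by rw [hf]
    have efk : f k = |code p v k - code p x k| := by rw [hf]
    rw [efi, efj, efk, hdi, hdj, hdk]
    rcases lt_or_gt_of_ne (cell_no_tie p hx hij) with h1 | h1 <;>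
      rcases lt_or_gt_of_ne (cell_no_tie p hx hjk) with h2 | h2 <;>
      rcases lt_or_gt_of_ne (cell_no_tie p hx hik) with h3 | h3
    · rw [wt_eq_one p h1, wt_eq_one p h3, wt_eq_zero p h1, wt_eq_one p h2,
        wt_eq_zero p h3, wt_eq_zero p h2]
      norm_num
    · exact absurd (lt_trans h1 h2) (by exact fun hh => lt_asymm hh h3)
    · rw [wt_eq_one p h1, wt_eq_one p h3, wt_eq_zero p h1, wt_eq_zero p h2,
        wt_eq_zero p h3, wt_eq_one p h2]
      norm_num
    · rw [wt_eq_one p h1, wt_eq_zero p h3, wt_eq_zero p h1, wt_eq_zero p h2,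
        wt_eq_one p h3, wt_eq_one p h2]
      norm_num
    · rw [wt_eq_zero p h1, wt_eq_one p h3, wt_eq_one p h1, wt_eq_one p h2,
        wt_eq_zero p h3, wt_eq_zero p h2]
      norm_num
    · rw [wt_eq_zero p h1, wt_eq_zero p h3, wt_eq_one p h1, wt_eq_one p h2,
        wt_eq_one p h3, wt_eq_zero p h2]
      norm_num
    · exact absurd (lt_trans h2 h1) (by exact fun hh => lt_asymm hh h3)
    · rw [wt_eq_zero p h1, wt_eq_zero p h3, wt_eq_one p h1, wt_eq_zero p h2,
        wt_eq_one p h3, wt_eq_one p h2]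
      norm_num


end Case3I

end ChromAux

/-- vertex–cell incidence: a vertex point `v` (2-I or 3-I) lies in the closure
of the cell `Ω(x)` of a cell point `x` iff `δ(v,x) = 2`; moreover `δ(v,x) < 2` never occurs,
so `v` does not lie in the closure iff `δ(v,x) > 2`. -/
theorem vertex_cell_incidence {n : ℕ} (hn : 2 ≤ n) (p : Fin n → Pt)
    (hp : Function.Injective p) (v x : Pt)
    (hv : Vertex2I p v ∨ Vertex3I p v) (hx : CellPoint p x) :
    (v ∈ closure (particle p x) ↔ chromDist p v x = 2) ∧
    2 ≤ chromDist p v x ∧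
    (v ∉ closure (particle p x) ↔ 2 < chromDist p v x) := by
  have hcase : 2 ≤ chromDist p v x ∧ (chromDist p v x = 2 → ChromAux.Adj p v x) ∧
      (ChromAux.Adj p v x → chromDist p v x = 2) := by
    rcases hv with h | h
    · exact ChromAux.case2I p hx h
    · exact ChromAux.case3I p hx h
  obtain ⟨hge, hadj, hdelta⟩ := hcase
  have hiff : v ∈ closure (particle p x) ↔ chromDist p v x = 2 := by
    constructor
    · intro h
      exact hdelta (ChromAux.adj_of_closure p hx h)
    · intro h
      exact ChromAux.closure_of_adj p hx (hadj h)
  refine ⟨hiff, hge, ?_⟩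
  constructor
  · intro h
    exact lt_of_le_of_ne hge fun he => h (hiff.mpr he.symm)
  · intro h hc
    rw [hiff.mp hc] at h
    exact lt_irrefl _ h
end
end

section
/- Edge–cell containment: let e be an edge point and x a cell point. Then Ω(e) is contained in the topological closure of Ω(x) (i.e., the edge is a boundary edge of the cell) if and only if δ(e,x) = 1. -/
noncomputable section

open Metric

section Aux
variable {n : ℕ} {p : Fin n → Pt}

lemma code_def (p : Fin n → Pt) (y : Pt) (i : Fin n) :
    code p y i = ((Set.ncard {k : Fin n | k ≠ i ∧ dist y (p i) < dist y (p k)} : ℚ))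
      + (1/2) * (Set.ncard {k : Fin n | k ≠ i ∧ dist y (p k) = dist y (p i)} : ℚ) := rfl

lemma code_eq_of_dist_eq {y : Pt} {i j : Fin n} (h : dist y (p i) = dist y (p j)) :
    code p y i = code p y j := by
  rcases eq_or_ne i j with rfl | hij
  · rfl
  have hA : {k : Fin n | k ≠ i ∧ dist y (p i) < dist y (p k)}
      = {k : Fin n | k ≠ j ∧ dist y (p j) < dist y (p k)} := by
    ext k
    simp only [Set.mem_setOf_eq]
    constructor
    · rintro ⟨_, hlt⟩
      rw [h] at hlt
      exact ⟨fun hkj => by rw [hkj] at hlt; exact lt_irrefl _ hlt, hlt⟩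
    · rintro ⟨_, hlt⟩
      rw [← h] at hlt
      exact ⟨fun hki => by rw [hki] at hlt; exact lt_irrefl _ hlt, hlt⟩
  have hEi : {k : Fin n | k ≠ i ∧ dist y (p k) = dist y (p i)}
      = insert j {k : Fin n | k ≠ i ∧ k ≠ j ∧ dist y (p k) = dist y (p i)} := by
    ext k
    simp only [Set.mem_setOf_eq, Set.mem_insert_iff]
    constructor
    · rintro ⟨hki, hk⟩
      rcases eq_or_ne k j with rfl | hkj
      · exact Or.inl rfl
      · exact Or.inr ⟨hki, hkj, hk⟩
    · rintro (rfl | ⟨hki, _, hk⟩)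
      · exact ⟨hij.symm, h.symm⟩
      · exact ⟨hki, hk⟩
  have hEj : {k : Fin n | k ≠ j ∧ dist y (p k) = dist y (p j)}
      = insert i {k : Fin n | k ≠ i ∧ k ≠ j ∧ dist y (p k) = dist y (p i)} := by
    ext k
    simp only [Set.mem_setOf_eq, Set.mem_insert_iff]
    constructor
    · rintro ⟨hkj, hk⟩
      rcases eq_or_ne k i with rfl | hki
      · exact Or.inl rfl
      · exact Or.inr ⟨hki, hkj, by rw [hk, h]⟩
    · rintro (rfl | ⟨_, hkj, hk⟩)
      · exact ⟨hij, h⟩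
      · exact ⟨hkj, by rw [hk, h]⟩
  have hjF : j ∉ {k : Fin n | k ≠ i ∧ k ≠ j ∧ dist y (p k) = dist y (p i)} := by
    simp
  have hiF : i ∉ {k : Fin n | k ≠ i ∧ k ≠ j ∧ dist y (p k) = dist y (p i)} := by
    simp
  rw [code_def, code_def, hA, hEi, hEj, Set.ncard_insert_of_notMem hjF,
    Set.ncard_insert_of_notMem hiF]

lemma code_gap {y : Pt} {i j : Fin n} (h : dist y (p i) < dist y (p j)) :
    code p y j + 1 ≤ code p y i := by
  have hij : i ≠ j := by rintro rfl; exact lt_irrefl _ h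
  set Aj := {k : Fin n | k ≠ j ∧ dist y (p j) < dist y (p k)} with hAj
  set Ej := {k : Fin n | k ≠ j ∧ dist y (p k) = dist y (p j)} with hEj
  set Ai := {k : Fin n | k ≠ i ∧ dist y (p i) < dist y (p k)} with hAi
  have hsub : insert j (Aj ∪ Ej) ⊆ Ai := by
    intro k hk
    rcases Set.mem_insert_iff.mp hk with rfl | hk
    · exact ⟨hij.symm, h⟩
    · rcases hk with hk | hk
      · obtain ⟨_, hk2⟩ := hk
        have : dist y (p i) < dist y (p k) := h.trans hk2
        exact ⟨fun hh => by rw [hh] at this; exact lt_irrefl _ this, this⟩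
      · obtain ⟨_, hk2⟩ := hk
        have : dist y (p i) < dist y (p k) := by rw [hk2]; exact h
        exact ⟨fun hh => by rw [hh] at this; exact lt_irrefl _ this, this⟩
  have hjnot : j ∉ Aj ∪ Ej := by simp [hAj, hEj]
  have hdisj : Disjoint Aj Ej := by
    rw [Set.disjoint_left]
    rintro k ⟨_, hk1⟩ ⟨_, hk2⟩
    rw [hk2] at hk1; exact lt_irrefl _ hk1
  have h1 : (Aj ∪ Ej).ncard + 1 ≤ Ai.ncard := by
    rw [← Set.ncard_insert_of_notMem hjnot]
    exact Set.ncard_le_ncard hsub (Set.toFinite _)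
  have h2 : (Aj ∪ Ej).ncard = Aj.ncard + Ej.ncard :=
    Set.ncard_union_eq hdisj (Set.toFinite _) (Set.toFinite _)
  have h3 : (Aj.ncard : ℚ) + Ej.ncard + 1 ≤ (Ai.ncard : ℚ) := by
    rw [h2] at h1; exact_mod_cast h1
  have h4 : (0:ℚ) ≤ (Ej.ncard : ℚ) := by positivity
  have h5 : (0:ℚ) ≤ (({k : Fin n | k ≠ i ∧ dist y (p k) = dist y (p i)}).ncard : ℚ) := by
    positivity
  rw [code_def, code_def]
  rw [← hAj, ← hEj, ← hAi]
  linarith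

lemma dist_lt_iff_code {y : Pt} {i j : Fin n} :
    dist y (p i) < dist y (p j) ↔ code p y j < code p y i := by
  constructor
  · intro h; have := code_gap (p := p) h; linarith
  · intro h
    rcases lt_trichotomy (dist y (p i)) (dist y (p j)) with hlt | heq | hgt
    · exact hlt
    · have := code_eq_of_dist_eq (p := p) heq; linarith
    · have := code_gap (p := p) hgt; linarith

lemma dist_eq_iff_code {y : Pt} {i j : Fin n} :
    dist y (p i) = dist y (p j) ↔ code p y i = code p y j := by
  constructor
  · exact code_eq_of_dist_eq
  · intro h
    rcases lt_trichotomy (dist y (p i)) (dist y (p j)) with hlt | heq | hgt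
    · have := code_gap (p := p) hlt; linarith
    · exact heq
    · have := code_gap (p := p) hgt; linarith

lemma resolve {e y : Pt} {i j : Fin n} (hij : i ≠ j)
    (h1 : dist e (p i) = dist e (p j))
    (h3 : ∀ k l, k ≠ l → dist e (p k) = dist e (p l) → ({k, l} : Set (Fin n)) = {i, j})
    (h2 : ∀ k l : Fin n, dist e (p k) < dist e (p l) → dist y (p k) < dist y (p l))
    (h4 : dist y (p i) < dist y (p j)) :
    code p y i = code p e i + 1/2 ∧ code p y j = code p e j - 1/2 ∧
      ∀ k, k ≠ i → k ≠ j → code p y k = code p e k := by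
  have pairext : ∀ k l : Fin n, ({k, l} : Set (Fin n)) = {i, j} →
      (k = i ∧ l = j) ∨ (k = j ∧ l = i) := fun k l h => Set.pair_eq_pair_iff.mp h
  have ytri : ∀ k l : Fin n, k ≠ l →
      (dist y (p k) < dist y (p l) ↔ (dist e (p k) < dist e (p l) ∨ (k = i ∧ l = j))) := by
    intro k l hkl
    constructor
    · intro hy
      rcases lt_trichotomy (dist e (p k)) (dist e (p l)) with h | h | h
      · exact Or.inl h
      · rcases pairext k l (h3 k l hkl h) with ⟨hk, hl⟩ | ⟨hk, hl⟩
        · exact Or.inr ⟨hk, hl⟩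
        · subst hk; subst hl; exact absurd h4 (asymm hy)
      · exact absurd (h2 _ _ h) (asymm hy)
    · rintro (h | ⟨rfl, rfl⟩)
      · exact h2 _ _ h
      · exact h4
  have hEe_i : {k : Fin n | k ≠ i ∧ dist e (p k) = dist e (p i)} = {j} := by
    ext k
    simp only [Set.mem_setOf_eq, Set.mem_singleton_iff]
    constructor
    · rintro ⟨hk, hd⟩
      rcases pairext k i (h3 k i hk hd) with ⟨_, hl⟩ | ⟨hk', _⟩
      · exact absurd hl hij
      · exact hk'
    · rintro rfl
      exact ⟨hij.symm, h1.symm⟩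
  have hEe_j : {k : Fin n | k ≠ j ∧ dist e (p k) = dist e (p j)} = {i} := by
    ext k
    simp only [Set.mem_setOf_eq, Set.mem_singleton_iff]
    constructor
    · rintro ⟨hk, hd⟩
      rcases pairext k j (h3 k j hk hd) with ⟨hk', _⟩ | ⟨_, hl⟩
      · exact hk'
      · exact absurd hl hij.symm
    · rintro rfl
      exact ⟨hij, h1⟩
  have hyne : ∀ k l : Fin n, k ≠ l → dist y (p k) ≠ dist y (p l) := by
    intro k l hkl heq
    rcases lt_trichotomy (dist e (p k)) (dist e (p l)) with h | h | h
    · exact absurd (h2 _ _ h) (by rw [heq]; exact lt_irrefl _)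
    · rcases pairext k l (h3 k l hkl h) with ⟨rfl, rfl⟩ | ⟨rfl, rfl⟩
      · rw [heq] at h4; exact lt_irrefl _ h4
      · rw [← heq] at h4; exact lt_irrefl _ h4
    · exact absurd (h2 _ _ h) (by rw [heq]; exact lt_irrefl _)
  have hEy : ∀ k : Fin n, {l : Fin n | l ≠ k ∧ dist y (p l) = dist y (p k)} = ∅ := by
    intro k
    ext l
    simp only [Set.mem_setOf_eq, Set.mem_empty_iff_false, iff_false, not_and]
    intro hlk
    exact hyne l k hlk
  have hA_i : {l : Fin n | l ≠ i ∧ dist y (p i) < dist y (p l)}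
      = insert j {l : Fin n | l ≠ i ∧ dist e (p i) < dist e (p l)} := by
    ext l
    simp only [Set.mem_setOf_eq, Set.mem_insert_iff]
    constructor
    · rintro ⟨hli, hy⟩
      rcases (ytri i l (Ne.symm hli)).mp hy with h | ⟨_, rfl⟩
      · exact Or.inr ⟨hli, h⟩
      · exact Or.inl rfl
    · rintro (rfl | ⟨hli, hlt⟩)
      · exact ⟨hij.symm, h4⟩
      · exact ⟨hli, h2 _ _ hlt⟩
  have hA_j : {l : Fin n | l ≠ j ∧ dist y (p j) < dist y (p l)}
      = {l : Fin n | l ≠ j ∧ dist e (p j) < dist e (p l)} := by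
    ext l
    simp only [Set.mem_setOf_eq]
    constructor
    · rintro ⟨hlj, hy⟩
      rcases (ytri j l (Ne.symm hlj)).mp hy with h | ⟨hji, _⟩
      · exact ⟨hlj, h⟩
      · exact absurd hji.symm hij
    · rintro ⟨hlj, hlt⟩
      exact ⟨hlj, h2 _ _ hlt⟩
  have hA_off : ∀ k : Fin n, k ≠ i → k ≠ j →
      {l : Fin n | l ≠ k ∧ dist y (p k) < dist y (p l)}
        = {l : Fin n | l ≠ k ∧ dist e (p k) < dist e (p l)} := by
    intro k hki hkj
    ext l
    simp only [Set.mem_setOf_eq]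
    constructor
    · rintro ⟨hlk, hy⟩
      rcases (ytri k l (Ne.symm hlk)).mp hy with h | ⟨hk', _⟩
      · exact ⟨hlk, h⟩
      · exact absurd hk' hki
    · rintro ⟨hlk, hlt⟩
      exact ⟨hlk, h2 _ _ hlt⟩
  have hjnotA : j ∉ {l : Fin n | l ≠ i ∧ dist e (p i) < dist e (p l)} := by
    simp only [Set.mem_setOf_eq, not_and]
    intro _
    rw [h1]; exact lt_irrefl _
  refine ⟨?_, ?_, ?_⟩
  · rw [code_def, code_def, hEy i, hEe_i, hA_i, Set.ncard_insert_of_notMem hjnotA,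
      Set.ncard_empty, Set.ncard_singleton]
    push_cast; ring
  · rw [code_def, code_def, hEy j, hEe_j, hA_j, Set.ncard_empty, Set.ncard_singleton]
    push_cast; ring
  · intro k hki hkj
    rw [code_def, code_def, hEy k, hA_off k hki hkj]
    congr 1
    have : {l : Fin n | l ≠ k ∧ dist e (p l) = dist e (p k)} = ∅ := by
      ext l
      simp only [Set.mem_setOf_eq, Set.mem_empty_iff_false, iff_false, not_and]
      intro hlk heq
      rcases pairext l k (h3 l k hlk heq) with ⟨_, rfl⟩ | ⟨_, rfl⟩
      · exact hkj rfl
      · exact hki rfl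
    rw [this]

lemma sum_split (f : Fin n → ℚ) {i j : Fin n} (hij : i ≠ j)
    (h0 : ∀ k, k ≠ i → k ≠ j → f k = 0) : ∑ k, f k = f i + f j := by
  rw [← Finset.sum_pair hij]
  refine (Finset.sum_subset (Finset.subset_univ _) ?_).symm
  intro k _ hk
  simp only [Finset.mem_insert, Finset.mem_singleton, not_or] at hk
  exact h0 k hk.1 hk.2

lemma orderU_open (p : Fin n → Pt) (e : Pt) :
    IsOpen {y : Pt | ∀ k l : Fin n, dist e (p k) < dist e (p l) → dist y (p k) < dist y (p l)} := by
  have heq : {y : Pt | ∀ k l : Fin n, dist e (p k) < dist e (p l) → dist y (p k) < dist y (p l)}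
      = ⋂ q : Fin n × Fin n,
        {y : Pt | dist e (p q.1) < dist e (p q.2) → dist y (p q.1) < dist y (p q.2)} := by
    ext y
    simp only [Set.mem_setOf_eq, Set.mem_iInter]
    exact ⟨fun h q => h q.1 q.2, fun h k l => h (k, l)⟩
  rw [heq]
  refine isOpen_iInter_of_finite fun q => ?_
  by_cases hq : dist e (p q.1) < dist e (p q.2)
  · have : {y : Pt | dist e (p q.1) < dist e (p q.2) → dist y (p q.1) < dist y (p q.2)}
        = {y : Pt | dist y (p q.1) < dist y (p q.2)} := by
      ext y; simp [hq]
    rw [this]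
    exact isOpen_lt (continuous_id.dist continuous_const) (continuous_id.dist continuous_const)
  · have : {y : Pt | dist e (p q.1) < dist e (p q.2) → dist y (p q.1) < dist y (p q.2)}
        = Set.univ := by
      ext y; simp [hq]
    rw [this]
    exact isOpen_univ

end Aux

section Aux2
variable {n : ℕ} {p : Fin n → Pt}

lemma approx {e' : Pt} {i j : Fin n} (hpij : p i ≠ p j)
    (h1 : dist e' (p i) = dist e' (p j))
    {x : Pt}
    (hcx : ∀ y : Pt, dist y (p i) < dist y (p j) →
      (∀ k l : Fin n, dist e' (p k) < dist e' (p l) → dist y (p k) < dist y (p l)) →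
      code p y = code p x) :
    e' ∈ closure (particle p x) := by
  set v : Pt := p i - p j with hv
  have hvne : v ≠ 0 := sub_ne_zero.mpr hpij
  have hvpos : (0:ℝ) < ‖v‖ := norm_pos_iff.mpr hvne
  have htend : Filter.Tendsto (fun t : ℝ => e' + t • v) (nhdsWithin 0 (Set.Ioi 0)) (nhds e') := by
    have hc : Continuous fun t : ℝ => e' + t • v := by continuity
    have h0 := hc.tendsto 0
    simp only [zero_smul, add_zero] at h0
    exact h0.mono_left nhdsWithin_le_nhds
  have hU : IsOpen {y : Pt | ∀ k l : Fin n,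
      dist e' (p k) < dist e' (p l) → dist y (p k) < dist y (p l)} := orderU_open p e'
  have he'U : e' ∈ {y : Pt | ∀ k l : Fin n,
      dist e' (p k) < dist e' (p l) → dist y (p k) < dist y (p l)} := fun _ _ h => h
  have hev1 : ∀ᶠ t in nhdsWithin (0:ℝ) (Set.Ioi 0), (e' + t • v) ∈ {y : Pt | ∀ k l : Fin n,
      dist e' (p k) < dist e' (p l) → dist y (p k) < dist y (p l)} :=
    htend.eventually_mem (hU.mem_nhds he'U)
  have hev2 : ∀ᶠ t in nhdsWithin (0:ℝ) (Set.Ioi 0),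
      dist (e' + t • v) (p i) < dist (e' + t • v) (p j) := by
    filter_upwards [self_mem_nhdsWithin] with t ht
    have ht' : (0:ℝ) < t := ht
    have hni : e' + t • v - p i = (e' - p i) + t • v := by abel
    have hnj : e' + t • v - p j = (e' - p j) + t • v := by abel
    rw [dist_eq_norm, dist_eq_norm, hni, hnj]
    refine lt_of_pow_lt_pow_left₀ 2 (norm_nonneg _) ?_
    rw [norm_add_sq_real, norm_add_sq_real]
    have hd : ‖e' - p i‖ = ‖e' - p j‖ := by
      rw [← dist_eq_norm, ← dist_eq_norm]; exact h1
    have hi1 : (inner ℝ (e' - p i) (t • v) : ℝ) - inner ℝ (e' - p j) (t • v)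
        = t * inner ℝ (p j - p i) v := by
      rw [inner_smul_right, inner_smul_right, ← mul_sub, ← inner_sub_left]
      congr 2
      abel
    have hi2 : (inner ℝ (p j - p i) v : ℝ) = -(‖v‖^2) := by
      rw [show p j - p i = -v by rw [hv]; abel, inner_neg_left, real_inner_self_eq_norm_sq]
    have hpos : (0:ℝ) < t * ‖v‖^2 := mul_pos ht' (pow_pos hvpos 2)
    rw [hd]
    nlinarith [hi1, hi2]
  have hev : ∀ᶠ t in nhdsWithin (0:ℝ) (Set.Ioi 0), (e' + t • v) ∈ particle p x := by
    filter_upwards [hev1, hev2] with t h1' h2'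
    exact hcx _ h2' h1'
  exact mem_closure_of_tendsto htend hev

end Aux2


lemma code_edge_half {n : ℕ} {p : Fin n → Pt} {e : Pt} {i j : Fin n} (hij : i ≠ j)
    (h1 : dist e (p i) = dist e (p j))
    (h3 : ∀ k l, k ≠ l → dist e (p k) = dist e (p l) → ({k, l} : Set (Fin n)) = {i, j}) :
    code p e i = (({l : Fin n | l ≠ i ∧ dist e (p i) < dist e (p l)}).ncard : ℚ) + 1/2 := by
  have hEe_i : {k : Fin n | k ≠ i ∧ dist e (p k) = dist e (p i)} = {j} := by
    ext k
    simp only [Set.mem_setOf_eq, Set.mem_singleton_iff]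
    constructor
    · rintro ⟨hk, hd⟩
      rcases Set.pair_eq_pair_iff.mp (h3 k i hk hd) with ⟨_, hl⟩ | ⟨hk', _⟩
      · exact absurd hl hij
      · exact hk'
    · rintro rfl
      exact ⟨hij.symm, h1.symm⟩
  rw [code_def, hEe_i, Set.ncard_singleton]
  push_cast; ring

lemma code_cell_nat {n : ℕ} {p : Fin n → Pt} {x : Pt}
    (hxne : ∀ k l : Fin n, k ≠ l → dist x (p k) ≠ dist x (p l)) (k : Fin n) :
    code p x k = (({l : Fin n | l ≠ k ∧ dist x (p k) < dist x (p l)}).ncard : ℚ) := by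
  have hE : {l : Fin n | l ≠ k ∧ dist x (p l) = dist x (p k)} = ∅ := by
    ext l
    simp only [Set.mem_setOf_eq, Set.mem_empty_iff_false, iff_false, not_and]
    intro hlk
    exact hxne l k hlk
  rw [code_def, hE, Set.ncard_empty]
  push_cast; ring

lemma half_bound (a c : ℕ) : (1:ℚ)/2 ≤ |((a:ℚ) + 1/2) - (c:ℚ)| := by
  rcases le_or_gt c a with h | h
  · have h' : (c:ℚ) ≤ a := by exact_mod_cast h
    rw [abs_of_nonneg (by linarith)]; linarith
  · have h' : (a:ℚ) + 1 ≤ c := by exact_mod_cast h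
    rw [abs_of_nonpos (by linarith)]; linarith

/-- edge–cell containment: the edge `Ω(e)` of an edge point `e` is contained in
the closure of the cell `Ω(x)` of a cell point `x` iff `δ(e,x) = 1`. -/
theorem edge_cell_containment {n : ℕ} (hn : 2 ≤ n) (p : Fin n → Pt)
    (hp : Function.Injective p) (e x : Pt)
    (he : EdgePoint p e) (hx : CellPoint p x) :
    particle p e ⊆ closure (particle p x) ↔ chromDist p e x = 1 := by
  obtain ⟨i, j, ⟨hij, h1⟩, huniq⟩ := he
  have h3 : ∀ k l, k ≠ l → dist e (p k) = dist e (p l) → ({k, l} : Set (Fin n)) = {i, j} :=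
    fun k l hkl h' => huniq k l ⟨hkl, h'⟩
  have hxne : ∀ k l : Fin n, k ≠ l → dist x (p k) ≠ dist x (p l) :=
    fun k l hkl h' => hx k l ⟨hkl, h'⟩
  have hcodeij : code p e i = code p e j := code_eq_of_dist_eq h1
  constructor
  · intro hsub
    have hecl : e ∈ closure (particle p x) := hsub (show code p e = code p e from rfl)
    rw [mem_closure_iff_nhds] at hecl
    obtain ⟨y, hyU, hyx⟩ := hecl _ ((orderU_open p e).mem_nhds (fun _ _ h => h))
    have hyx' : code p y = code p x := hyx
    have hyU' : ∀ k l : Fin n, dist e (p k) < dist e (p l) → dist y (p k) < dist y (p l) := hyU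
    have hyne : dist y (p i) ≠ dist y (p j) := by
      intro hh
      have hc := code_eq_of_dist_eq (p := p) hh
      rw [hyx'] at hc
      exact hxne i j hij (dist_eq_iff_code.mpr hc)
    have hchy : chromDist p e x = chromDist p e y := by
      unfold chromDist
      rw [← hyx']
    rw [hchy]
    rcases hyne.lt_or_gt with hd | hd
    · obtain ⟨c1, c2, c3⟩ := resolve hij h1 h3 hyU' hd
      unfold chromDist
      rw [sum_split _ hij (fun k hki hkj => by rw [c3 k hki hkj]; simp), c1, c2,
        show code p e i - (code p e i + 1/2) = -(1/2) by ring,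
        show code p e j - (code p e j - 1/2) = 1/2 by ring]
      rw [abs_neg, abs_of_pos (by norm_num : (0:ℚ) < 1/2)]
      norm_num
    · obtain ⟨c1, c2, c3⟩ := resolve hij.symm h1.symm
        (fun k l hkl h' => (h3 k l hkl h').trans (Set.pair_comm i j)) hyU' hd
      unfold chromDist
      rw [sum_split _ hij (fun k hki hkj => by rw [c3 k hkj hki]; simp), c1, c2,
        show code p e j - (code p e j + 1/2) = -(1/2) by ring,
        show code p e i - (code p e i - 1/2) = 1/2 by ring]
      rw [abs_neg, abs_of_pos (by norm_num : (0:ℚ) < 1/2)]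
      norm_num
  · intro hd
    have hsum0 : ∑ k, |code p e k - code p x k| = 1 := hd
    have hfi : (1:ℚ)/2 ≤ |code p e i - code p x i| := by
      rw [code_edge_half hij h1 h3, code_cell_nat hxne i]
      exact half_bound _ _
    have hfj : (1:ℚ)/2 ≤ |code p e j - code p x j| := by
      rw [code_edge_half hij.symm h1.symm
        (fun k l hkl h' => (h3 k l hkl h').trans (Set.pair_comm i j)), code_cell_nat hxne j]
      exact half_bound _ _
    have hsplit := Finset.sum_sdiff (f := fun k => |code p e k - code p x k|)
      (Finset.subset_univ ({i, j} : Finset (Fin n)))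
    rw [Finset.sum_pair hij, hsum0] at hsplit
    have hnn : (0:ℚ) ≤ ∑ k ∈ Finset.univ \ ({i, j} : Finset (Fin n)),
        |code p e k - code p x k| :=
      Finset.sum_nonneg fun k _ => abs_nonneg _
    have hfi2 : |code p e i - code p x i| = 1/2 := by linarith
    have hfj2 : |code p e j - code p x j| = 1/2 := by linarith
    have hrest : ∑ k ∈ Finset.univ \ ({i, j} : Finset (Fin n)),
        |code p e k - code p x k| = 0 := by linarith
    have h0 : ∀ k, k ≠ i → k ≠ j → code p x k = code p e k := by
      intro k hki hkj
      have hk0 : |code p e k - code p x k| = 0 :=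
        (Finset.sum_eq_zero_iff_of_nonneg (fun k _ => abs_nonneg _)).mp hrest k
          (by simp [hki, hkj])
      have := abs_eq_zero.mp hk0
      linarith
    have hxi : code p x i = code p e i - 1/2 ∨ code p x i = code p e i + 1/2 := by
      rcases (abs_eq (by norm_num : (0:ℚ) ≤ 1/2)).mp hfi2 with h | h
      · left; linarith
      · right; linarith
    have hxj : code p x j = code p e j - 1/2 ∨ code p x j = code p e j + 1/2 := by
      rcases (abs_eq (by norm_num : (0:ℚ) ≤ 1/2)).mp hfj2 with h | h
      · left; linarith
      · right; linarith
    have hxij : code p x i ≠ code p x j :=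
      fun h => hxne i j hij (dist_eq_iff_code.mpr h)
    intro e' he'
    have he'' : code p e' = code p e := he'
    have h1' : dist e' (p i) = dist e' (p j) := by
      refine dist_eq_iff_code.mpr ?_
      rw [he'']
      exact hcodeij
    have h3' : ∀ k l, k ≠ l → dist e' (p k) = dist e' (p l) →
        ({k, l} : Set (Fin n)) = {i, j} := by
      intro k l hkl hdd
      have hc : code p e k = code p e l := by
        have hcc := code_eq_of_dist_eq (p := p) hdd
        rwa [he''] at hcc
      exact h3 k l hkl (dist_eq_iff_code.mpr hc)
    have hpij : p i ≠ p j := fun h => hij (hp h)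
    have hcase : (code p x i = code p e i + 1/2 ∧ code p x j = code p e j - 1/2)
        ∨ (code p x i = code p e i - 1/2 ∧ code p x j = code p e j + 1/2) := by
      rcases hxi with h | h <;> rcases hxj with h' | h'
      · exfalso; apply hxij; rw [h, h', hcodeij]
      · exact Or.inr ⟨h, h'⟩
      · exact Or.inl ⟨h, h'⟩
      · exfalso; apply hxij; rw [h, h', hcodeij]
    rcases hcase with ⟨hA1, hA2⟩ | ⟨hB1, hB2⟩
    · refine approx (p := p) hpij h1' ?_
      intro y hy hord
      obtain ⟨c1, c2, c3⟩ := resolve hij h1' h3' hord hy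
      funext k
      rcases eq_or_ne k i with rfl | hki
      · rw [c1, congrFun he'' k, hA1]
      rcases eq_or_ne k j with rfl | hkj
      · rw [c2, congrFun he'' k, hA2]
      · rw [c3 k hki hkj, congrFun he'' k, h0 k hki hkj]
    · refine approx (p := p) (i := j) (j := i) (fun h => hij (hp h).symm) h1'.symm ?_
      intro y hy hord
      obtain ⟨c1, c2, c3⟩ := resolve hij.symm h1'.symm
        (fun k l hkl h'' => (h3' k l hkl h'').trans (Set.pair_comm i j)) hord hy
      funext k
      rcases eq_or_ne k i with rfl | hki
      · rw [c2, congrFun he'' k, hB1]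
      rcases eq_or_ne k j with rfl | hkj
      · rw [c1, congrFun he'' k, hB2]
      · rw [c3 k hkj hki, congrFun he'' k, h0 k hki hkj]
end
end
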